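/- arXiv:1810.07606 — 8 statements merged into one kernel-verified Lean document; each statement's English description precedes it below -/
import Mathlib

section
/- (i) There exist C > 0 and r₀ ∈ (0, c) such that g(r) ≤ C·(c − r)^(−1/α) for all r ∈ [r₀, c); (ii) the improper integral ∫₀^c g(s) ds is finite, so that G is well defined and continuous on [−c, c] and three times continuously differentiable on (−c, c); (iii) G(−u) = G(u) for all u ∈ [−c, c]. -/
open Set Filter MeasureTheory intervalIntegral Topology

theorem stmt_1 (c α : ℝ) (hc : 0 < c) (hα : 2 ≤ α)
    (Φ : ℝ → ℝ) (hΦ : ContDiff ℝ 2 Φ)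
    (hodd : ∀ y : ℝ, Φ (-y) = -Φ y)
    (hΦ' : ∀ y : ℝ, 0 < deriv Φ y)
    (hlim : Filter.Tendsto Φ Filter.atTop (nhds c))
    (C₀ y₀ : ℝ) (hC₀ : 0 < C₀) (hy₀ : 0 < y₀)
    (hdecay : ∀ y : ℝ, y₀ ≤ y → deriv Φ y ≤ C₀ * y ^ (-α - 1)) :
    let g : ℝ → ℝ := Function.invFun Φ
    let G : ℝ → ℝ := fun u => ∫ s in (0:ℝ)..u, g s
    (∃ C > (0:ℝ), ∃ r₀ ∈ Set.Ioo (0:ℝ) c,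
        ∀ r ∈ Set.Ico r₀ c, g r ≤ C * (c - r) ^ (-1 / α)) ∧
    IntervalIntegrable g MeasureTheory.volume 0 c ∧
    ContinuousOn G (Set.Icc (-c) c) ∧
    ContDiffOn ℝ 3 G (Set.Ioo (-c) c) ∧
    (∀ u ∈ Set.Icc (-c) c, G (-u) = G u) := by
  intro g G
  have hΦdiff : Differentiable ℝ Φ := hΦ.differentiable (by norm_num)
  have hmono : StrictMono Φ := strictMono_of_deriv_pos hΦ'
  have hinj : Function.Injective Φ := hmono.injective
  have hΦ0 : Φ 0 = 0 := by have h := hodd 0; rw [neg_zero] at h; linarith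
  have hΦle : ∀ y, Φ y ≤ c := hmono.monotone.ge_of_tendsto hlim
  have hΦlt : ∀ y, Φ y < c := fun y => lt_of_lt_of_le (hmono (lt_add_one y)) (hΦle _)
  have hΦgt : ∀ y, -c < Φ y := fun y => by
    have h := hΦlt (-y); rw [hodd] at h; linarith
  have hcont : Continuous Φ := hΦ.continuous
  have hbot : Tendsto Φ atBot (𝓝 (-c)) := by
    have h1 : Tendsto (fun x => -Φ (-x)) atBot (𝓝 (-c)) :=
      (hlim.comp tendsto_neg_atBot_atTop).neg
    refine h1.congr fun x => ?_
    rw [hodd, neg_neg]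
  have hrange : ∀ r ∈ Ioo (-c) c, r ∈ Set.range Φ := by
    intro r hr
    obtain ⟨a, ha⟩ := (hbot.eventually_lt_const hr.1).exists
    obtain ⟨b, hb⟩ := (hlim.eventually_const_lt hr.2).exists
    exact intermediate_value_univ a b hcont ⟨ha.le, hb.le⟩
  have hgΦ : ∀ y, g (Φ y) = y := fun y => Function.leftInverse_invFun hinj y
  have hΦg : ∀ r ∈ Ioo (-c) c, Φ (g r) = r := fun r hr => Function.invFun_eq (hrange r hr)
  have hgodd : ∀ r ∈ Ioo (-c) c, g (-r) = -g r := by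
    intro r hr
    have h1 : Φ (-(g r)) = -r := by rw [hodd, hΦg r hr]
    calc g (-r) = g (Φ (-(g r))) := by rw [h1]
    _ = -(g r) := hgΦ _
  have hgmono : ∀ r ∈ Ioo (-c) c, ∀ s ∈ Ioo (-c) c, r ≤ s → g r ≤ g s := by
    intro r hr s hs hrs
    exact hmono.le_iff_le.mp (by rw [hΦg r hr, hΦg s hs]; exact hrs)
  have hg0 : g 0 = 0 := by have h := hgΦ 0; rwa [hΦ0] at h
  -- smoothness of g on (-c, c)
  have hgC : ∀ u ∈ Ioo (-c) c, ContDiffAt ℝ 2 g u := by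
    intro u hu
    have hua : Φ (g u) = u := hΦg u hu
    have hca : ContDiffAt ℝ 2 Φ (g u) := hΦ.contDiffAt
    have hda : HasDerivAt Φ (deriv Φ (g u)) (g u) := (hΦdiff (g u)).hasDerivAt
    have hne : deriv Φ (g u) ≠ 0 := ne_of_gt (hΦ' (g u))
    have hfd := hda.hasFDerivAt_equiv hne
    have hn : (2 : WithTop ℕ∞) ≠ 0 := by norm_num
    have key := hca.to_localInverse (f' := ContinuousLinearEquiv.unitsEquivAut ℝ
      (Units.mk0 _ hne)) hfd hn
    rw [hua] at key
    refine key.congr_of_eventuallyEq ?_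
    have hev := (hca.hasStrictFDerivAt' hfd hn).eventually_right_inverse
    rw [hua] at hev
    filter_upwards [hev] with y hy
    conv_lhs => rw [← hy]
    exact hgΦ _
  have hgcont : ContinuousOn g (Ioo (-c) c) := fun u hu =>
    ((hgC u hu).continuousAt).continuousWithinAt
  have hgC2 : ContDiffOn ℝ 2 g (Ioo (-c) c) := fun u hu => (hgC u hu).contDiffWithinAt
  -- decay estimate
  have hα0 : (0:ℝ) < α := by linarith
  have hkey : ∀ y, y₀ ≤ y → c - Φ y ≤ C₀ / α * y ^ (-α) := by
    intro y hy
    set ψ : ℝ → ℝ := fun z => Φ z + C₀ / α * z ^ (-α) with hψdef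
    have hψd : ∀ z : ℝ, 0 < z →
        HasDerivAt ψ (deriv Φ z + C₀ / α * (-α * z ^ (-α - 1))) z := by
      intro z hz
      have h1 : HasDerivAt (fun z : ℝ => z ^ (-α)) (-α * z ^ (-α - 1)) z := by
        have h := Real.hasDerivAt_rpow_const (x := z) (p := -α) (Or.inl (ne_of_gt hz))
        exact h
      exact ((hΦdiff z).hasDerivAt).add (h1.const_mul (C₀ / α))
    have hanti : AntitoneOn ψ (Ici y₀) := by
      apply antitoneOn_of_deriv_nonpos (convex_Ici y₀)
      · intro z hz
        exact ((hψd z (lt_of_lt_of_le hy₀ hz)).continuousAt).continuousWithinAt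
      · intro z hz
        rw [interior_Ici] at hz
        exact ((hψd z (hy₀.trans hz)).differentiableAt).differentiableWithinAt
      · intro z hz
        rw [interior_Ici] at hz
        have hz0 : 0 < z := hy₀.trans hz
        rw [(hψd z hz0).deriv]
        have hd := hdecay z hz.le
        have heq : C₀ / α * (-α * z ^ (-α - 1)) = -(C₀ * z ^ (-α - 1)) := by
          field_simp
        rw [heq]
        linarith
    have hbd : ∀ z, y ≤ z → Φ z ≤ Φ y + C₀ / α * y ^ (-α) := by
      intro z hz
      have h1 := hanti (mem_Ici.mpr hy) (mem_Ici.mpr (hy.trans hz)) hz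
      have hz0 : 0 < z := lt_of_lt_of_le (lt_of_lt_of_le hy₀ hy) hz
      have h2 : (0:ℝ) ≤ C₀ / α * z ^ (-α) :=
        mul_nonneg (div_pos hC₀ hα0).le (Real.rpow_nonneg hz0.le _)
      simp only [hψdef] at h1
      linarith
    have h3 : c ≤ Φ y + C₀ / α * y ^ (-α) :=
      le_of_tendsto hlim ((eventually_ge_atTop y).mono hbd)
    linarith
  -- Part (i)
  have hKpos : 0 < C₀ / α := div_pos hC₀ hα0
  set Cb := (C₀ / α) ^ (1 / α) with hCbdef
  have hCbpos : 0 < Cb := Real.rpow_pos_of_pos hKpos _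
  set r₀ := Φ y₀ with hr₀def
  have hr₀mem : r₀ ∈ Ioo (0:ℝ) c := ⟨by rw [← hΦ0]; exact hmono hy₀, hΦlt y₀⟩
  have part1bound : ∀ r ∈ Ico r₀ c, g r ≤ Cb * (c - r) ^ (-1 / α) := by
    intro r hr
    have hrIoo : r ∈ Ioo (-c) c :=
      ⟨lt_of_lt_of_le (by linarith [hr₀mem.1]) hr.1, hr.2⟩
    have hΦy : Φ (g r) = r := hΦg r hrIoo
    have hyy₀ : y₀ ≤ g r := by
      refine hmono.le_iff_le.mp ?_
      rw [hΦy]; exact hr.1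
    have hy0 : 0 < g r := lt_of_lt_of_le hy₀ hyy₀
    have ht : 0 < c - r := by linarith [hr.2]
    have h1 : c - r ≤ C₀ / α * g r ^ (-α) := by
      have := hkey (g r) hyy₀; rw [hΦy] at this; exact this
    have h2 : (c - r) / (C₀ / α) ≤ g r ^ (-α) := by
      rw [div_le_iff₀ hKpos]; linarith [h1, mul_comm (C₀ / α) (g r ^ (-α))]
    have h3 : (g r ^ (-α)) ^ (-1 / α) ≤ ((c - r) / (C₀ / α)) ^ (-1 / α) := by
      refine Real.rpow_le_rpow_of_nonpos (div_pos ht hKpos) h2 ?_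
      rw [neg_div]
      exact neg_nonpos.mpr (by positivity)
    have h4 : (g r ^ (-α)) ^ (-1 / α) = g r := by
      rw [← Real.rpow_mul hy0.le, show -α * (-1 / α) = 1 by field_simp, Real.rpow_one]
    have h5 : ((c - r) / (C₀ / α)) ^ (-1 / α) = Cb * (c - r) ^ (-1 / α) := by
      rw [Real.div_rpow ht.le hKpos.le, neg_div, Real.rpow_neg hKpos.le,
        div_eq_mul_inv, inv_inv, ← hCbdef, mul_comm]
    rw [h4, h5] at h3
    exact h3
  -- Part (ii)
  have hneg1 : (-1:ℝ) < -1 / α := by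
    have h1 : 1 / α < 1 := by rw [div_lt_one hα0]; linarith
    have h2 : (-1:ℝ) / α = -(1 / α) := by ring
    linarith
  have hIrpow : IntervalIntegrable (fun x : ℝ => (c - x) ^ (-1 / α)) volume 0 c := by
    have h2 := (intervalIntegrable_rpow' (a := 0) (b := c) hneg1).comp_sub_left c
    rw [sub_zero, sub_self] at h2
    exact h2.symm
  have hdom : IntervalIntegrable (fun x : ℝ => g r₀ + Cb * (c - x) ^ (-1 / α)) volume 0 c :=
    intervalIntegrable_const.add (hIrpow.const_mul Cb)
  have hsubIoo : Ioo (0:ℝ) c ⊆ Ioo (-c) c := fun x hx => ⟨by linarith [hx.1], hx.2⟩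
  have hgr₀ : (0:ℝ) ≤ g r₀ := by
    rw [← hg0]
    exact hgmono 0 ⟨by linarith, hc⟩ r₀ ⟨by linarith [hr₀mem.1], hr₀mem.2⟩ hr₀mem.1.le
  have hInt1 : IntervalIntegrable g volume 0 c := by
    rw [intervalIntegrable_iff_integrableOn_Ioc_of_le hc.le,
      integrableOn_Ioc_iff_integrableOn_Ioo]
    apply Integrable.mono' (g := fun x => g r₀ + Cb * (c - x) ^ (-1 / α))
    · have h := hdom
      rw [intervalIntegrable_iff_integrableOn_Ioc_of_le hc.le] at h
      exact h.mono_set Ioo_subset_Ioc_self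
    · exact (hgcont.mono hsubIoo).aestronglyMeasurable measurableSet_Ioo
    · rw [ae_restrict_iff' measurableSet_Ioo]
      refine ae_of_all _ fun x hx => ?_
      have hxI : x ∈ Ioo (-c) c := hsubIoo hx
      have hgx0 : 0 ≤ g x := by
        rw [← hg0]; exact hgmono 0 ⟨by linarith, hc⟩ x hxI hx.1.le
      rw [Real.norm_eq_abs, abs_of_nonneg hgx0]
      have hrp : 0 ≤ Cb * (c - x) ^ (-1 / α) :=
        mul_nonneg hCbpos.le (Real.rpow_nonneg (by linarith [hx.2]) _)
      rcases le_or_gt x r₀ with h | h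
      · have hle : g x ≤ g r₀ :=
          hgmono x hxI r₀ ⟨by linarith [hr₀mem.1], hr₀mem.2⟩ h
        linarith
      · have hb := part1bound x ⟨h.le, hx.2⟩
        linarith
  have hInt2 : IntervalIntegrable g volume (-c) 0 := by
    have h1 : IntervalIntegrable (fun x => g (-x)) volume 0 (-c) := by
      have h := (IntervalIntegrable.iff_comp_neg (f := g)).mp hInt1
      rwa [neg_zero] at h
    have h2 : IntervalIntegrable (fun x => -g (-x)) volume (-c) 0 := h1.neg.symm
    rw [intervalIntegrable_iff_integrableOn_Ioc_of_le (by linarith : -c ≤ (0:ℝ))] at h2 ⊢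
    refine h2.congr_fun (fun x hx => ?_) measurableSet_Ioc
    have hxI : x ∈ Ioo (-c) c := ⟨hx.1, by linarith [hx.2]⟩
    beta_reduce; rw [hgodd x hxI, neg_neg]
  have hIntT : IntervalIntegrable g volume (-c) c := hInt2.trans hInt1
  -- continuity of G
  have hicc : Icc (-c) c = uIcc (-c) c := (uIcc_of_le (by linarith)).symm
  have hGcont : ContinuousOn G (Icc (-c) c) := by
    rw [hicc]
    exact continuousOn_primitive_interval' hIntT
      (by rw [← hicc]; exact ⟨by linarith, hc.le⟩)
  -- derivative of G
  have hG' : ∀ u ∈ Ioo (-c) c, HasDerivAt G (g u) u := by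
    intro u hu
    have hsub : uIcc 0 u ⊆ uIcc (-c) c := by
      apply uIcc_subset_uIcc <;> rw [← hicc]
      · exact ⟨by linarith, hc.le⟩
      · exact ⟨hu.1.le, hu.2.le⟩
    have hint : IntervalIntegrable g volume 0 u := hIntT.mono_set hsub
    have hmeas : StronglyMeasurableAtFilter g (𝓝 u) volume :=
      AEStronglyMeasurable.stronglyMeasurableAtFilter_of_mem
        (hgcont.aestronglyMeasurable measurableSet_Ioo) (isOpen_Ioo.mem_nhds hu)
    exact integral_hasDerivAt_right hint hmeas (hgC u hu).continuousAt
  have hGdiff : DifferentiableOn ℝ G (Ioo (-c) c) := fun u hu =>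
    ((hG' u hu).differentiableAt).differentiableWithinAt
  have hGC3 : ContDiffOn ℝ 3 G (Ioo (-c) c) := by
    rw [show (3 : WithTop ℕ∞) = 2 + 1 by norm_num,
      contDiffOn_succ_iff_deriv_of_isOpen isOpen_Ioo]
    refine ⟨hGdiff, by simp, hgC2.congr fun u hu => (hG' u hu).deriv⟩
  refine ⟨⟨Cb, hCbpos, r₀, hr₀mem, part1bound⟩, hInt1, hGcont, hGC3, ?_⟩
  -- symmetry
  intro u hu
  have hae : ∀ᵐ x : ℝ, x ∈ uIoc (0:ℝ) u → g (-x) = -g x := by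
    have h1 : ∀ᵐ x : ℝ, x ≠ c := by
      rw [MeasureTheory.ae_iff]
      have he : {x : ℝ | ¬x ≠ c} = {c} := by ext x; simp
      rw [he]; exact Real.volume_singleton
    have h2 : ∀ᵐ x : ℝ, x ≠ -c := by
      rw [MeasureTheory.ae_iff]
      have he : {x : ℝ | ¬x ≠ -c} = {-c} := by ext x; simp
      rw [he]; exact Real.volume_singleton
    filter_upwards [h1, h2] with x hx1 hx2 hxm
    have hxIcc : x ∈ Icc (-c) c := by
      have hs1 : uIoc (0:ℝ) u ⊆ uIcc (0:ℝ) u := Ioc_subset_Icc_self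
      have hs2 : uIcc (0:ℝ) u ⊆ Icc (-c) c := by
        rw [hicc]
        exact uIcc_subset_uIcc (by rw [← hicc]; exact ⟨by linarith, hc.le⟩)
          (by rw [← hicc]; exact hu)
      exact hs2 (hs1 hxm)
    exact hgodd x ⟨lt_of_le_of_ne hxIcc.1 (Ne.symm hx2), lt_of_le_of_ne hxIcc.2 hx1⟩
  have e1 : (∫ x in (0:ℝ)..u, g (-x)) = ∫ x in -u..(0:ℝ), g x := by
    have h := integral_comp_neg (a := (0:ℝ)) (b := u) (f := g)
    rwa [neg_zero] at h
  have e2 : (∫ x in (0:ℝ)..u, g (-x)) = ∫ x in (0:ℝ)..u, -g x :=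
    integral_congr_ae hae
  have e3 : (∫ x in -u..(0:ℝ), g x) = -(G (-u)) := integral_symm _ _
  have e4 : (∫ x in (0:ℝ)..u, -g x) = -(G u) := integral_neg
  have : -(G (-u)) = -(G u) := by rw [← e3, ← e1, e2, e4]
  linarith
end

section
/- Let u : (0,T) × ℝ → (0,∞) and S : (0,T) × ℝ → ℝ be twice continuously differentiable functions such that: for every t ∈ (0,T), u(t,·) is integrable with ∫_ℝ u(t,x) dx = M; the map φ : (0,T) × (0,M) → ℝ defined implicitly by ∫_{−∞}^{φ(t,η)} u(t,x) dx = η is twice continuously differentiable; for each t, the flux x ↦ u·Φ(u^{m−1}·∂u/∂x) − a·(∂S/∂x)·u tends to 0 as x → −∞ and differentiation of x ↦ ∫_{−∞}^x u(t,s) ds under the integral sign in t is justified; and the equations ∂u/∂t = ∂/∂x ( u·Φ(u^{m−1}·∂u/∂x) − a·(∂S/∂x)·u ) and −∂²S/∂x² = u hold on (0,T) × ℝ. Then the function v(t,η) := ∂φ/∂η(t,η) = 1/u(t,φ(t,η)) satisfies the dual equation ∂v/∂t = ∂/∂η [ Φ( (∂v/∂η) / v^(2+m) ) ] − a at every point of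 (0,T) × (0,M). -/
open Set Filter MeasureTheory Metric

private lemma aux_fst {f : ℝ × ℝ → ℝ} {t x : ℝ} (hf : DifferentiableAt ℝ f (t, x)) :
    HasDerivAt (fun τ : ℝ => f (τ, x)) (fderiv ℝ f (t, x) (1, 0)) t := by
  have hL : HasDerivAt (fun τ : ℝ => ((τ : ℝ), x)) ((1 : ℝ), (0 : ℝ)) t :=
    (hasDerivAt_id t).prodMk (hasDerivAt_const t x)
  exact hf.hasFDerivAt.comp_hasDerivAt t hL

private lemma aux_snd {f : ℝ × ℝ → ℝ} {t x : ℝ} (hf : DifferentiableAt ℝ f (t, x)) :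
    HasDerivAt (fun y : ℝ => f (t, y)) (fderiv ℝ f (t, x) (0, 1)) x := by
  have hL : HasDerivAt (fun y : ℝ => ((t : ℝ), y)) ((0 : ℝ), (1 : ℝ)) x :=
    (hasDerivAt_const x t).prodMk (hasDerivAt_id x)
  exact hf.hasFDerivAt.comp_hasDerivAt x hL

private lemma aux_ratio {cu d m : ℝ} (hcu : 0 < cu) :
    -(d * cu⁻¹) / cu ^ 2 / (cu⁻¹) ^ (2 + m) = -(cu ^ (m - 1) * d) := by
  have hne : cu ≠ 0 := hcu.ne'
  have h1 : (cu⁻¹) ^ (2 + m) = (cu ^ (2 + m))⁻¹ := Real.inv_rpow hcu.le _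
  have h2 : cu ^ (2 + m) = cu ^ (2 : ℕ) * cu ^ m := by
    rw [Real.rpow_add hcu]
    congr 1
    rw [show (2 : ℝ) = ((2 : ℕ) : ℝ) by norm_num, Real.rpow_natCast]
  have h3 : cu ^ (m - 1) = cu ^ m * cu⁻¹ := by
    rw [Real.rpow_sub hcu, Real.rpow_one, div_eq_mul_inv]
  have hm0 : cu ^ m ≠ 0 := (Real.rpow_pos_of_pos hcu m).ne'
  rw [h1, h2, h3]
  field_simp

private lemma partFx {u : ℝ → ℝ} (hcont : Continuous u) (hint : MeasureTheory.Integrable u)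
    (x : ℝ) :
    HasDerivAt (fun y : ℝ => ∫ s in Set.Iic y, u s) (u x) x := by
  have key : ∀ y : ℝ, (∫ s in Set.Iic y, u s) = (∫ s in (0:ℝ)..y, u s) + ∫ s in Set.Iic (0:ℝ), u s := by
    intro y
    rw [← intervalIntegral.integral_Iic_sub_Iic hint.integrableOn hint.integrableOn]
    ring
  have h1 : HasDerivAt (fun y : ℝ => (∫ s in (0:ℝ)..y, u s) + ∫ s in Set.Iic (0:ℝ), u s) (u x) x := by
    have := intervalIntegral.integral_hasDerivAt_right (hint.intervalIntegrable (a := 0) (b := x))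
      (hcont.stronglyMeasurableAtFilter volume (nhds x)) hcont.continuousAt
    exact this.add_const _
  exact h1.congr_of_eventuallyEq (Filter.Eventually.of_forall key)

private lemma partC {T : ℝ} {u Ψ : ℝ → ℝ → ℝ} {t : ℝ}
    (huC2 : ContDiffOn ℝ 2 (fun p : ℝ × ℝ => u p.1 p.2) (Set.Ioo (0:ℝ) T ×ˢ Set.univ))
    (huint : ∀ t ∈ Set.Ioo (0:ℝ) T, MeasureTheory.Integrable (u t))
    (hdiff_under : ∀ x : ℝ,
      HasDerivAt (fun τ : ℝ => ∫ s in Set.Iic x, u τ s)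
        (∫ s in Set.Iic x, deriv (fun τ : ℝ => u τ s) t) t)
    (ht : t ∈ Set.Ioo (0:ℝ) T)
    (hΨd : Differentiable ℝ (Ψ t))
    (hΨdc : Continuous (deriv (Ψ t)))
    (hPDEΨ : ∀ s : ℝ, deriv (fun τ : ℝ => u τ s) t = deriv (Ψ t) s)
    (hflux : Filter.Tendsto (Ψ t) Filter.atBot (nhds 0))
    (x : ℝ) :
    HasDerivAt (fun τ : ℝ => ∫ s in Set.Iic x, u τ s) (Ψ t x) t := by
  have hI : IsOpen (Set.Ioo (0:ℝ) T ×ˢ (Set.univ : Set ℝ)) := isOpen_Ioo.prod isOpen_univ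
  have hudiff : ∀ {τ s : ℝ}, τ ∈ Set.Ioo (0:ℝ) T →
      DifferentiableAt ℝ (fun p : ℝ × ℝ => u p.1 p.2) (τ, s) := fun {τ s} hτ =>
    (huC2.contDiffAt (hI.mem_nhds ⟨hτ, trivial⟩)).differentiableAt two_ne_zero
  have key : (∫ s in Set.Iic x, deriv (fun τ : ℝ => u τ s) t) = Ψ t x := by
    by_cases hint : MeasureTheory.IntegrableOn (fun s : ℝ => deriv (fun τ : ℝ => u τ s) t) (Set.Iic x)
    · have h := MeasureTheory.integral_Iic_of_hasDerivAt_of_tendsto'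
        (f := Ψ t) (f' := fun s : ℝ => deriv (fun τ : ℝ => u τ s) t) (a := x)
        (fun s _ => by have hh := (hΨd s).hasDerivAt; rw [← hPDEΨ s] at hh; exact hh) hint hflux
      rw [h, sub_zero]
    · exfalso
      have hgcont : Continuous (fun s : ℝ => deriv (fun τ : ℝ => u τ s) t) := by
        have he : (fun s : ℝ => deriv (fun τ : ℝ => u τ s) t) = deriv (Ψ t) := funext hPDEΨ
        rw [he]; exact hΨdc
      have hnone : ∀ y : ℝ, ¬ MeasureTheory.IntegrableOn (fun s : ℝ => deriv (fun τ : ℝ => u τ s) t) (Set.Iic y) := by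
        intro y hy
        apply hint
        rcases le_total x y with h | h
        · exact hy.mono_set (Set.Iic_subset_Iic.mpr h)
        · have hcc : MeasureTheory.IntegrableOn (fun s : ℝ => deriv (fun τ : ℝ => u τ s) t) (Set.Icc y x) :=
            hgcont.integrableOn_Icc
          apply (hy.union hcc).mono_set
          intro s hs
          rcases le_total s y with h' | h'
          · exact Or.inl h'
          · exact Or.inr ⟨h', hs⟩
      have hzero : ∀ y : ℝ, (∫ s in Set.Iic y, deriv (fun τ : ℝ => u τ s) t) = 0 :=
        fun y => MeasureTheory.integral_undef (hnone y)
      have hF0 : ∀ y : ℝ, HasDerivAt (fun τ : ℝ => ∫ s in Set.Iic y, u τ s) 0 t := by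
        intro y
        have h := hdiff_under y
        rwa [hzero y] at h
      obtain ⟨δ, hδ, hball⟩ := Metric.isOpen_iff.mp isOpen_Ioo t ht
      have hucont : ∀ τ ∈ Set.Ioo (0:ℝ) T, Continuous (u τ) := by
        intro τ hτ
        have h1 : ContinuousOn (fun q : ℝ × ℝ => u q.1 q.2) (Set.Ioo (0:ℝ) T ×ˢ Set.univ) :=
          huC2.continuousOn
        have h2 : Continuous (fun s : ℝ => ((τ : ℝ), s)) := continuous_const.prodMk continuous_id
        have h3 := h1.comp (s := (Set.univ : Set ℝ)) h2.continuousOn (fun s _ => ⟨hτ, trivial⟩)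
        exact continuousOn_univ.mp h3
      have hfd_cont : ContinuousOn
          (fun p : ℝ × ℝ => fderiv ℝ (fun q : ℝ × ℝ => u q.1 q.2) p ((1:ℝ), (0:ℝ)))
          (Set.Ioo (0:ℝ) T ×ˢ Set.univ) :=
        ((ContinuousLinearMap.apply ℝ ℝ ((1:ℝ), (0:ℝ))).continuous).comp_continuousOn
          (huC2.continuousOn_fderiv_of_isOpen hI one_le_two)
      have hparam : ∀ y : ℝ, HasDerivAt (fun τ : ℝ => ∫ s in x..y, u τ s)
          (∫ s in x..y, deriv (fun τ : ℝ => u τ s) t) t := by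
        intro y
        have hKsub : (Set.Icc (t - δ/2) (t + δ/2) ×ˢ Set.uIcc x y) ⊆
            Set.Ioo (0:ℝ) T ×ˢ (Set.univ : Set ℝ) := by
          rintro ⟨τ, s⟩ ⟨h1, _⟩
          refine ⟨hball ?_, trivial⟩
          rw [Metric.mem_ball, Real.dist_eq]
          rw [Set.mem_Icc] at h1
          have : |τ - t| ≤ δ/2 := abs_sub_le_iff.mpr ⟨by linarith [h1.2], by linarith [h1.1]⟩
          linarith
        obtain ⟨C, hC⟩ := IsCompact.exists_bound_of_continuousOn
          ((isCompact_Icc (a := t - δ/2) (b := t + δ/2)).prod (isCompact_uIcc (a := x) (b := y)))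
          (hfd_cont.mono hKsub)
        have hballsub : Metric.ball t (δ/2) ⊆ Set.Ioo (0:ℝ) T := fun τ hτ =>
          hball (Metric.ball_subset_ball (by linarith) hτ)
        have hmain := intervalIntegral.hasDerivAt_integral_of_dominated_loc_of_deriv_le
          (F := fun τ s => u τ s)
          (F' := fun τ s => fderiv ℝ (fun q : ℝ × ℝ => u q.1 q.2) (τ, s) ((1:ℝ), (0:ℝ)))
          (x₀ := t) (a := x) (b := y) (bound := fun _ => C) (s := Metric.ball t (δ/2))
          (Metric.ball_mem_nhds t (half_pos hδ))
          (by
            filter_upwards [isOpen_Ioo.mem_nhds ht] with τ hτ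
            exact ((hucont τ hτ).aestronglyMeasurable).restrict)
          ((huint t ht).intervalIntegrable)
          (by
            have hcg : Continuous (fun s : ℝ => fderiv ℝ (fun q : ℝ × ℝ => u q.1 q.2) (t, s) ((1:ℝ), (0:ℝ))) := by
              have h2 : Continuous (fun s : ℝ => ((t : ℝ), s)) := continuous_const.prodMk continuous_id
              exact continuousOn_univ.mp
                (hfd_cont.comp (s := (Set.univ : Set ℝ)) h2.continuousOn (fun s _ => ⟨ht, trivial⟩))
            exact hcg.aestronglyMeasurable.restrict)
          (by
            apply Filter.Eventually.of_forall
            intro s hs τ hτ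
            refine hC ((τ : ℝ), s) ⟨?_, Set.Ioc_subset_Icc_self hs⟩
            rw [Metric.mem_ball, Real.dist_eq] at hτ
            rw [Set.mem_Icc]
            constructor <;> [linarith [abs_sub_le_iff.mp hτ.le]; linarith [abs_sub_le_iff.mp hτ.le]])
          intervalIntegrable_const
          (by
            apply Filter.Eventually.of_forall
            intro s hs τ hτ
            exact aux_fst (hudiff (hballsub hτ)))
        have hcongr : (∫ s in x..y, fderiv ℝ (fun q : ℝ × ℝ => u q.1 q.2) (t, s) ((1:ℝ), (0:ℝ)))
            = ∫ s in x..y, deriv (fun τ : ℝ => u τ s) t := by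
          apply intervalIntegral.integral_congr
          intro s _
          exact ((aux_fst (hudiff ht)).deriv).symm
        rw [← hcongr]
        exact hmain.2
      have hzero2 : ∀ y : ℝ, (∫ s in x..y, deriv (fun τ : ℝ => u τ s) t) = 0 := by
        intro y
        have hsub : HasDerivAt
            (fun τ : ℝ => (∫ s in Set.Iic y, u τ s) - ∫ s in Set.Iic x, u τ s) 0 t := by
          have h := (hF0 y).sub (hF0 x); rw [sub_self] at h; exact h
        have heqf : (fun τ : ℝ => (∫ s in Set.Iic y, u τ s) - ∫ s in Set.Iic x, u τ s)
            =ᶠ[nhds t] fun τ : ℝ => ∫ s in x..y, u τ s := by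
          filter_upwards [isOpen_Ioo.mem_nhds ht] with τ hτ
          exact intervalIntegral.integral_Iic_sub_Iic (huint τ hτ).integrableOn (huint τ hτ).integrableOn
        have h2 : HasDerivAt (fun τ : ℝ => ∫ s in x..y, u τ s) 0 t :=
          hsub.congr_of_eventuallyEq heqf.symm
        exact (hparam y).unique h2
      have hconst : ∀ y : ℝ, Ψ t y = Ψ t x := by
        intro y
        have hftc : (∫ s in x..y, deriv (fun τ : ℝ => u τ s) t) = Ψ t y - Ψ t x := by
          have he : (∫ s in x..y, deriv (fun τ : ℝ => u τ s) t) = ∫ s in x..y, deriv (Ψ t) s :=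
            intervalIntegral.integral_congr fun s _ => hPDEΨ s
          rw [he]
          exact intervalIntegral.integral_deriv_eq_sub (fun s _ => hΨd s)
            (hΨdc.intervalIntegrable x y)
        have h0 := hzero2 y
        rw [hftc] at h0
        linarith
      have hzeroΨ : Ψ t x = 0 := by
        have h1 : Filter.Tendsto (Ψ t) Filter.atBot (nhds (Ψ t x)) := by
          have he : Ψ t = fun _ => Ψ t x := funext hconst
          rw [he]; exact tendsto_const_nhds
        exact tendsto_nhds_unique h1 hflux
      apply hint
      have he : (fun s : ℝ => deriv (fun τ : ℝ => u τ s) t) = fun _ => (0:ℝ) := by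
        funext s
        rw [hPDEΨ s]
        have he2 : Ψ t = fun _ => (0:ℝ) := funext fun y => by rw [hconst y, hzeroΨ]
        rw [he2]
        simp
      rw [he]
      exact integrableOn_zero
  have h := hdiff_under x
  rwa [key] at h

private lemma partD {T : ℝ} {u Ψ : ℝ → ℝ → ℝ} {t x : ℝ}
    (ht : t ∈ Set.Ioo (0:ℝ) T)
    (hFx : ∀ t ∈ Set.Ioo (0:ℝ) T, ∀ x : ℝ,
      HasDerivAt (fun y : ℝ => ∫ s in Set.Iic y, u t s) (u t x) x)
    (hC : ∀ t ∈ Set.Ioo (0:ℝ) T, ∀ x : ℝ,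
      HasDerivAt (fun τ : ℝ => ∫ s in Set.Iic x, u τ s) (Ψ t x) t)
    (hΨcont : ContinuousOn (fun p : ℝ × ℝ => Ψ p.1 p.2) (Set.Ioo (0:ℝ) T ×ˢ Set.univ)) :
    HasFDerivAt (fun p : ℝ × ℝ => ∫ s in Set.Iic p.2, u p.1 s)
      (Ψ t x • ContinuousLinearMap.fst ℝ ℝ ℝ + u t x • ContinuousLinearMap.snd ℝ ℝ ℝ) (t, x) := by
  obtain ⟨δ₁, hδ₁, hball⟩ := Metric.isOpen_iff.mp isOpen_Ioo t ht
  have hH : HasFDerivAt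
      (fun p : ℝ × ℝ => (∫ s in Set.Iic p.2, u p.1 s) - ∫ s in Set.Iic p.2, u t s)
      (Ψ t x • ContinuousLinearMap.fst ℝ ℝ ℝ) (t, x) := by
    apply HasFDerivAt.of_isLittleO
    rw [Asymptotics.isLittleO_iff]
    intro ε hε
    have hcontat : ContinuousAt (fun p : ℝ × ℝ => Ψ p.1 p.2) (t, x) :=
      hΨcont.continuousAt ((isOpen_Ioo.prod isOpen_univ).mem_nhds ⟨ht, trivial⟩)
    obtain ⟨δ₂, hδ₂, hcont⟩ := Metric.continuousAt_iff.mp hcontat ε hε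
    have hδ : 0 < min δ₁ δ₂ := lt_min hδ₁ hδ₂
    filter_upwards [Metric.ball_mem_nhds (t, x) hδ] with p hp
    obtain ⟨t', x'⟩ := p
    rw [Metric.mem_ball, Prod.dist_eq] at hp
    have hd1 : dist t' t < min δ₁ δ₂ := lt_of_le_of_lt (le_max_left _ _) hp
    have hd2 : dist x' x < min δ₁ δ₂ := lt_of_le_of_lt (le_max_right _ _) hp
    simp only [ContinuousLinearMap.smul_apply, ContinuousLinearMap.coe_fst',
      Prod.fst_sub, sub_self, sub_zero, smul_eq_mul]
    have hnormfst : |t' - t| ≤ ‖(t', x') - (t, x)‖ := by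
      have := norm_fst_le ((t', x') - (t, x))
      simpa [Prod.fst_sub, Real.norm_eq_abs] using this
    by_cases hteq : t' = t
    · subst hteq
      simp only [sub_self, mul_zero, sub_zero, norm_zero]
      positivity
    · -- MVT case
      have hIccI : ∀ τ : ℝ, τ ∈ Set.uIcc t t' → τ ∈ Set.Ioo (0:ℝ) T := by
        intro τ hτ
        apply hball
        rw [Metric.mem_ball, Real.dist_eq]
        rw [Set.mem_uIcc] at hτ
        have habs : |τ - t| ≤ |t' - t| := by
          rcases hτ with h | h
          · have h1 := h.1; have h2 := h.2
            rw [abs_sub_le_iff]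
            refine ⟨?_, ?_⟩
            · calc τ - t ≤ t' - t := by linarith
                _ ≤ |t' - t| := le_abs_self _
            · calc t - τ ≤ 0 := by linarith
                _ ≤ |t' - t| := abs_nonneg _
          · have h1 := h.1; have h2 := h.2
            rw [abs_sub_le_iff]
            refine ⟨?_, ?_⟩
            · calc τ - t ≤ 0 := by linarith
                _ ≤ |t' - t| := abs_nonneg _
            · calc t - τ ≤ t - t' := by linarith
                _ = -(t' - t) := by ring
                _ ≤ |t' - t| := neg_le_abs _
        calc |τ - t| ≤ |t' - t| := habs
          _ < min δ₁ δ₂ := by rw [← Real.dist_eq]; exact hd1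
          _ ≤ δ₁ := min_le_left _ _
      obtain ⟨ξ, hξab, hξkey⟩ : ∃ ξ : ℝ, |ξ - t| < |t' - t| ∧
          (∫ s in Set.Iic x', u t' s) - (∫ s in Set.Iic x', u t s) = Ψ ξ x' * (t' - t) := by
        rcases lt_or_gt_of_ne hteq with hlt | hlt
        · -- t' < t
          have hmem : ∀ τ : ℝ, τ ∈ Set.Icc t' t → τ ∈ Set.Ioo (0:ℝ) T := by
            intro τ hτ
            apply hIccI
            rw [Set.uIcc_comm, Set.uIcc_of_le hlt.le]
            exact hτ
          obtain ⟨ξ, hξ, hslope⟩ := exists_hasDerivAt_eq_slope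
            (fun τ : ℝ => ∫ s in Set.Iic x', u τ s) (fun τ : ℝ => Ψ τ x') hlt
            (fun τ hτ => (hC τ (hmem τ hτ) x').continuousAt.continuousWithinAt)
            (fun τ hτ => hC τ (hmem τ (Set.Ioo_subset_Icc_self hτ)) x')
          refine ⟨ξ, ?_, ?_⟩
          · rw [abs_sub_comm t' t, abs_of_pos (by linarith [hξ.1, hξ.2] : (0:ℝ) < t - t'),
              abs_of_neg (by linarith [hξ.2] : ξ - t < 0)]
            linarith [hξ.1]
          · have hne : t - t' ≠ 0 := by linarith
            rw [eq_div_iff hne] at hslope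
            linarith [hslope]
        · -- t < t'
          have hmem : ∀ τ : ℝ, τ ∈ Set.Icc t t' → τ ∈ Set.Ioo (0:ℝ) T := by
            intro τ hτ
            apply hIccI
            rw [Set.uIcc_of_le hlt.le]
            exact hτ
          obtain ⟨ξ, hξ, hslope⟩ := exists_hasDerivAt_eq_slope
            (fun τ : ℝ => ∫ s in Set.Iic x', u τ s) (fun τ : ℝ => Ψ τ x') hlt
            (fun τ hτ => (hC τ (hmem τ hτ) x').continuousAt.continuousWithinAt)
            (fun τ hτ => hC τ (hmem τ (Set.Ioo_subset_Icc_self hτ)) x')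
          refine ⟨ξ, ?_, ?_⟩
          · rw [abs_of_pos (by linarith [hξ.1, hξ.2] : (0:ℝ) < t' - t),
              abs_of_pos (by linarith [hξ.1] : (0:ℝ) < ξ - t)]
            linarith [hξ.2]
          · have hne : t' - t ≠ 0 := by linarith
            rw [eq_div_iff hne] at hslope
            linarith [hslope]
      rw [hξkey]
      have hξdist : dist (ξ, x') (t, x) < δ₂ := by
        rw [Prod.dist_eq]
        apply max_lt
        · rw [Real.dist_eq]
          calc |ξ - t| < |t' - t| := hξab
            _ = dist t' t := (Real.dist_eq _ _).symm
            _ < min δ₁ δ₂ := hd1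
            _ ≤ δ₂ := min_le_right _ _
        · exact lt_of_lt_of_le hd2 (min_le_right _ _)
      have hΨclose : |Ψ ξ x' - Ψ t x| < ε := by
        have := hcont hξdist
        simpa [Real.dist_eq] using this
      calc ‖Ψ ξ x' * (t' - t) - Ψ t x * (t' - t)‖
          = |Ψ ξ x' - Ψ t x| * |t' - t| := by
            rw [← sub_mul, Real.norm_eq_abs, abs_mul]
        _ ≤ ε * |t' - t| := by
            apply mul_le_mul_of_nonneg_right (le_of_lt hΨclose) (abs_nonneg _)
        _ ≤ ε * ‖(t', x') - (t, x)‖ := by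
            apply mul_le_mul_of_nonneg_left hnormfst (le_of_lt hε)
  have h2 : HasFDerivAt (fun p : ℝ × ℝ => ∫ s in Set.Iic p.2, u t s)
      (u t x • ContinuousLinearMap.snd ℝ ℝ ℝ) (t, x) :=
    (hFx t ht x).comp_hasFDerivAt (f := fun p : ℝ × ℝ => p.2) (t, x) hasFDerivAt_snd
  have hsum := hH.add h2
  have he : (fun p : ℝ × ℝ =>
      ((∫ s in Set.Iic p.2, u p.1 s) - ∫ s in Set.Iic p.2, u t s) + ∫ s in Set.Iic p.2, u t s)
      = fun p : ℝ × ℝ => ∫ s in Set.Iic p.2, u p.1 s := by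
    funext p
    ring
  rw [← he]; exact hsum

theorem stmt_4 (c α : ℝ) (hc : 0 < c) (hα : 2 ≤ α)
    (Φ : ℝ → ℝ) (hΦ : ContDiff ℝ 2 Φ)
    (hodd : ∀ y : ℝ, Φ (-y) = -Φ y)
    (hΦ' : ∀ y : ℝ, 0 < deriv Φ y)
    (hlim : Filter.Tendsto Φ Filter.atTop (nhds c))
    (C₀ y₀ : ℝ) (hC₀ : 0 < C₀) (hy₀ : 0 < y₀)
    (hdecay : ∀ y : ℝ, y₀ ≤ y → deriv Φ y ≤ C₀ * y ^ (-α - 1))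
    (a m T M : ℝ) (ha : 0 < a) (hm : 0 ≤ m) (hT : 0 < T) (hM : 0 < M)
    (u S φ : ℝ → ℝ → ℝ)
    (hupos : ∀ t ∈ Set.Ioo (0:ℝ) T, ∀ x : ℝ, 0 < u t x)
    (huC2 : ContDiffOn ℝ 2 (fun p : ℝ × ℝ => u p.1 p.2)
      (Set.Ioo (0:ℝ) T ×ˢ (Set.univ : Set ℝ)))
    (hSC2 : ContDiffOn ℝ 2 (fun p : ℝ × ℝ => S p.1 p.2)
      (Set.Ioo (0:ℝ) T ×ˢ (Set.univ : Set ℝ)))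
    (huint : ∀ t ∈ Set.Ioo (0:ℝ) T, MeasureTheory.Integrable (u t))
    (humass : ∀ t ∈ Set.Ioo (0:ℝ) T, (∫ x : ℝ, u t x) = M)
    (hφ : ∀ t ∈ Set.Ioo (0:ℝ) T, ∀ η ∈ Set.Ioo (0:ℝ) M,
      (∫ x in Set.Iic (φ t η), u t x) = η)
    (hφC2 : ContDiffOn ℝ 2 (fun p : ℝ × ℝ => φ p.1 p.2)
      (Set.Ioo (0:ℝ) T ×ˢ Set.Ioo (0:ℝ) M))
    (hflux0 : ∀ t ∈ Set.Ioo (0:ℝ) T,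
      Filter.Tendsto
        (fun x : ℝ => u t x * Φ ((u t x) ^ (m - 1) * deriv (u t) x)
          - a * deriv (S t) x * u t x)
        Filter.atBot (nhds 0))
    (hdiff_under : ∀ t ∈ Set.Ioo (0:ℝ) T, ∀ x : ℝ,
      HasDerivAt (fun τ : ℝ => ∫ s in Set.Iic x, u τ s)
        (∫ s in Set.Iic x, deriv (fun τ : ℝ => u τ s) t) t)
    (hPDE : ∀ t ∈ Set.Ioo (0:ℝ) T, ∀ x : ℝ,
      deriv (fun τ : ℝ => u τ x) t
        = deriv (fun ξ : ℝ => u t ξ * Φ ((u t ξ) ^ (m - 1) * deriv (u t) ξ)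
            - a * deriv (S t) ξ * u t ξ) x)
    (hS : ∀ t ∈ Set.Ioo (0:ℝ) T, ∀ x : ℝ, -(deriv (deriv (S t)) x) = u t x) :
    ∀ t ∈ Set.Ioo (0:ℝ) T, ∀ η ∈ Set.Ioo (0:ℝ) M,
      deriv (φ t) η = 1 / u t (φ t η) ∧
      deriv (fun τ : ℝ => deriv (φ τ) η) t
        = deriv (fun θ : ℝ =>
            Φ (deriv (deriv (φ t)) θ / (deriv (φ t) θ) ^ (2 + m))) η - a := by
  have hI : IsOpen (Set.Ioo (0:ℝ) T ×ˢ (Set.univ : Set ℝ)) := isOpen_Ioo.prod isOpen_univ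
  have hΩ : IsOpen (Set.Ioo (0:ℝ) T ×ˢ Set.Ioo (0:ℝ) M) := isOpen_Ioo.prod isOpen_Ioo
  have hudiff : ∀ {t x : ℝ}, t ∈ Set.Ioo (0:ℝ) T →
      DifferentiableAt ℝ (fun p : ℝ × ℝ => u p.1 p.2) (t, x) := fun {t x} ht =>
    (huC2.contDiffAt (hI.mem_nhds ⟨ht, trivial⟩)).differentiableAt two_ne_zero
  have hφdiff : ∀ {t η : ℝ}, t ∈ Set.Ioo (0:ℝ) T → η ∈ Set.Ioo (0:ℝ) M →
      DifferentiableAt ℝ (fun p : ℝ × ℝ => φ p.1 p.2) (t, η) := fun {t η} ht hη =>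
    (hφC2.contDiffAt (hΩ.mem_nhds ⟨ht, hη⟩)).differentiableAt two_ne_zero
  -- C² of time slices
  have huC2' : ∀ t ∈ Set.Ioo (0:ℝ) T, ContDiff ℝ 2 (u t) := by
    intro t ht
    have h := huC2.comp (s := (Set.univ : Set ℝ)) (f := fun x : ℝ => ((t : ℝ), x))
      ((contDiff_const.prodMk contDiff_id).contDiffOn) (fun x _ => ⟨ht, trivial⟩)
    exact contDiffOn_univ.mp h
  have hSC2' : ∀ t ∈ Set.Ioo (0:ℝ) T, ContDiff ℝ 2 (S t) := by
    intro t ht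
    have h := hSC2.comp (s := (Set.univ : Set ℝ)) (f := fun x : ℝ => ((t : ℝ), x))
      ((contDiff_const.prodMk contDiff_id).contDiffOn) (fun x _ => ⟨ht, trivial⟩)
    exact contDiffOn_univ.mp h
  have hsplit : ∀ f : ℝ → ℝ, ContDiff ℝ 2 f → Differentiable ℝ f ∧ ContDiff ℝ 1 (deriv f) := by
    intro f hf
    rw [show (2 : WithTop ℕ∞) = 1 + 1 from one_add_one_eq_two.symm] at hf
    rcases contDiff_succ_iff_deriv.mp hf with ⟨h1, _, h2⟩
    exact ⟨h1, h2⟩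
  have hucont : ∀ t ∈ Set.Ioo (0:ℝ) T, Continuous (u t) := fun t ht => (huC2' t ht).continuous
  -- FTC in space
  have hFx : ∀ t ∈ Set.Ioo (0:ℝ) T, ∀ x : ℝ,
      HasDerivAt (fun y : ℝ => ∫ s in Set.Iic y, u t s) (u t x) x :=
    fun t ht x => partFx (hucont t ht) (huint t ht) x
  -- Part A : derivative of φ t
  have hA : ∀ t ∈ Set.Ioo (0:ℝ) T, ∀ η ∈ Set.Ioo (0:ℝ) M,
      HasDerivAt (φ t) ((u t (φ t η))⁻¹) η := by
    intro t ht η hη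
    have hφt : DifferentiableAt ℝ (φ t) η := by
      have hcurve : ContDiffAt ℝ 2 (fun θ : ℝ => ((t : ℝ), θ)) η :=
        (contDiffAt_const (c := t)).prodMk contDiffAt_id
      have h := ContDiffAt.comp (g := fun p : ℝ × ℝ => φ p.1 p.2)
        (f := fun θ : ℝ => ((t : ℝ), θ)) η (hφC2.contDiffAt (x := ((t : ℝ), η)) (hΩ.mem_nhds ⟨ht, hη⟩)) hcurve
      exact h.differentiableAt two_ne_zero
    have hd := hφt.hasDerivAt
    have hcomp := (hFx t ht (φ t η)).comp η hd
    have hone : HasDerivAt (fun θ : ℝ => ∫ s in Set.Iic (φ t θ), u t s) 1 η := by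
      have heq : (fun θ : ℝ => ∫ s in Set.Iic (φ t θ), u t s) =ᶠ[nhds η] fun θ => θ := by
        filter_upwards [isOpen_Ioo.mem_nhds hη] with θ hθ using hφ t ht θ hθ
      exact (hasDerivAt_id η).congr_of_eventuallyEq heq
    have huniq : u t (φ t η) * deriv (φ t) η = 1 := hcomp.unique hone
    have hne : u t (φ t η) ≠ 0 := (hupos t ht _).ne'
    have hval : deriv (φ t) η = (u t (φ t η))⁻¹ :=
      mul_left_cancel₀ hne (huniq.trans (mul_inv_cancel₀ hne).symm)
    exact hval ▸ hd
  -- C¹ of flux slices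
  have hΨC1 : ∀ t ∈ Set.Ioo (0:ℝ) T, ContDiff ℝ 1
      (fun x : ℝ => u t x * Φ (u t x ^ (m - 1) * deriv (u t) x) - a * deriv (S t) x * u t x) := by
    intro t ht
    have hu1 : ContDiff ℝ 1 (u t) := (huC2' t ht).of_le one_le_two
    have hud : ContDiff ℝ 1 (deriv (u t)) := (hsplit _ (huC2' t ht)).2
    have hSd : ContDiff ℝ 1 (deriv (S t)) := (hsplit _ (hSC2' t ht)).2
    have hrpow : ContDiff ℝ 1 (fun x : ℝ => u t x ^ (m - 1)) := by
      rw [contDiff_iff_contDiffAt]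
      intro x
      exact (Real.contDiffAt_rpow_const_of_ne (hupos t ht x).ne').comp x hu1.contDiffAt
    exact (hu1.mul ((hΦ.of_le one_le_two).comp (hrpow.mul hud))).sub
      ((contDiff_const.mul hSd).mul hu1)
  -- joint continuity of the flux
  have hΨjoint : ContinuousOn (fun p : ℝ × ℝ =>
      u p.1 p.2 * Φ (u p.1 p.2 ^ (m - 1) * deriv (u p.1) p.2) - a * deriv (S p.1) p.2 * u p.1 p.2)
      (Set.Ioo (0:ℝ) T ×ˢ (Set.univ : Set ℝ)) := by
    have hucont' : ContinuousOn (fun p : ℝ × ℝ => u p.1 p.2)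
        (Set.Ioo (0:ℝ) T ×ˢ (Set.univ : Set ℝ)) := huC2.continuousOn
    have hux : ContinuousOn (fun p : ℝ × ℝ => deriv (u p.1) p.2)
        (Set.Ioo (0:ℝ) T ×ˢ (Set.univ : Set ℝ)) := by
      have h1 := huC2.continuousOn_fderiv_of_isOpen hI one_le_two
      have h2 : ContinuousOn
          (fun p : ℝ × ℝ => fderiv ℝ (fun q : ℝ × ℝ => u q.1 q.2) p ((0:ℝ), (1:ℝ)))
          (Set.Ioo (0:ℝ) T ×ˢ (Set.univ : Set ℝ)) :=
        ((ContinuousLinearMap.apply ℝ ℝ ((0:ℝ), (1:ℝ))).continuous).comp_continuousOn h1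
      apply h2.congr
      rintro ⟨t', x'⟩ hp
      exact (aux_snd (f := fun q : ℝ × ℝ => u q.1 q.2) (t := t') (x := x') (hudiff hp.1)).deriv
    have hSx : ContinuousOn (fun p : ℝ × ℝ => deriv (S p.1) p.2)
        (Set.Ioo (0:ℝ) T ×ˢ (Set.univ : Set ℝ)) := by
      have h1 := hSC2.continuousOn_fderiv_of_isOpen hI one_le_two
      have h2 : ContinuousOn
          (fun p : ℝ × ℝ => fderiv ℝ (fun q : ℝ × ℝ => S q.1 q.2) p ((0:ℝ), (1:ℝ)))
          (Set.Ioo (0:ℝ) T ×ˢ (Set.univ : Set ℝ)) :=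
        ((ContinuousLinearMap.apply ℝ ℝ ((0:ℝ), (1:ℝ))).continuous).comp_continuousOn h1
      apply h2.congr
      rintro ⟨t', x'⟩ hp
      have hSdiff : DifferentiableAt ℝ (fun p : ℝ × ℝ => S p.1 p.2) (t', x') :=
        (hSC2.contDiffAt (hI.mem_nhds ⟨hp.1, trivial⟩)).differentiableAt two_ne_zero
      exact (aux_snd (f := fun q : ℝ × ℝ => S q.1 q.2) (t := t') (x := x') hSdiff).deriv
    exact (hucont'.mul (hΦ.continuous.comp_continuousOn
        ((hucont'.rpow_const (fun p hp => Or.inl (hupos _ hp.1 _).ne')).mul hux))).sub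
      ((continuousOn_const.mul hSx).mul hucont')
  -- Part C : time derivative of the mass function
  have hC : ∀ t ∈ Set.Ioo (0:ℝ) T, ∀ x : ℝ,
      HasDerivAt (fun τ : ℝ => ∫ s in Set.Iic x, u τ s)
        (u t x * Φ (u t x ^ (m - 1) * deriv (u t) x) - a * deriv (S t) x * u t x) t := by
    intro t ht x
    exact partC
      (Ψ := fun t x => u t x * Φ (u t x ^ (m - 1) * deriv (u t) x) - a * deriv (S t) x * u t x)
      huC2 huint (hdiff_under t ht) ht ((hΨC1 t ht).differentiable one_ne_zero)
      ((hΨC1 t ht).continuous_deriv le_rfl) (fun s => hPDE t ht s) (hflux0 t ht) x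
  -- Part E : time derivative of φ
  have hE : ∀ t ∈ Set.Ioo (0:ℝ) T, ∀ θ ∈ Set.Ioo (0:ℝ) M,
      HasDerivAt (fun τ : ℝ => φ τ θ)
        (a * deriv (S t) (φ t θ) - Φ (u t (φ t θ) ^ (m - 1) * deriv (u t) (φ t θ))) t := by
    intro t ht θ hθ
    have hφτ : DifferentiableAt ℝ (fun τ : ℝ => φ τ θ) t := (aux_fst (hφdiff ht hθ)).differentiableAt
    have hγ : HasDerivAt (fun τ : ℝ => ((τ : ℝ), φ τ θ)) ((1:ℝ), deriv (fun τ : ℝ => φ τ θ) t) t :=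
      (hasDerivAt_id t).prodMk hφτ.hasDerivAt
    have hFD := partD
      (Ψ := fun t x => u t x * Φ (u t x ^ (m - 1) * deriv (u t) x) - a * deriv (S t) x * u t x)
      ht hFx hC hΨjoint (x := φ t θ)
    have hcomp : HasDerivAt (fun τ : ℝ => ∫ s in Set.Iic (φ τ θ), u τ s)
        ((u t (φ t θ) * Φ (u t (φ t θ) ^ (m - 1) * deriv (u t) (φ t θ))
          - a * deriv (S t) (φ t θ) * u t (φ t θ))
          + u t (φ t θ) * deriv (fun τ : ℝ => φ τ θ) t) t := by
      have h := hFD.comp_hasDerivAt t hγ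
      simpa [ContinuousLinearMap.add_apply, ContinuousLinearMap.smul_apply,
        ContinuousLinearMap.coe_fst', ContinuousLinearMap.coe_snd', smul_eq_mul, Function.comp_def] using h
    have hconst : HasDerivAt (fun τ : ℝ => ∫ s in Set.Iic (φ τ θ), u τ s) 0 t := by
      have heqc : (fun τ : ℝ => ∫ s in Set.Iic (φ τ θ), u τ s) =ᶠ[nhds t] fun _ => θ := by
        filter_upwards [isOpen_Ioo.mem_nhds ht] with τ hτ using hφ τ hτ θ hθ
      exact (hasDerivAt_const t θ).congr_of_eventuallyEq heqc
    have h0 := hcomp.unique hconst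
    have hne : u t (φ t θ) ≠ 0 := (hupos t ht _).ne'
    have h1 : u t (φ t θ) * (deriv (fun τ : ℝ => φ τ θ) t
        - (a * deriv (S t) (φ t θ) - Φ (u t (φ t θ) ^ (m - 1) * deriv (u t) (φ t θ)))) = 0 := by
      linear_combination h0
    have hdval : deriv (fun τ : ℝ => φ τ θ) t
        = a * deriv (S t) (φ t θ) - Φ (u t (φ t θ) ^ (m - 1) * deriv (u t) (φ t θ)) := by
      rcases mul_eq_zero.mp h1 with h | h
      · exact absurd h hne
      · linarith
    exact hdval ▸ hφτ.hasDerivAt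
  -- final assembly
  intro t ht η hη
  have hne : u t (φ t η) ≠ 0 := (hupos t ht _).ne'
  refine ⟨by rw [one_div]; exact (hA t ht η hη).deriv, ?_⟩
  -- second-order structure of φ
  have hφC2' : ContDiffOn ℝ ((1:WithTop ℕ∞) + 1) (fun p : ℝ × ℝ => φ p.1 p.2)
      (Set.Ioo (0:ℝ) T ×ˢ Set.Ioo (0:ℝ) M) := by
    rw [show ((1:WithTop ℕ∞) + 1) = 2 from one_add_one_eq_two]
    exact hφC2
  have hfdC1 := ((contDiffOn_succ_iff_fderiv_of_isOpen hΩ).mp hφC2').2.2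
  have hfd_diffAt : DifferentiableAt ℝ (fderiv ℝ (fun p : ℝ × ℝ => φ p.1 p.2)) (t, η) :=
    (hfdC1.contDiffAt (hΩ.mem_nhds ⟨ht, hη⟩)).differentiableAt one_ne_zero
  have hc1 : HasDerivAt (fun τ : ℝ => ((τ : ℝ), η)) ((1:ℝ), (0:ℝ)) t :=
    (hasDerivAt_id t).prodMk (hasDerivAt_const t η)
  have hD1 : HasDerivAt (fun τ : ℝ => fderiv ℝ (fun p : ℝ × ℝ => φ p.1 p.2) (τ, η))
      (fderiv ℝ (fderiv ℝ (fun p : ℝ × ℝ => φ p.1 p.2)) (t, η) ((1:ℝ), (0:ℝ))) t :=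
    hfd_diffAt.hasFDerivAt.comp_hasDerivAt t hc1
  have hD1e : HasDerivAt (fun τ : ℝ => fderiv ℝ (fun p : ℝ × ℝ => φ p.1 p.2) (τ, η) ((0:ℝ), (1:ℝ)))
      (fderiv ℝ (fderiv ℝ (fun p : ℝ × ℝ => φ p.1 p.2)) (t, η) ((1:ℝ), (0:ℝ)) ((0:ℝ), (1:ℝ))) t := by
    have h := hD1.clm_apply (hasDerivAt_const t ((0:ℝ), (1:ℝ)))
    simpa using h
  have heqt : (fun τ : ℝ => deriv (φ τ) η)
      =ᶠ[nhds t] fun τ : ℝ => fderiv ℝ (fun p : ℝ × ℝ => φ p.1 p.2) (τ, η) ((0:ℝ), (1:ℝ)) := by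
    filter_upwards [isOpen_Ioo.mem_nhds ht] with τ hτ
    exact (aux_snd (f := fun p : ℝ × ℝ => φ p.1 p.2) (t := τ) (x := η) (hφdiff hτ hη)).deriv
  have hsym := (hφC2.contDiffAt (x := ((t : ℝ), η)) (hΩ.mem_nhds ⟨ht, hη⟩)).isSymmSndFDerivAt (by simp)
  have hc2 : HasDerivAt (fun θ : ℝ => ((t : ℝ), θ)) ((0:ℝ), (1:ℝ)) η :=
    (hasDerivAt_const η t).prodMk (hasDerivAt_id η)
  have hfd_diffAt2 : DifferentiableAt ℝ (fderiv ℝ (fun p : ℝ × ℝ => φ p.1 p.2)) (t, η) := hfd_diffAt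
  have hD2 : HasDerivAt (fun θ : ℝ => fderiv ℝ (fun p : ℝ × ℝ => φ p.1 p.2) (t, θ))
      (fderiv ℝ (fderiv ℝ (fun p : ℝ × ℝ => φ p.1 p.2)) (t, η) ((0:ℝ), (1:ℝ))) η :=
    hfd_diffAt2.hasFDerivAt.comp_hasDerivAt η hc2
  have hD2e : HasDerivAt (fun θ : ℝ => fderiv ℝ (fun p : ℝ × ℝ => φ p.1 p.2) (t, θ) ((1:ℝ), (0:ℝ)))
      (fderiv ℝ (fderiv ℝ (fun p : ℝ × ℝ => φ p.1 p.2)) (t, η) ((0:ℝ), (1:ℝ)) ((1:ℝ), (0:ℝ))) η := by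
    have h := hD2.clm_apply (hasDerivAt_const η ((1:ℝ), (0:ℝ)))
    simpa using h
  have heqθ : (fun θ : ℝ => fderiv ℝ (fun p : ℝ × ℝ => φ p.1 p.2) (t, θ) ((1:ℝ), (0:ℝ)))
      =ᶠ[nhds η] fun θ : ℝ =>
        a * deriv (S t) (φ t θ) - Φ (u t (φ t θ) ^ (m - 1) * deriv (u t) (φ t θ)) := by
    filter_upwards [isOpen_Ioo.mem_nhds hη] with θ hθ
    exact (aux_fst (hφdiff ht hθ)).unique (hE t ht θ hθ)
  have hmixed : HasDerivAt (fun θ : ℝ =>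
      a * deriv (S t) (φ t θ) - Φ (u t (φ t θ) ^ (m - 1) * deriv (u t) (φ t θ)))
      (fderiv ℝ (fderiv ℝ (fun p : ℝ × ℝ => φ p.1 p.2)) (t, η) ((0:ℝ), (1:ℝ)) ((1:ℝ), (0:ℝ))) η :=
    hD2e.congr_of_eventuallyEq heqθ.symm
  -- derivative of the S-term
  have hSd1 : Differentiable ℝ (deriv (S t)) := ((hsplit _ (hSC2' t ht)).2).differentiable one_ne_zero
  have hcompS : HasDerivAt (fun θ : ℝ => deriv (S t) (φ t θ))
      (deriv (deriv (S t)) (φ t η) * (u t (φ t η))⁻¹) η :=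
    ((hSd1 (φ t η)).hasDerivAt).comp η (hA t ht η hη)
  have hSval : deriv (deriv (S t)) (φ t η) = -(u t (φ t η)) := by
    have h := hS t ht (φ t η); linarith
  have hh2 : HasDerivAt (fun θ : ℝ => a * deriv (S t) (φ t θ)) (-a) η := by
    have h := hcompS.const_mul a
    rw [hSval] at h
    have hval : a * (-(u t (φ t η)) * (u t (φ t η))⁻¹) = -a := by
      field_simp
    rwa [hval] at h
  have hud1 : Differentiable ℝ (u t) := (hsplit _ (huC2' t ht)).1
  have huder : Differentiable ℝ (deriv (u t)) := ((hsplit _ (huC2' t ht)).2).differentiable one_ne_zero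
  have hφdη : DifferentiableAt ℝ (φ t) η := (hA t ht η hη).differentiableAt
  have hq1 : DifferentiableAt ℝ (fun θ : ℝ => u t (φ t θ)) η := (hud1 _).comp η hφdη
  have hq2 : DifferentiableAt ℝ (fun θ : ℝ => u t (φ t θ) ^ (m - 1)) η :=
    by have h := (Real.differentiableAt_rpow_const_of_ne (m - 1) hne).comp η hq1; exact h
  have hq3 : DifferentiableAt ℝ (fun θ : ℝ => deriv (u t) (φ t θ)) η := (huder _).comp η hφdη
  have hh1diff : DifferentiableAt ℝ
      (fun θ : ℝ => Φ (u t (φ t θ) ^ (m - 1) * deriv (u t) (φ t θ))) η :=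
    ((hΦ.differentiable two_ne_zero) _).comp η (hq2.mul hq3)
  have hmixed2 : HasDerivAt (fun θ : ℝ =>
      a * deriv (S t) (φ t θ) - Φ (u t (φ t θ) ^ (m - 1) * deriv (u t) (φ t θ)))
      (-a - deriv (fun θ : ℝ => Φ (u t (φ t θ) ^ (m - 1) * deriv (u t) (φ t θ))) η) η :=
    hh2.sub hh1diff.hasDerivAt
  have hkey1 : fderiv ℝ (fderiv ℝ (fun p : ℝ × ℝ => φ p.1 p.2)) (t, η) ((0:ℝ), (1:ℝ)) ((1:ℝ), (0:ℝ))
      = -a - deriv (fun θ : ℝ => Φ (u t (φ t θ) ^ (m - 1) * deriv (u t) (φ t θ))) η :=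
    hmixed.unique hmixed2
  -- second space derivative of φ
  have hd2 : ∀ θ ∈ Set.Ioo (0:ℝ) M, deriv (deriv (φ t)) θ
      = -(deriv (u t) (φ t θ) * (u t (φ t θ))⁻¹) / (u t (φ t θ)) ^ 2 := by
    intro θ hθ
    have heq : deriv (φ t) =ᶠ[nhds θ] fun θ' : ℝ => (u t (φ t θ'))⁻¹ := by
      filter_upwards [isOpen_Ioo.mem_nhds hθ] with θ' hθ'
      exact (hA t ht θ' hθ').deriv
    rw [heq.deriv_eq]
    have hinner : HasDerivAt (fun θ' : ℝ => u t (φ t θ'))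
        (deriv (u t) (φ t θ) * (u t (φ t θ))⁻¹) θ :=
      ((hud1 _).hasDerivAt).comp θ (hA t ht θ hθ)
    exact (hinner.inv (hupos t ht _).ne').deriv
  have hRfun : (fun θ : ℝ => Φ (deriv (deriv (φ t)) θ / (deriv (φ t) θ) ^ (2 + m)))
      =ᶠ[nhds η] fun θ : ℝ => -Φ (u t (φ t θ) ^ (m - 1) * deriv (u t) (φ t θ)) := by
    filter_upwards [isOpen_Ioo.mem_nhds hη] with θ hθ
    rw [hd2 θ hθ, (hA t ht θ hθ).deriv, aux_ratio (hupos t ht (φ t θ))]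
    exact hodd _
  have hRHS : deriv (fun θ : ℝ => Φ (deriv (deriv (φ t)) θ / (deriv (φ t) θ) ^ (2 + m))) η
      = - deriv (fun θ : ℝ => Φ (u t (φ t θ) ^ (m - 1) * deriv (u t) (φ t θ))) η := by
    rw [hRfun.deriv_eq]
    exact deriv.neg
  have e1 : deriv (fun τ : ℝ => deriv (φ τ) η) t
      = fderiv ℝ (fderiv ℝ (fun p : ℝ × ℝ => φ p.1 p.2)) (t, η) ((1:ℝ), (0:ℝ)) ((0:ℝ), (1:ℝ)) := by
    rw [heqt.deriv_eq]
    exact hD1e.deriv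
  rw [e1, hsym ((1:ℝ), (0:ℝ)) ((0:ℝ), (1:ℝ)), hkey1, hRHS]
  ring
end

section
/- Let M > 0, δ₀ ∈ (0,M), κ > 0, and let v₀ : [0,M] → (0,∞) be a function. For ε > 0 set B(ε) := (c − ε^κ)/(2ε). Then there exists ε̃ ∈ (0, δ₀) such that for every ε with 0 < ε < ε̃ the following two inequalities hold: Φ( B(ε) / v₀(0)^(2+m) ) + ε·B(ε) > c − ε^κ, and Φ( B(ε) / (v₀(δ₀) + δ₀·B(ε))^(2+m) ) + ε·B(ε) < c − ε^κ. -/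
open Filter Topology Set

theorem stmt_6 (c α : ℝ) (hc : 0 < c) (hα : 2 ≤ α)
    (Φ : ℝ → ℝ) (hΦ : ContDiff ℝ 2 Φ)
    (hodd : ∀ y : ℝ, Φ (-y) = -Φ y)
    (hΦ' : ∀ y : ℝ, 0 < deriv Φ y)
    (hlim : Filter.Tendsto Φ Filter.atTop (nhds c))
    (C₀ y₀ : ℝ) (hC₀ : 0 < C₀) (hy₀ : 0 < y₀)
    (hdecay : ∀ y : ℝ, y₀ ≤ y → deriv Φ y ≤ C₀ * y ^ (-α - 1))
    (m : ℝ) (hm : 0 ≤ m)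
    (M δ₀ κ : ℝ) (hM : 0 < M) (hδ₀ : δ₀ ∈ Set.Ioo (0:ℝ) M) (hκ : 0 < κ)
    (v₀ : ℝ → ℝ) (hv₀ : ∀ η ∈ Set.Icc (0:ℝ) M, 0 < v₀ η) :
    ∃ εt ∈ Set.Ioo (0:ℝ) δ₀, ∀ ε : ℝ, 0 < ε → ε < εt →
      c - ε ^ κ <
        Φ (((c - ε ^ κ) / (2 * ε)) / (v₀ 0) ^ (2 + m))
          + ε * ((c - ε ^ κ) / (2 * ε)) ∧
      Φ (((c - ε ^ κ) / (2 * ε))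
            / (v₀ δ₀ + δ₀ * ((c - ε ^ κ) / (2 * ε))) ^ (2 + m))
          + ε * ((c - ε ^ κ) / (2 * ε)) < c - ε ^ κ := by
  obtain ⟨hδ₀0, hδ₀M⟩ := hδ₀
  have hv0 : 0 < v₀ 0 := hv₀ 0 ⟨le_refl _, hM.le⟩
  have hvδ : 0 < v₀ δ₀ := hv₀ δ₀ ⟨hδ₀0.le, hδ₀M.le⟩
  have hΦ0 : Φ 0 = 0 := by have := hodd 0; rw [neg_zero] at this; linarith
  set l : Filter ℝ := 𝓝[>] (0:ℝ) with hl
  set B : ℝ → ℝ := fun ε => (c - ε ^ κ) / (2 * ε) with hB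
  -- ε^κ → 0
  have h_eps : Tendsto (fun ε : ℝ => ε ^ κ) l (𝓝 0) := by
    have : ContinuousAt (fun ε : ℝ => ε ^ κ) 0 :=
      Real.continuousAt_rpow_const 0 κ (Or.inr hκ.le)
    have h0 : (0:ℝ) ^ κ = 0 := Real.zero_rpow hκ.ne'
    simpa [h0] using (this.tendsto.mono_left nhdsWithin_le_nhds)
  have h_num : Tendsto (fun ε : ℝ => c - ε ^ κ) l (𝓝 c) := by
    simpa using (tendsto_const_nhds.sub h_eps)
  -- B → atTop
  have h_inv : Tendsto (fun ε : ℝ => (2 * ε)⁻¹) l atTop := by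
    have h1 : Tendsto (fun ε : ℝ => ε⁻¹) l atTop := tendsto_inv_nhdsGT_zero
    have : Tendsto (fun ε : ℝ => (1/2) * ε⁻¹) l atTop :=
      h1.const_mul_atTop (by norm_num)
    refine this.congr (fun ε => ?_)
    rw [mul_inv]; ring
  have h_B : Tendsto B l atTop := by
    have := h_num.pos_mul_atTop hc h_inv
    refine this.congr (fun ε => ?_)
    simp only [hB, div_eq_mul_inv]
  -- first argument → atTop
  have hpow0 : 0 < (v₀ 0) ^ (2 + m) := Real.rpow_pos_of_pos hv0 _
  have h_arg1 : Tendsto (fun ε => B ε / (v₀ 0) ^ (2 + m)) l atTop :=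
    h_B.atTop_div_const hpow0
  have hΦ1 : Tendsto (fun ε => Φ (B ε / (v₀ 0) ^ (2 + m))) l (𝓝 c) :=
    hlim.comp h_arg1
  -- second argument → 0
  have h2m : (0:ℝ) < 2 + m := by linarith
  have h1m : (0:ℝ) < 1 + m := by linarith
  have h_arg2 : Tendsto
      (fun ε => B ε / (v₀ δ₀ + δ₀ * B ε) ^ (2 + m)) l (𝓝 0) := by
    have hbound : Tendsto (fun ε => δ₀ ^ (-(2 + m)) * (B ε) ^ (-(1 + m))) l (𝓝 0) := by
      have := (tendsto_rpow_neg_atTop h1m).comp h_B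
      simpa using (tendsto_const_nhds.mul this)
    have hge : ∀ᶠ ε in l, 1 ≤ B ε := h_B.eventually_ge_atTop 1
    refine tendsto_of_tendsto_of_tendsto_of_le_of_le' tendsto_const_nhds hbound ?_ ?_
    · filter_upwards [hge] with ε hε
      have hBpos : 0 < B ε := lt_of_lt_of_le one_pos hε
      have hD : 0 < v₀ δ₀ + δ₀ * B ε := by positivity
      positivity
    · filter_upwards [hge] with ε hε
      have hBpos : 0 < B ε := lt_of_lt_of_le one_pos hε
      have hδB : 0 < δ₀ * B ε := by positivity
      have hD : δ₀ * B ε ≤ v₀ δ₀ + δ₀ * B ε := by linarith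
      have hmono : (δ₀ * B ε) ^ (2 + m) ≤ (v₀ δ₀ + δ₀ * B ε) ^ (2 + m) :=
        Real.rpow_le_rpow hδB.le hD h2m.le
      have hposden : 0 < (δ₀ * B ε) ^ (2 + m) := Real.rpow_pos_of_pos hδB _
      have step1 : B ε / (v₀ δ₀ + δ₀ * B ε) ^ (2 + m) ≤ B ε / (δ₀ * B ε) ^ (2 + m) :=
        div_le_div_of_nonneg_left hBpos.le hposden hmono
      have key : B ε / (δ₀ * B ε) ^ (2 + m) = δ₀ ^ (-(2 + m)) * B ε ^ (-(1 + m)) := by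
        rw [Real.mul_rpow hδ₀0.le hBpos.le, Real.rpow_neg hδ₀0.le,
          show -(1 + m) = (1:ℝ) - (2 + m) by ring, Real.rpow_sub hBpos, Real.rpow_one]
        ring
      exact step1.trans (le_of_eq key)
    -- done
  have hΦ2 : Tendsto (fun ε => Φ (B ε / (v₀ δ₀ + δ₀ * B ε) ^ (2 + m))) l (𝓝 0) := by
    have hcont : Tendsto Φ (𝓝 0) (𝓝 0) := by
      simpa [hΦ0] using (hΦ.continuous.continuousAt (x := (0:ℝ))).tendsto
    exact hcont.comp h_arg2
  -- eventual inequalities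
  have hev1 : ∀ᶠ ε in l, (c - ε ^ κ) / 2 < Φ (B ε / (v₀ 0) ^ (2 + m)) := by
    have h : Tendsto (fun ε => Φ (B ε / (v₀ 0) ^ (2 + m)) - (c - ε ^ κ) / 2) l
        (𝓝 (c - c / 2)) := by
      have := hΦ1.sub (h_num.div_const 2)
      simpa using this
    have := h.eventually (eventually_gt_nhds (by linarith : (0:ℝ) < c - c / 2))
    filter_upwards [this] with ε hε; linarith
  have hev2 : ∀ᶠ ε in l,
      Φ (B ε / (v₀ δ₀ + δ₀ * B ε) ^ (2 + m)) < (c - ε ^ κ) / 2 := by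
    have h : Tendsto (fun ε => Φ (B ε / (v₀ δ₀ + δ₀ * B ε) ^ (2 + m)) - (c - ε ^ κ) / 2)
        l (𝓝 (0 - c / 2)) := hΦ2.sub (h_num.div_const 2)
    have := h.eventually (eventually_lt_nhds (by linarith : 0 - c / 2 < 0))
    filter_upwards [this] with ε hε; linarith
  -- extract εt
  obtain ⟨u, hu, hsub⟩ := mem_nhdsGT_iff_exists_Ioo_subset.mp (hev1.and hev2)
  have hu' : (0:ℝ) < u := hu
  refine ⟨min u δ₀ / 2, ⟨by positivity, ?_⟩, ?_⟩
  · have := min_le_right u δ₀; linarith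
  · intro ε hε0 hεlt
    have hεu : ε < u := by have := min_le_left u δ₀; linarith
    obtain ⟨h1, h2⟩ := hsub ⟨hε0, hεu⟩
    have hmul : ε * ((c - ε ^ κ) / (2 * ε)) = (c - ε ^ κ) / 2 := by
      field_simp
    constructor
    · rw [hmul]; simp only [hB] at h1; linarith
    · rw [hmul]; simp only [hB] at h2; linarith
end

section
/- Fix M > 0 and λ > 0. There exists ε₀ > 0 such that for every ε ∈ (0, ε₀), setting A := 2(c − ε^λ)/M and h(η) := (1/A)·( G(A·η − c + ε^λ) − G(c − ε^λ) ) for η ∈ [0,M], the function h satisfies: h is three times continuously differentiable on [0,M]; h(0) = h(M) = 0; h(M − η) = h(η) for all η ∈ [0,M]; h(η) ≥ h(M/2) = −G(c − ε^λ)/A for all η ∈ [0,M]; and h(M/2) → −M·G(c)/(2c) as ε → 0⁺. -/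
open Set Filter MeasureTheory intervalIntegral
open scoped Topology

theorem stmt_7 (c α : ℝ) (hc : 0 < c) (hα : 2 ≤ α)
    (Φ : ℝ → ℝ) (hΦ : ContDiff ℝ 2 Φ)
    (hodd : ∀ y : ℝ, Φ (-y) = -Φ y)
    (hΦ' : ∀ y : ℝ, 0 < deriv Φ y)
    (hlim : Filter.Tendsto Φ Filter.atTop (nhds c))
    (C₀ y₀ : ℝ) (hC₀ : 0 < C₀) (hy₀ : 0 < y₀)
    (hdecay : ∀ y : ℝ, y₀ ≤ y → deriv Φ y ≤ C₀ * y ^ (-α - 1))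
    (M lam : ℝ) (hM : 0 < M) (hlam : 0 < lam) :
    let g : ℝ → ℝ := Function.invFun Φ
    let G : ℝ → ℝ := fun u => ∫ s in (0:ℝ)..u, g s
    ∃ ε₀ > (0:ℝ),
      (∀ ε ∈ Set.Ioo (0:ℝ) ε₀,
        let A : ℝ := 2 * (c - ε ^ lam) / M
        let h : ℝ → ℝ := fun η => (1 / A) * (G (A * η - c + ε ^ lam) - G (c - ε ^ lam))
        ContDiffOn ℝ 3 h (Set.Icc 0 M) ∧
        h 0 = 0 ∧ h M = 0 ∧
        (∀ η ∈ Set.Icc (0:ℝ) M, h (M - η) = h η) ∧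
        (∀ η ∈ Set.Icc (0:ℝ) M, h (M / 2) ≤ h η) ∧
        h (M / 2) = -(G (c - ε ^ lam)) / A) ∧
      Filter.Tendsto
        (fun ε : ℝ => -(G (c - ε ^ lam)) / (2 * (c - ε ^ lam) / M))
        (nhdsWithin 0 (Set.Ioi 0)) (nhds (-(M * G c) / (2 * c))) := by
  intro g G
  have hαpos : (0:ℝ) < α := by linarith
  -- ### Basic structure of Φ and g
  have hmono : StrictMono Φ := strictMono_of_deriv_pos hΦ'
  have hinj : Function.Injective Φ := hmono.injective
  have hgl : Function.LeftInverse g Φ := Function.leftInverse_invFun hinj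
  have hΦ0 : Φ 0 = 0 := by have := hodd 0; simp at this; linarith
  have hsurj : ∀ v ∈ Set.Ioo (-c) c, ∃ y, Φ y = v := by
    intro v hv
    obtain ⟨b, hb⟩ := (hlim.eventually (eventually_gt_nhds hv.2)).exists
    obtain ⟨b', hb'⟩ := (hlim.eventually (eventually_gt_nhds (by linarith [hv.1] : -v < c))).exists
    have ha : Φ (-b') < v := by rw [hodd]; linarith
    exact intermediate_value_univ (-b') b hΦ.continuous ⟨ha.le, hb.le⟩
  have hΦg : ∀ s ∈ Set.Ioo (-c) c, Φ (g s) = s := fun s hs => Function.invFun_eq (hsurj s hs)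
  have h0mem : (0:ℝ) ∈ Set.Ioo (-c) c := by constructor <;> linarith
  have godd : ∀ s ∈ Set.Ioo (-c) c, g (-s) = -g s := by
    intro s hs
    have h1 : Φ (-(g s)) = -s := by rw [hodd, hΦg s hs]
    calc g (-s) = g (Φ (-(g s))) := by rw [h1]
      _ = -(g s) := hgl _
  have hgnonneg : ∀ s ∈ Set.Ico (0:ℝ) c, 0 ≤ g s := by
    rintro s ⟨hs0, hsc⟩
    by_contra hneg
    push_neg at hneg
    have : Φ (g s) < Φ 0 := hmono hneg
    rw [hΦ0, hΦg s ⟨by linarith, hsc⟩] at this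
    linarith
  -- ### Smoothness of g on Ioo (-c) c
  have hgderiv : ∀ s ∈ Set.Ioo (-c) c, HasStrictDerivAt g (deriv Φ (g s))⁻¹ s := by
    intro s hs
    have h1 : ContDiffAt ℝ 2 Φ (g s) := hΦ.contDiffAt
    have h2 := (h1.hasStrictDerivAt (by norm_num)).to_local_left_inverse (hΦ' _).ne'
      (Filter.Eventually.of_forall hgl)
    rwa [hΦg s hs] at h2
  have hgdiff : DifferentiableOn ℝ g (Set.Ioo (-c) c) :=
    fun s hs => ((hgderiv s hs).hasDerivAt.differentiableAt).differentiableWithinAt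
  have hdeq : ∀ s ∈ Set.Ioo (-c) c, deriv g s = (deriv Φ (g s))⁻¹ :=
    fun s hs => (hgderiv s hs).hasDerivAt.deriv
  have hgcont : ContinuousOn g (Set.Ioo (-c) c) := hgdiff.continuousOn
  have hΦ'C1 : ContDiff ℝ 1 (deriv Φ) := by
    have h2 : ContDiff ℝ (1+1 : ℕ) Φ := by exact_mod_cast hΦ
    exact (contDiff_succ_iff_deriv.mp h2).2.2
  have hgC1 : ContDiffOn ℝ 1 g (Set.Ioo (-c) c) := by
    rw [show (1 : WithTop ℕ∞) = 0 + 1 by norm_num,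
      contDiffOn_succ_iff_deriv_of_isOpen isOpen_Ioo]
    refine ⟨hgdiff, by simp, ?_⟩
    rw [contDiffOn_zero]
    exact ContinuousOn.congr ((hΦ'C1.continuous.comp_continuousOn hgcont).inv₀
      (fun s hs => (hΦ' _).ne')) hdeq
  have hgC2 : ContDiffOn ℝ 2 g (Set.Ioo (-c) c) := by
    rw [show (2 : WithTop ℕ∞) = 1 + 1 by norm_num,
      contDiffOn_succ_iff_deriv_of_isOpen isOpen_Ioo]
    refine ⟨hgdiff, by simp, ?_⟩
    exact ContDiffOn.congr ((hΦ'C1.comp_contDiffOn hgC1).inv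
      (fun s hs => (hΦ' _).ne')) hdeq
  -- ### G is C³ on Ioo (-c) c
  have hGd : ∀ u ∈ Set.Ioo (-c) c, HasDerivAt G (g u) u := by
    intro u hu
    have hsub : Set.uIcc 0 u ⊆ Set.Ioo (-c) c := Set.ordConnected_Ioo.uIcc_subset h0mem hu
    have hint : IntervalIntegrable g volume 0 u := (hgcont.mono hsub).intervalIntegrable
    exact intervalIntegral.integral_hasDerivAt_right hint
      (hgcont.stronglyMeasurableAtFilter isOpen_Ioo u hu)
      (hgcont.continuousAt (isOpen_Ioo.mem_nhds hu))
  have hGC3 : ContDiffOn ℝ 3 G (Set.Ioo (-c) c) := by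
    rw [show (3 : WithTop ℕ∞) = 2 + 1 by norm_num,
      contDiffOn_succ_iff_deriv_of_isOpen isOpen_Ioo]
    exact ⟨fun u hu => (hGd u hu).differentiableAt.differentiableWithinAt, by simp,
      hgC2.congr fun u hu => (hGd u hu).deriv⟩
  -- ### G is even and nonnegative on Ioo (-c) c
  have heven : ∀ u ∈ Set.Ioo (-c) c, G (-u) = G u := by
    intro u hu
    have hsub : Set.uIcc 0 u ⊆ Set.Ioo (-c) c := Set.ordConnected_Ioo.uIcc_subset h0mem hu
    have h1 : (∫ x in (0:ℝ)..u, g (-x)) = ∫ x in (-u)..(0:ℝ), g x := by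
      simpa using intervalIntegral.integral_comp_neg (a := (0:ℝ)) (b := u) (f := g)
    have h2 : (∫ x in (0:ℝ)..u, g (-x)) = ∫ x in (0:ℝ)..u, -g x :=
      intervalIntegral.integral_congr (fun x hx => godd x (hsub hx))
    have h3 : (∫ x in (-u)..(0:ℝ), g x) = -∫ x in (0:ℝ)..(-u), g x :=
      intervalIntegral.integral_symm _ _
    rw [h3, h2, intervalIntegral.integral_neg] at h1
    show (∫ s in (0:ℝ)..(-u), g s) = ∫ s in (0:ℝ)..u, g s
    linarith
  have hGnn : ∀ u ∈ Set.Ioo (-c) c, 0 ≤ G u := by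
    have hnn0 : ∀ u ∈ Set.Ico (0:ℝ) c, 0 ≤ G u := by
      rintro u ⟨hu0, huc⟩
      apply intervalIntegral.integral_nonneg hu0
      intro s hs
      exact hgnonneg s ⟨hs.1, lt_of_le_of_lt hs.2 huc⟩
    intro u hu
    rcases le_or_gt 0 u with hcase | hcase
    · exact hnn0 u ⟨hcase, hu.2⟩
    · rw [← heven u hu]
      exact hnn0 (-u) ⟨by linarith, by linarith [hu.1]⟩
  have hG0 : G 0 = 0 := intervalIntegral.integral_same
  -- ### decay bound : Φ y ≥ c - C₀/α * y^(-α)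
  have hΦlow : ∀ y, y₀ ≤ y → c - C₀/α * y ^ (-α) ≤ Φ y := by
    intro y hy
    have hy0 : 0 < y := lt_of_lt_of_le hy₀ hy
    have key : ∀ z, y ≤ z → Φ z ≤ Φ y + C₀/α * y ^ (-α) := by
      intro z hz
      have hz0 : 0 < z := lt_of_lt_of_le hy0 hz
      have hcd : Continuous (deriv Φ) := hΦ.continuous_deriv one_le_two
      have hderint : IntervalIntegrable (deriv Φ) volume y z := hcd.intervalIntegrable _ _
      have hftc : ∫ t in y..z, deriv Φ t = Φ z - Φ y :=
        intervalIntegral.integral_deriv_eq_sub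
          (fun t _ => (hΦ.differentiable (by norm_num)).differentiableAt) hderint
      have hbint : IntervalIntegrable (fun t => C₀ * t ^ (-α - 1)) volume y z := by
        apply ContinuousOn.intervalIntegrable
        apply (continuousOn_const.mul (ContinuousOn.rpow_const continuousOn_id ?_))
        intro t ht
        left
        rw [Set.uIcc_of_le hz] at ht
        intro hteq
        simp only [id] at hteq
        nlinarith [ht.1]
      have hmono_int : ∫ t in y..z, deriv Φ t ≤ ∫ t in y..z, C₀ * t ^ (-α - 1) :=
        intervalIntegral.integral_mono_on hz hderint hbint
          (fun t ht => hdecay t (le_trans hy ht.1))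
      rw [hftc, intervalIntegral.integral_const_mul,
        integral_rpow (Or.inr ⟨by intro hcontra; nlinarith, by
          rw [Set.uIcc_of_le hz]; intro hcontra; exact absurd hcontra.1 (by linarith)⟩)]
        at hmono_int
      rw [show -α - 1 + 1 = -α by ring] at hmono_int
      have hz_nn : (0:ℝ) ≤ z ^ (-α) := Real.rpow_nonneg hz0.le _
      have h1 : C₀ * ((z ^ (-α) - y ^ (-α)) / -α) = C₀ * (y ^ (-α) - z ^ (-α)) / α := by
        rw [div_neg]
        ring
      have h2 : C₀ * (y ^ (-α) - z ^ (-α)) / α ≤ C₀ * y ^ (-α) / α := by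
        gcongr
        nlinarith
      have h3 : C₀ * y ^ (-α) / α = C₀ / α * y ^ (-α) := by ring
      linarith
    have hle : c ≤ Φ y + C₀/α * y ^ (-α) :=
      le_of_tendsto hlim (Filter.eventually_atTop.2 ⟨y, key⟩)
    linarith
  -- ### integrability of g up to c
  have hgint : IntegrableOn g (Set.uIcc 0 c) := by
    set δ : ℝ := min c (C₀ / (α * y₀ ^ α)) with hδ
    have hδpos : 0 < δ := lt_min hc (div_pos hC₀ (mul_pos hαpos (Real.rpow_pos_of_pos hy₀ _)))
    set s₁ : ℝ := max 0 (c - δ) with hs₁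
    have hs₁0 : 0 ≤ s₁ := le_max_left _ _
    have hs₁c : s₁ < c := max_lt hc (by linarith)
    have hgb : ∀ s ∈ Set.Ioo s₁ c, g s ≤ (C₀/α)^(1/α) * (c - s)^(-(1/α)) := by
      intro s hs
      have hcs : 0 < c - s := by linarith [hs.2]
      have hcsδ : c - s < δ := by
        have := hs.1
        have h2 : c - δ ≤ s₁ := le_max_right _ _
        linarith
      set x : ℝ := C₀ / (α * (c - s)) with hx
      have hxpos : 0 < x := div_pos hC₀ (mul_pos hαpos hcs)
      set y : ℝ := x ^ (1/α) with hy
      have hypos : 0 < y := Real.rpow_pos_of_pos hxpos _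
      have hyy₀ : y₀ ≤ y := by
        have h1 : y₀ ^ α ≤ x := by
          rw [hx, le_div_iff₀ (mul_pos hαpos hcs)]
          have h2 : c - s ≤ C₀ / (α * y₀ ^ α) := le_of_lt (lt_of_lt_of_le hcsδ (min_le_right _ _))
          rw [le_div_iff₀ (mul_pos hαpos (Real.rpow_pos_of_pos hy₀ _))] at h2
          nlinarith [Real.rpow_pos_of_pos hy₀ α]
        calc y₀ = (y₀ ^ α) ^ (1/α) := by
              rw [← Real.rpow_mul hy₀.le, mul_one_div, div_self hαpos.ne', Real.rpow_one]
          _ ≤ x ^ (1/α) := Real.rpow_le_rpow (Real.rpow_nonneg hy₀.le _) h1 (by positivity)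
      have hyα : y ^ (-α) = α * (c - s) / C₀ := by
        rw [hy, ← Real.rpow_mul hxpos.le]
        rw [show 1/α * (-α) = -1 by field_simp]
        rw [Real.rpow_neg_one, hx, inv_div]
      have hΦy : s ≤ Φ y := by
        have hlow := hΦlow y hyy₀
        rw [hyα] at hlow
        have hC : C₀ / α * (α * (c - s) / C₀) = c - s := by field_simp
        rw [hC] at hlow
        linarith
      have hgsy : g s ≤ y := by
        by_contra hgt
        push_neg at hgt
        have h3 : Φ y < Φ (g s) := hmono hgt
        rw [hΦg s ⟨by linarith [hs.1], hs.2⟩] at h3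
        linarith
      have hyeq : y = (C₀/α)^(1/α) * (c - s)^(-(1/α)) := by
        rw [hy, hx, show C₀ / (α * (c-s)) = (C₀/α) * (c-s)⁻¹ by field_simp,
          Real.mul_rpow (by positivity) (by positivity),
          Real.inv_rpow hcs.le, ← Real.rpow_neg hcs.le]
      rw [← hyeq]; exact hgsy
    have hφint : IntervalIntegrable (fun s => (C₀/α)^(1/α) * (c - s)^(-(1/α))) volume s₁ c := by
      have h1 : IntervalIntegrable (fun x : ℝ => x ^ (-(1/α))) volume 0 (c - s₁) :=
        intervalIntegral.intervalIntegrable_rpow' (by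
          rw [neg_lt, neg_neg]
          calc 1/α ≤ 1/2 := one_div_le_one_div_of_le two_pos hα
            _ < 1 := by norm_num)
      have h2 := (h1.comp_sub_left c)
      simp only [sub_zero, sub_sub_cancel] at h2
      exact (h2.symm).const_mul _
    have hgint1 : IntegrableOn g (Set.Ioo s₁ c) := by
      have hφ : IntegrableOn (fun s => (C₀/α)^(1/α) * (c - s)^(-(1/α))) (Set.Ioo s₁ c) := by
        rw [intervalIntegrable_iff_integrableOn_Ioo_of_le hs₁c.le] at hφint
        exact hφint
      apply Integrable.mono hφ
      · exact (hgcont.mono (fun t ht => ⟨by linarith [ht.1, hs₁0], ht.2⟩)).aestronglyMeasurable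
          measurableSet_Ioo
      · filter_upwards [ae_restrict_mem measurableSet_Ioo] with s hs
        have h0 : 0 ≤ g s := hgnonneg s ⟨le_trans hs₁0 hs.1.le, hs.2⟩
        rw [Real.norm_of_nonneg h0, Real.norm_of_nonneg (mul_nonneg
          (Real.rpow_nonneg (by positivity) _) (Real.rpow_nonneg (by linarith [hs.2]) _))]
        exact hgb s hs
    have hgint0 : IntegrableOn g (Set.Icc 0 s₁) := by
      apply ContinuousOn.integrableOn_Icc
      exact hgcont.mono (fun t ht => ⟨by linarith [ht.1], lt_of_le_of_lt ht.2 hs₁c⟩)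
    have hgint2 : IntegrableOn g (Set.Icc s₁ c) := by
      rw [integrableOn_Icc_iff_integrableOn_Ioo]
      exact hgint1
    rw [Set.uIcc_of_le hc.le]
    exact (IntegrableOn.union hgint0 hgint2).mono_set
      (fun t ht => by
        by_cases hcase : t ≤ s₁
        · exact Or.inl ⟨ht.1, hcase⟩
        · exact Or.inr ⟨le_of_not_ge hcase, ht.2⟩)
  have hGcont : ContinuousOn G (Set.Icc 0 c) := by
    have := intervalIntegral.continuousOn_primitive_interval (a := (0:ℝ)) (b := c)
      (μ := volume) (f := g) hgint
    rwa [Set.uIcc_of_le hc.le] at this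
  -- ### choice of ε₀
  refine ⟨c ^ lam⁻¹, Real.rpow_pos_of_pos hc _, ?_, ?_⟩
  · -- per-ε properties
    intro ε hε
    intro A h
    have hεpos : 0 < ε := hε.1
    have htpos : 0 < ε ^ lam := Real.rpow_pos_of_pos hεpos _
    have htc : ε ^ lam < c := by
      calc ε ^ lam < (c ^ lam⁻¹) ^ lam :=
            Real.rpow_lt_rpow hεpos.le hε.2 hlam
        _ = c := by rw [← Real.rpow_mul hc.le, inv_mul_cancel₀ hlam.ne', Real.rpow_one]
    set t : ℝ := ε ^ lam with ht
    set b : ℝ := c - t with hbdef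
    have hb0 : 0 < b := by simp only [hbdef]; linarith
    have hbc : b < c := by simp only [hbdef]; linarith
    have hbmem : b ∈ Set.Ioo (-c) c := ⟨by linarith, hbc⟩
    have hA : A = 2 * b / M := rfl
    have hApos : 0 < A := by rw [hA]; positivity
    have hAM : A * M = 2 * b := by rw [hA]; field_simp
    have hmaps : ∀ η ∈ Set.Icc (0:ℝ) M, A * η - c + t ∈ Set.Icc (-b) b := by
      rintro η ⟨hη0, hηM⟩
      constructor
      · nlinarith
      · nlinarith
    have hmaps' : ∀ η ∈ Set.Icc (0:ℝ) M, A * η - c + t ∈ Set.Ioo (-c) c := by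
      intro η hη
      obtain ⟨h1, h2⟩ := hmaps η hη
      exact ⟨by linarith, by linarith⟩
    have hval : ∀ η, h η = (1 / A) * (G (A * η - c + t) - G b) := fun η => rfl
    refine ⟨?_, ?_, ?_, ?_, ?_, ?_⟩
    · -- smoothness
      have hinner : ContDiff ℝ 3 (fun η : ℝ => A * η - c + ε ^ lam) :=
        ((contDiff_const.mul contDiff_id).sub contDiff_const).add contDiff_const
      exact contDiffOn_const.mul
        ((hGC3.comp hinner.contDiffOn (fun η hη => hmaps' η hη)).sub contDiffOn_const)
    · -- h 0 = 0
      rw [hval, show A * 0 - c + t = -b by simp [hbdef]; ring, heven b hbmem, sub_self, mul_zero]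
    · -- h M = 0
      rw [hval, show A * M - c + t = b by rw [hAM]; simp [hbdef]; ring, sub_self, mul_zero]
    · -- symmetry
      intro η hη
      rw [hval, hval, show A * (M - η) - c + t = -(A * η - c + t) by rw [mul_sub, hAM]; ring,
        heven _ (hmaps' η hη)]
    · -- minimality
      intro η hη
      rw [hval, hval, show A * (M/2) - c + t = 0 by rw [show A * (M/2) = A * M / 2 by ring, hAM]; ring,
        hG0]
      have h1 : 0 ≤ G (A * η - c + t) := hGnn _ (hmaps' η hη)
      have h2 : 0 < 1 / A := by positivity
      nlinarith
    · -- value at M/2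
      rw [hval, show A * (M/2) - c + t = 0 by rw [show A * (M/2) = A * M / 2 by ring, hAM]; ring,
        hG0]
      field_simp
      ring
  · -- ### the limit
    have hpow : Filter.Tendsto (fun ε : ℝ => ε ^ lam) (nhdsWithin 0 (Set.Ioi 0)) (nhds 0) := by
      have h1 : ContinuousAt (fun x : ℝ => x ^ lam) 0 :=
        Real.continuousAt_rpow_const 0 lam (Or.inr hlam.le)
      have h2 := h1.tendsto
      rw [Real.zero_rpow hlam.ne'] at h2
      exact h2.mono_left nhdsWithin_le_nhds
    have hb : Filter.Tendsto (fun ε : ℝ => c - ε ^ lam) (nhdsWithin 0 (Set.Ioi 0)) (nhds c) := by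
      simpa using tendsto_const_nhds.sub hpow
    have hev : ∀ᶠ ε in nhdsWithin (0:ℝ) (Set.Ioi 0), c - ε ^ lam ∈ Set.Icc 0 c := by
      filter_upwards [hpow.eventually (eventually_le_nhds hc), self_mem_nhdsWithin] with ε h1 h2
      exact ⟨by linarith, by simp only [sub_le_self_iff]; exact Real.rpow_nonneg (le_of_lt h2) _⟩
    have hbw : Filter.Tendsto (fun ε : ℝ => c - ε ^ lam) (nhdsWithin 0 (Set.Ioi 0))
        (nhdsWithin c (Set.Icc 0 c)) :=
      tendsto_nhdsWithin_of_tendsto_nhds_of_eventually_within _ hb hev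
    have hGc : Filter.Tendsto (fun ε : ℝ => G (c - ε ^ lam)) (nhdsWithin 0 (Set.Ioi 0))
        (nhds (G c)) := (hGcont c (Set.right_mem_Icc.2 hc.le)).tendsto.comp hbw
    have hden : Filter.Tendsto (fun ε : ℝ => 2 * (c - ε ^ lam) / M) (nhdsWithin 0 (Set.Ioi 0))
        (nhds (2 * c / M)) := ((tendsto_const_nhds.mul hb).div_const M)
    have hne : 2 * c / M ≠ 0 := by positivity
    have hfinal := (hGc.neg.div hden hne)
    convert hfinal using 2
    · rfl
    · rw [div_div_eq_mul_div]; ring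
end

section
/- Let 0 < M ≤ 2c/a, κ̄ ∈ (0, M), and let σ satisfy a·(κ̄ − M/2) ≤ σ ≤ c + a·(κ̄ − M). Define H(κ) := G( a·(M − κ̄) + σ ) − G( a·(κ − κ̄) + σ ) for κ ∈ [0, M] (all arguments of G lie in [−c, c]). Then H(M) = 0 and H(κ) > 0 for every κ ∈ (0, M). -/
open Set MeasureTheory intervalIntegral Filter

set_option maxHeartbeats 1000000 in
theorem stmt_16 (c α : ℝ) (hc : 0 < c) (hα : 2 ≤ α)
    (Φ : ℝ → ℝ) (hΦ : ContDiff ℝ 2 Φ)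
    (hodd : ∀ y : ℝ, Φ (-y) = -Φ y)
    (hΦ' : ∀ y : ℝ, 0 < deriv Φ y)
    (hlim : Filter.Tendsto Φ Filter.atTop (nhds c))
    (C₀ y₀ : ℝ) (hC₀ : 0 < C₀) (hy₀ : 0 < y₀)
    (hdecay : ∀ y : ℝ, y₀ ≤ y → deriv Φ y ≤ C₀ * y ^ (-α - 1))
    (a : ℝ) (ha : 0 < a) (M κb σ : ℝ)
    (hM : 0 < M) (hM2 : M ≤ 2 * c / a) (hκb : κb ∈ Set.Ioo (0:ℝ) M)
    (hσ1 : a * (κb - M / 2) ≤ σ) (hσ2 : σ ≤ c + a * (κb - M)) :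
    let g : ℝ → ℝ := Function.invFun Φ
    let G : ℝ → ℝ := fun u => ∫ s in (0:ℝ)..u, g s
    let H : ℝ → ℝ := fun κ => G (a * (M - κb) + σ) - G (a * (κ - κb) + σ)
    H M = 0 ∧ ∀ κ ∈ Set.Ioo (0:ℝ) M, 0 < H κ := by
  intro g G H
  have hαpos : (0:ℝ) < α := by linarith
  have hmono : StrictMono Φ := strictMono_of_deriv_pos hΦ'
  have hΦ0 : Φ 0 = 0 := by have h := hodd 0; rw [neg_zero] at h; linarith
  have hcont : Continuous Φ := hΦ.continuous
  have hle : ∀ y, Φ y ≤ c := fun y =>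
    ge_of_tendsto hlim (Filter.eventually_atTop.2 ⟨y, fun z hz => hmono.monotone hz⟩)
  have hltc : ∀ y, Φ y < c := fun y => lt_of_lt_of_le (hmono (lt_add_one y)) (hle _)
  have hgtc : ∀ y, -c < Φ y := by
    intro y
    have h := hodd (-y); rw [neg_neg] at h
    have h2 := hltc (-y); linarith
  have hsurj : ∀ u, -c < u → u < c → ∃ y, Φ y = u := by
    intro u hu1 hu2
    obtain ⟨b, hb⟩ := (hlim.eventually (eventually_gt_nhds hu2)).exists
    obtain ⟨b', hb'⟩ := (hlim.eventually (eventually_gt_nhds (by linarith : -u < c))).exists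
    have h1 : Φ (-b') < u := by have := hodd b'; linarith
    have hbb : -b' ≤ b := le_of_lt (hmono.lt_iff_lt.1 (h1.trans hb))
    obtain ⟨y, _, hy⟩ := intermediate_value_Icc hbb hcont.continuousOn ⟨h1.le, hb.le⟩
    exact ⟨y, hy⟩
  have hgΦ : ∀ y, g (Φ y) = y := fun y => Function.leftInverse_invFun hmono.injective y
  have hΦg : ∀ u, -c < u → u < c → Φ (g u) = u := fun u h1 h2 =>
    Function.invFun_eq (hsurj u h1 h2)
  have hgpos : ∀ u, 0 < u → u < c → 0 < g u := by
    intro u h1 h2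
    by_contra hneg
    push_neg at hneg
    have h3 : Φ (g u) ≤ Φ 0 := hmono.monotone hneg
    rw [hΦ0, hΦg u (by linarith) h2] at h3
    linarith
  have hgmono : ∀ u v, -c < u → u ≤ v → v < c → g u ≤ g v := by
    intro u v h1 h2 h3
    refine hmono.le_iff_le.1 ?_
    rw [hΦg u h1 (h2.trans_lt h3), hΦg v (h1.trans_le h2) h3]
    exact h2
  have hgodd : ∀ u, -c < u → u < c → g (-u) = -g u := by
    intro u h1 h2
    apply hmono.injective
    rw [hΦg (-u) (by linarith) (by linarith), hodd (g u), hΦg u h1 h2]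
  -- decay estimate
  set K := C₀ / α with hKdef
  have hK : (0:ℝ) < K := div_pos hC₀ hαpos
  have hdec2 : ∀ y, y₀ ≤ y → c - Φ y ≤ K * y ^ (-α) := by
    intro y hy
    have hypos : 0 < y := lt_of_lt_of_le hy₀ hy
    have key : ∀ z, y ≤ z → Φ z ≤ Φ y + K * y ^ (-α) := by
      intro z hz
      have hzpos : 0 < z := lt_of_lt_of_le hypos hz
      have hderivcont : ContinuousOn (deriv Φ) (uIcc y z) :=
        (hΦ.continuous_deriv (by norm_num)).continuousOn
      have hftc : Φ z - Φ y = ∫ s in y..z, deriv Φ s :=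
        (integral_deriv_eq_sub
          (fun x _ => (hΦ.differentiable (by norm_num)).differentiableAt)
          hderivcont.intervalIntegrable).symm
      have h0not : (0:ℝ) ∉ uIcc y z := notMem_uIcc_of_lt hypos hzpos
      have hint2 : IntervalIntegrable (fun s => C₀ * s ^ (-α - 1)) volume y z :=
        (intervalIntegrable_rpow (Or.inr h0not)).const_mul C₀
      have hcmp : (∫ s in y..z, deriv Φ s) ≤ ∫ s in y..z, C₀ * s ^ (-α - 1) := by
        apply integral_mono_on hz hderivcont.intervalIntegrable hint2
        intro s hs
        exact hdecay s (le_trans hy hs.1)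
      have hval : (∫ s in y..z, C₀ * s ^ (-α - 1))
          = C₀ * ((z ^ (-α) - y ^ (-α)) / (-α)) := by
        rw [intervalIntegral.integral_const_mul,
          integral_rpow (Or.inr ⟨by intro h; linarith [hα], h0not⟩)]
        have he : -α - 1 + 1 = -α := by ring
        rw [he]
      have hzB : 0 ≤ z ^ (-α) := Real.rpow_nonneg hzpos.le _
      have hyB : 0 ≤ y ^ (-α) := Real.rpow_nonneg hypos.le _
      have hfin : C₀ * ((z ^ (-α) - y ^ (-α)) / (-α)) ≤ K * y ^ (-α) := by
        have h1 : C₀ * ((z ^ (-α) - y ^ (-α)) / (-α))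
            = C₀ * (y ^ (-α) - z ^ (-α)) / α := by
          rw [div_neg, ← neg_div, neg_sub, ← mul_div_assoc]
        have h2 : K * y ^ (-α) = C₀ * y ^ (-α) / α := by
          rw [hKdef]; ring
        rw [h1, h2]
        exact (div_le_div_iff_of_pos_right hαpos).2 (by nlinarith)
      linarith
    have hfinal : c ≤ Φ y + K * y ^ (-α) :=
      le_of_tendsto hlim (Filter.eventually_atTop.2 ⟨y, key⟩)
    linarith
  -- bound on g near c
  have hgbd : ∀ u, Φ y₀ ≤ u → u < c → y₀ ≤ g u ∧ g u ≤ (K / (c - u)) ^ (α⁻¹) := by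
    intro u h1 h2
    have hu1 : -c < u := lt_of_lt_of_le (hgtc y₀) h1
    have hw : Φ (g u) = u := hΦg u hu1 h2
    have hwy : y₀ ≤ g u := by
      refine hmono.le_iff_le.1 ?_
      rw [hw]; exact h1
    refine ⟨hwy, ?_⟩
    have hwpos : 0 < g u := lt_of_lt_of_le hy₀ hwy
    have hd : c - u ≤ K * g u ^ (-α) := by
      have := hdec2 (g u) hwy; rwa [hw] at this
    have hcu : 0 < c - u := by linarith
    have hgα : 0 < g u ^ α := Real.rpow_pos_of_pos hwpos _
    have hpow : g u ^ α ≤ K / (c - u) := by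
      rw [le_div_iff₀ hcu]
      have hneg : g u ^ (-α) = (g u ^ α)⁻¹ := Real.rpow_neg hwpos.le _
      rw [hneg] at hd
      calc g u ^ α * (c - u) ≤ g u ^ α * (K * (g u ^ α)⁻¹) := by
            apply mul_le_mul_of_nonneg_left hd hgα.le
        _ = K := by field_simp
    calc g u = (g u ^ α) ^ α⁻¹ := (Real.rpow_rpow_inv hwpos.le (by linarith)).symm
      _ ≤ (K / (c - u)) ^ α⁻¹ :=
          Real.rpow_le_rpow hgα.le hpow (by positivity)
  -- integrability
  have key : ∀ p q : ℝ, -c < p → p < c → q ≤ c → IntegrableOn g (Set.Ioc p q) := by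
    intro p q hp hpc hq
    set t := max (max (Φ y₀) 0) p with ht
    have htp : p ≤ t := le_max_right _ _
    have ht0 : (0:ℝ) ≤ t := le_trans (le_max_right _ _) (le_max_left _ _)
    have htΦ : Φ y₀ ≤ t := le_trans (le_max_left _ _) (le_max_left _ _)
    have htc : t < c := max_lt (max_lt (hltc y₀) hc) hpc
    have htg : -c < t := by linarith
    have h1 : IntegrableOn g (Set.Ioc p t) := by
      have hmono1 : MonotoneOn g (Set.Icc p t) := fun u hu v hv huv =>
        hgmono u v (lt_of_lt_of_le hp hu.1) huv (lt_of_le_of_lt hv.2 htc)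
      exact (hmono1.integrableOn_isCompact isCompact_Icc).mono_set Set.Ioc_subset_Icc_self
    have h2 : IntegrableOn g (Set.Ioc t c) := by
      have hexp : (-1:ℝ) < -α⁻¹ := by
        have : α⁻¹ < 1 := inv_lt_one_of_one_lt₀ (by linarith)
        linarith
      have hdom : IntervalIntegrable (fun u => K ^ α⁻¹ * (c - u) ^ (-α⁻¹)) volume t c := by
        have h0 : IntervalIntegrable (fun x : ℝ => x ^ (-α⁻¹)) volume (c - t) 0 :=
          intervalIntegrable_rpow' hexp
        have h0' := h0.comp_sub_left c
        have he1 : c - (c - t) = t := by ring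
        have he2 : c - (0:ℝ) = c := by ring
        rw [he1, he2] at h0'
        exact h0'.const_mul _
      have hdom' : IntegrableOn (fun u => K ^ α⁻¹ * (c - u) ^ (-α⁻¹)) (Set.Ioo t c) := by
        have := intervalIntegrable_iff.1 hdom
        rw [Set.uIoc_of_le htc.le] at this
        exact this.mono_set Set.Ioo_subset_Ioc_self
      have hmeas : AEMeasurable g (volume.restrict (Set.Ioo t c)) :=
        aemeasurable_restrict_of_monotoneOn measurableSet_Ioo
          (fun u hu v hv huv => hgmono u v (lt_of_le_of_lt htg.le hu.1) huv hv.2)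
      have h2' : IntegrableOn g (Set.Ioo t c) := by
        apply Integrable.mono' hdom' hmeas.aestronglyMeasurable
        rw [ae_restrict_iff' measurableSet_Ioo]
        filter_upwards with u hu
        obtain ⟨hb1, hb2⟩ := hgbd u (le_trans htΦ hu.1.le) hu.2
        rw [Real.norm_eq_abs, abs_of_pos (lt_of_lt_of_le hy₀ hb1)]
        have hcu : (0:ℝ) < c - u := by linarith [hu.2]
        calc g u ≤ (K / (c - u)) ^ α⁻¹ := hb2
          _ = K ^ α⁻¹ * (c - u) ^ (-α⁻¹) := by
              rw [Real.div_rpow hK.le hcu.le, Real.rpow_neg hcu.le, div_eq_mul_inv]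
      exact h2'.congr_set_ae Ioo_ae_eq_Ioc.symm
    have hsub : Set.Ioc p q ⊆ Set.Ioc p t ∪ Set.Ioc t c := by
      intro u hu
      rcases le_or_gt u t with h | h
      · exact Or.inl ⟨hu.1, h⟩
      · exact Or.inr ⟨h, le_trans hu.2 hq⟩
    exact (h1.union h2).mono_set hsub
  have hII : ∀ p q : ℝ, -c < p → p < c → -c < q → q ≤ c → IntervalIntegrable g volume p q := by
    intro p q hp1 hp2 hq1 hq2
    rw [intervalIntegrable_iff]
    rcases le_total p q with h | h
    · rw [Set.uIoc_of_le h]; exact key p q hp1 hp2 hq2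
    · rw [Set.uIoc_comm, Set.uIoc_of_le h]
      exact key q p hq1 (lt_of_le_of_lt h hp2) hp2.le
  constructor
  · show G (a * (M - κb) + σ) - G (a * (M - κb) + σ) = 0
    exact sub_self _
  · intro κ hκ
    obtain ⟨hκ1, hκ2⟩ := hκ
    obtain ⟨hκb1, hκb2⟩ := hκb
    show 0 < G (a * (M - κb) + σ) - G (a * (κ - κb) + σ)
    set x := a * (M - κb) + σ with hxdef
    set y := a * (κ - κb) + σ with hydef
    have hac : M * a ≤ 2 * c := (le_div_iff₀ ha).1 hM2
    have hxc : x ≤ c := by rw [hxdef]; nlinarith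
    have hxm : a * M / 2 ≤ x := by rw [hxdef]; nlinarith
    have hxpos : 0 < x := by nlinarith
    have hyx : y < x := by rw [hxdef, hydef]; nlinarith
    have hyg : -(a * M / 2) < y := by rw [hydef]; nlinarith
    have hcy : -c < y := by nlinarith
    have hyc : y < c := lt_of_lt_of_le hyx hxc
    have hmy : |y| < x := abs_lt.2 ⟨by nlinarith, hyx⟩
    set m := |y| with hmdef
    have hm0 : 0 ≤ m := abs_nonneg y
    have hmc : m < c := lt_of_lt_of_le hmy hxc
    have hI0x : IntervalIntegrable g volume 0 x :=
      hII 0 x (by linarith) hc (by linarith) hxc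
    have hI0y : IntervalIntegrable g volume 0 y :=
      hII 0 y (by linarith) hc hcy hyc.le
    have hIym : IntervalIntegrable g volume y m :=
      hII y m hcy hyc (by linarith) hmc.le
    have hImx : IntervalIntegrable g volume m x :=
      hII m x (by linarith) hmc (by linarith) hxc
    have hsub : G x - G y = ∫ s in y..x, g s := integral_interval_sub_left hI0x hI0y
    have hsplit : (∫ s in y..m, g s) + ∫ s in m..x, g s = ∫ s in y..x, g s :=
      integral_add_adjacent_intervals hIym hImx
    have hzero : (∫ s in y..m, g s) = 0 := by
      rcases le_or_gt 0 y with h | h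
      · rw [hmdef, abs_of_nonneg h, intervalIntegral.integral_same]
      · have hmy' : m = -y := abs_of_neg h
        rw [hmy']
        have hmyc : -y < c := by rw [← hmy']; exact hmc
        have hcong : Set.EqOn g (fun s => -g (-s)) (Set.uIcc y (-y)) := by
          intro s hs
          rw [Set.uIcc_of_le (by linarith : y ≤ -y)] at hs
          have h1 : -c < s := lt_of_lt_of_le hcy hs.1
          have h2 : s < c := lt_of_le_of_lt hs.2 hmyc
          have := hgodd (-s) (by linarith) (by linarith)
          rw [neg_neg] at this
          simp only [this]
        have heq : (∫ s in y..(-y), g s) = ∫ s in y..(-y), -g (-s) :=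
          intervalIntegral.integral_congr hcong
        rw [intervalIntegral.integral_neg] at heq
        have hcn : (∫ s in y..(-y), g (-s)) = ∫ s in -(-y)..(-y), g s :=
          intervalIntegral.integral_comp_neg g
        rw [neg_neg] at hcn
        rw [hcn] at heq
        linarith
    have hpos : 0 < ∫ s in m..x, g s := by
      apply intervalIntegral_pos_of_pos_on hImx
      · intro s hs
        exact hgpos s (lt_of_le_of_lt hm0 hs.1) (lt_of_lt_of_le hs.2 hxc)
      · exact hmy
    linarith
end

section
/- Let 0 < M ≤ 2c/a, κ̄ ∈ (0, M), and let σ satisfy a·(κ̄ − M/2) ≤ σ ≤ c + a·(κ̄ − M). Define U(κ) := [ ((m+1)/a)·( G(a·(M − κ̄) + σ) − G(a·(κ − κ̄) + σ) ) ]^{1/(m+1)} for κ ∈ [0, M]. Then: the quantity inside the brackets is nonnegative on [0,M], so U is well defined; U is continuous on [0, M] and continuously differentiable on (0, M); U(M) = 0 and U(κ) > 0 for all κ ∈ (0, M); and U(κ)^m·U'(κ) = −g( a·(κ − κ̄) + σ ) for every κ ∈ (0, M). Consequently, if ξ₋ ∈ ℝ, ξ₊ ∈ (ξ₋, +∞],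 and κ : [ξ₋, ξ₊) → [0, M) is a continuously differentiable solution of κ'(ξ) = U(κ(ξ)) with κ(ξ₋) = 0 and κ(ξ) → M as ξ → ξ₊, then υ := U ∘ κ satisfies κ'(ξ) = υ(ξ) and υ(ξ)^{m−1}·υ'(ξ) = −g( a·(κ(ξ) − κ̄) + σ ) for all ξ ∈ (ξ₋, ξ₊) with υ(ξ) > 0, and υ(ξ) → 0 as ξ → ξ₊. -/
open Set Filter MeasureTheory intervalIntegral Function

section aux
variable {c : ℝ} {Φ : ℝ → ℝ}

lemma phi_mono (hΦ' : ∀ y : ℝ, 0 < deriv Φ y) : StrictMono Φ :=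
  strictMono_of_deriv_pos hΦ'

lemma phi_lt (hΦc : Continuous Φ) (hmono : StrictMono Φ)
    (hlim : Tendsto Φ atTop (nhds c)) : ∀ y, Φ y < c := by
  intro y
  have h1 : Φ (y+1) ≤ c := by
    refine ge_of_tendsto hlim ?_
    filter_upwards [eventually_ge_atTop (y+1)] with z hz
    exact hmono.monotone hz
  linarith [hmono (show y < y + 1 by linarith)]

lemma phi_bot (hodd : ∀ y : ℝ, Φ (-y) = -Φ y)
    (hlim : Tendsto Φ atTop (nhds c)) : Tendsto Φ atBot (nhds (-c)) := by
  have : Tendsto (fun y => -Φ (-y)) atBot (nhds (-c)) := by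
    exact (hlim.comp tendsto_neg_atBot_atTop).neg
  refine this.congr fun y => ?_
  rw [hodd]; ring

lemma phi_zero (hodd : ∀ y : ℝ, Φ (-y) = -Φ y) : Φ 0 = 0 := by
  have := hodd 0; simp at this; linarith

lemma phi_range (hc : 0 < c) (hΦc : Continuous Φ) (hmono : StrictMono Φ)
    (hodd : ∀ y : ℝ, Φ (-y) = -Φ y)
    (hlim : Tendsto Φ atTop (nhds c)) : Set.range Φ = Ioo (-c) c := by
  apply Set.eq_of_subset_of_subset
  · rintro u ⟨y, rfl⟩
    refine ⟨?_, phi_lt hΦc hmono hlim y⟩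
    have := phi_lt hΦc hmono hlim (-y)
    rw [hodd] at this; linarith
  · rintro u ⟨hu1, hu2⟩
    have hbot := phi_bot hodd hlim
    obtain ⟨y1, hy1⟩ := (hbot.eventually (eventually_lt_nhds hu1)).exists
    obtain ⟨y2, hy2⟩ := (hlim.eventually (eventually_gt_nhds hu2)).exists
    have hle : y1 ≤ y2 := by
      by_contra h
      exact absurd (hmono (not_le.mp h)) (by linarith)
    obtain ⟨y, _, hy⟩ := intermediate_value_Icc hle hΦc.continuousOn
      (show u ∈ Icc (Φ y1) (Φ y2) from ⟨hy1.le, hy2.le⟩)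
    exact ⟨y, hy⟩

end aux

section ginv
variable {c u : ℝ} {Φ : ℝ → ℝ}

lemma g_phi (hmono : StrictMono Φ) : ∀ y, Function.invFun Φ (Φ y) = y :=
  Function.leftInverse_invFun hmono.injective

lemma phi_g (hrange : Set.range Φ = Ioo (-c) c) (hu : u ∈ Ioo (-c) c) :
    Φ (Function.invFun Φ u) = u := by
  apply Function.invFun_eq
  rw [← Set.mem_range, hrange]; exact hu

lemma g_strictMonoOn (hmono : StrictMono Φ) (hrange : Set.range Φ = Ioo (-c) c) :
    StrictMonoOn (Function.invFun Φ) (Ioo (-c) c) := by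
  intro u hu v hv huv
  have h1 := phi_g hrange hu
  have h2 := phi_g hrange hv
  by_contra h
  have := hmono.monotone (not_lt.mp h)
  rw [h1, h2] at this; linarith

lemma g_image (hmono : StrictMono Φ) (hrange : Set.range Φ = Ioo (-c) c) :
    Function.invFun Φ '' (Ioo (-c) c) = univ := by
  apply Set.eq_univ_of_forall
  intro y
  exact ⟨Φ y, by rw [← hrange]; exact ⟨y, rfl⟩, g_phi hmono y⟩

lemma g_continuousAt (hmono : StrictMono Φ) (hrange : Set.range Φ = Ioo (-c) c)
    (hu : u ∈ Ioo (-c) c) : ContinuousAt (Function.invFun Φ) u := by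
  refine (g_strictMonoOn hmono hrange).continuousAt_of_image_mem_nhds
    (isOpen_Ioo.mem_nhds hu) ?_
  rw [g_image hmono hrange]
  exact univ_mem

lemma g_zero (hmono : StrictMono Φ) (hodd : ∀ y : ℝ, Φ (-y) = -Φ y) :
    Function.invFun Φ 0 = 0 := by
  have h0 := phi_zero hodd
  have h := g_phi hmono 0
  rwa [h0] at h

lemma g_odd (hmono : StrictMono Φ) (hrange : Set.range Φ = Ioo (-c) c)
    (hodd : ∀ y : ℝ, Φ (-y) = -Φ y) (hu : u ∈ Ioo (-c) c) :
    Function.invFun Φ (-u) = -Function.invFun Φ u := by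
  have h1 : Φ (-Function.invFun Φ u) = -u := by
    have := hodd (Function.invFun Φ u)
    rw [this, phi_g hrange hu]
  calc Function.invFun Φ (-u) = Function.invFun Φ (Φ (-Function.invFun Φ u)) := by rw [h1]
    _ = -Function.invFun Φ u := g_phi hmono _

lemma g_pos (hmono : StrictMono Φ) (hrange : Set.range Φ = Ioo (-c) c)
    (hodd : ∀ y : ℝ, Φ (-y) = -Φ y) (hc : 0 < c) (hu : u ∈ Ioo (0:ℝ) c) :
    0 < Function.invFun Φ u := by
  have h0 : (0:ℝ) ∈ Ioo (-c) c := by constructor <;> linarith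
  have hu' : u ∈ Ioo (-c) c := ⟨by linarith [hu.1], hu.2⟩
  have := g_strictMonoOn hmono hrange h0 hu' hu.1
  rwa [g_zero hmono hodd] at this

lemma g_nonneg (hmono : StrictMono Φ) (hrange : Set.range Φ = Ioo (-c) c)
    (hodd : ∀ y : ℝ, Φ (-y) = -Φ y) (hc : 0 < c) (hu : u ∈ Ico (0:ℝ) c) :
    0 ≤ Function.invFun Φ u := by
  rcases eq_or_lt_of_le hu.1 with h | h
  · rw [← h, g_zero hmono hodd]
  · exact (g_pos hmono hrange hodd hc ⟨h, hu.2⟩).le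

end ginv

section integ
variable {c α C₀ y₀ : ℝ} {Φ : ℝ → ℝ}

lemma F_integrable (hα : 2 ≤ α) (hΦ : ContDiff ℝ 2 Φ)
    (hΦ' : ∀ y : ℝ, 0 < deriv Φ y) (hC₀ : 0 < C₀) (hy₀ : 0 < y₀)
    (hdecay : ∀ y : ℝ, y₀ ≤ y → deriv Φ y ≤ C₀ * y ^ (-α - 1)) :
    IntegrableOn (fun y => |deriv Φ y| * y) (Ioi (0:ℝ)) := by
  have hcd : Continuous (deriv Φ) := hΦ.continuous_deriv (by norm_num)
  have hsplit : Ioc (0:ℝ) y₀ ∪ Ioi y₀ = Ioi (0:ℝ) := Set.Ioc_union_Ioi_eq_Ioi hy₀.le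
  rw [← hsplit]
  apply MeasureTheory.IntegrableOn.union
  · exact ((hcd.abs.mul continuous_id).integrableOn_Ioc)
  · have hmaj : IntegrableOn (fun x : ℝ => C₀ * x ^ (-α)) (Ioi y₀) :=
      (integrableOn_Ioi_rpow_of_lt (by linarith) hy₀).const_mul C₀
    refine MeasureTheory.Integrable.mono hmaj ((hcd.abs.mul continuous_id).aestronglyMeasurable.restrict) ?_
    rw [ae_restrict_iff' measurableSet_Ioi]
    filter_upwards with x hx
    have hx0 : 0 < x := lt_of_lt_of_le hy₀ (le_of_lt hx)
    have h1 : |deriv Φ x| * x ≤ C₀ * x ^ (-α) := by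
      have hd := hdecay x hx.le
      have : x ^ (-α) = x ^ (-α - 1) * x := by
        rw [← Real.rpow_add_one (ne_of_gt hx0) (-α - 1)]; ring_nf
      rw [this, abs_of_pos (hΦ' x)]
      calc deriv Φ x * x ≤ C₀ * x ^ (-α - 1) * x := by nlinarith
        _ = C₀ * (x ^ (-α - 1) * x) := by ring
    have h2 : (0:ℝ) ≤ |deriv Φ x| * x := mul_nonneg (abs_nonneg _) hx0.le
    rw [Real.norm_eq_abs, Real.norm_eq_abs, abs_of_nonneg h2, abs_of_nonneg (by positivity : (0:ℝ) ≤ C₀ * x ^ (-α))]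
    exact h1

end integ

section integ2
variable {c α C₀ y₀ : ℝ} {Φ : ℝ → ℝ}

lemma phi_image_Ioi (hc : 0 < c) (hmono : StrictMono Φ)
    (hrange : Set.range Φ = Ioo (-c) c) (hodd : ∀ y : ℝ, Φ (-y) = -Φ y) :
    Φ '' (Ioi 0) = Ioo 0 c := by
  apply Set.eq_of_subset_of_subset
  · rintro u ⟨y, hy, rfl⟩
    have h1 : Φ y ∈ Ioo (-c) c := by rw [← hrange]; exact ⟨y, rfl⟩
    have h2 : Φ 0 < Φ y := hmono hy
    rw [phi_zero hodd] at h2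
    exact ⟨h2, h1.2⟩
  · rintro u ⟨hu1, hu2⟩
    have hu : u ∈ Ioo (-c) c := ⟨by linarith, hu2⟩
    refine ⟨Function.invFun Φ u, ?_, phi_g hrange hu⟩
    exact g_pos hmono hrange hodd hc ⟨hu1, hu2⟩

lemma g_intInt_pos (hc : 0 < c) (hα : 2 ≤ α) (hΦ : ContDiff ℝ 2 Φ)
    (hΦ' : ∀ y : ℝ, 0 < deriv Φ y) (hodd : ∀ y : ℝ, Φ (-y) = -Φ y)
    (hmono : StrictMono Φ) (hrange : Set.range Φ = Ioo (-c) c)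
    (hC₀ : 0 < C₀) (hy₀ : 0 < y₀)
    (hdecay : ∀ y : ℝ, y₀ ≤ y → deriv Φ y ≤ C₀ * y ^ (-α - 1)) :
    IntervalIntegrable (Function.invFun Φ) volume 0 c := by
  rw [intervalIntegrable_iff_integrableOn_Ioo_of_le hc.le]
  rw [← phi_image_Ioi hc hmono hrange hodd]
  rw [integrableOn_image_iff_integrableOn_abs_deriv_smul measurableSet_Ioi
    (fun x _ => ((hΦ.differentiable (by norm_num)).differentiableAt.hasDerivAt).hasDerivWithinAt)
    (hmono.injective.injOn) (Function.invFun Φ)]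
  have : (fun x => |deriv Φ x| • Function.invFun Φ (Φ x)) = fun x => |deriv Φ x| * x := by
    funext x; rw [g_phi hmono x, smul_eq_mul]
  rw [this]
  exact F_integrable hα hΦ hΦ' hC₀ hy₀ hdecay

lemma g_intInt_neg (hc : 0 < c) (hα : 2 ≤ α) (hΦ : ContDiff ℝ 2 Φ)
    (hΦ' : ∀ y : ℝ, 0 < deriv Φ y) (hodd : ∀ y : ℝ, Φ (-y) = -Φ y)
    (hmono : StrictMono Φ) (hrange : Set.range Φ = Ioo (-c) c)
    (hC₀ : 0 < C₀) (hy₀ : 0 < y₀)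
    (hdecay : ∀ y : ℝ, y₀ ≤ y → deriv Φ y ≤ C₀ * y ^ (-α - 1)) :
    IntervalIntegrable (Function.invFun Φ) volume (-c) 0 := by
  have hpos := g_intInt_pos hc hα hΦ hΦ' hodd hmono hrange hC₀ hy₀ hdecay
  have h1 : IntervalIntegrable (fun x => Function.invFun Φ (-x)) volume 0 (-c) := by
    simpa using (IntervalIntegrable.iff_comp_neg (by simp)).mp hpos
  have h2 := (h1.neg).symm
  refine h2.congr_ae ?_
  have huIoc : Set.uIoc (-c) (0:ℝ) = Ioc (-c) 0 := by
    rw [Set.uIoc_of_le (by linarith)]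
  rw [huIoc]
  refine (ae_restrict_iff' measurableSet_Ioc).mpr ?_
  filter_upwards with x hx
  rcases eq_or_lt_of_le hx.2 with h0 | h0
  · simp [h0, g_zero hmono hodd]
  · have hxm : -x ∈ Ioo (-c) c := ⟨by linarith, by linarith [hx.1]⟩
    have h3 := g_odd hmono hrange hodd hxm
    rw [neg_neg] at h3
    simp only [Pi.neg_apply]
    rw [← h3]

lemma g_intInt (hc : 0 < c) (hα : 2 ≤ α) (hΦ : ContDiff ℝ 2 Φ)
    (hΦ' : ∀ y : ℝ, 0 < deriv Φ y) (hodd : ∀ y : ℝ, Φ (-y) = -Φ y)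
    (hmono : StrictMono Φ) (hrange : Set.range Φ = Ioo (-c) c)
    (hC₀ : 0 < C₀) (hy₀ : 0 < y₀)
    (hdecay : ∀ y : ℝ, y₀ ≤ y → deriv Φ y ≤ C₀ * y ^ (-α - 1)) :
    IntervalIntegrable (Function.invFun Φ) volume (-c) c :=
  (g_intInt_neg hc hα hΦ hΦ' hodd hmono hrange hC₀ hy₀ hdecay).trans
    (g_intInt_pos hc hα hΦ hΦ' hodd hmono hrange hC₀ hy₀ hdecay)

end integ2

section Gsec
variable {c : ℝ} {Φ : ℝ → ℝ}

lemma G_cont (hc : 0 < c) (hint : IntervalIntegrable (Function.invFun Φ) volume (-c) c) :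
    ContinuousOn (fun u => ∫ s in (0:ℝ)..u, Function.invFun Φ s) (Icc (-c) c) := by
  have h0 : (0:ℝ) ∈ Set.uIcc (-c) c := by
    rw [Set.uIcc_of_le (by linarith)]
    constructor <;> linarith
  have := continuousOn_primitive_interval' hint h0
  rwa [Set.uIcc_of_le (by linarith : -c ≤ c)] at this

lemma G_hasDeriv (hc : 0 < c) (hmono : StrictMono Φ) (hrange : Set.range Φ = Ioo (-c) c)
    (hint : IntervalIntegrable (Function.invFun Φ) volume (-c) c)
    {x : ℝ} (hx : x ∈ Ioo (-c) c) :
    HasDerivAt (fun u => ∫ s in (0:ℝ)..u, Function.invFun Φ s) (Function.invFun Φ x) x := by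
  have h0c : (0:ℝ) ∈ Set.uIcc (-c) c := by
    rw [Set.uIcc_of_le (by linarith)]; constructor <;> linarith
  have hxc : x ∈ Set.uIcc (-c) c := by
    rw [Set.uIcc_of_le (by linarith)]; exact ⟨hx.1.le, hx.2.le⟩
  have hint' : IntervalIntegrable (Function.invFun Φ) volume 0 x :=
    hint.mono_set (Set.uIcc_subset_uIcc h0c hxc)
  have hca : ContinuousAt (Function.invFun Φ) x := g_continuousAt hmono hrange hx
  have hmeas : StronglyMeasurableAtFilter (Function.invFun Φ) (nhds x) volume :=
    ContinuousOn.stronglyMeasurableAtFilter isOpen_Ioo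
      (fun y hy => (g_continuousAt hmono hrange hy).continuousWithinAt) x hx
  exact intervalIntegral.integral_hasDerivAt_right hint' hmeas hca

end Gsec

section intpos
variable {c : ℝ} {Φ : ℝ → ℝ}

lemma ae_ne_real (p : ℝ) : ∀ᵐ (x:ℝ) ∂(volume : Measure ℝ), x ≠ p := by
  rw [MeasureTheory.ae_iff]
  simp only [ne_eq, not_not]
  rw [show {x : ℝ | x = p} = {p} by ext x; simp]
  exact Real.volume_singleton

lemma int_odd (hc : 0 < c) (hmono : StrictMono Φ) (hrange : Set.range Φ = Ioo (-c) c)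
    (hodd : ∀ y : ℝ, Φ (-y) = -Φ y)
    (hint : IntervalIntegrable (Function.invFun Φ) volume (-c) c)
    {b : ℝ} (hb : b ∈ Icc (0:ℝ) c) :
    (∫ s in (-b)..b, Function.invFun Φ s) = 0 := by
  set g := Function.invFun Φ
  have hmem : ∀ p, p ∈ Icc (-c) c → p ∈ Set.uIcc (-c) c := by
    intro p hp; rw [Set.uIcc_of_le (by linarith)]; exact hp
  have hII : ∀ p q : ℝ, p ∈ Icc (-c) c → q ∈ Icc (-c) c → IntervalIntegrable g volume p q := by
    intro p q hp hq
    exact hint.mono_set (Set.uIcc_subset_uIcc (hmem p hp) (hmem q hq))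
  have hbI : b ∈ Icc (-c) c := ⟨by linarith [hb.1], hb.2⟩
  have hbI' : -b ∈ Icc (-c) c := ⟨by linarith [hb.2], by linarith [hb.1]⟩
  have h0I : (0:ℝ) ∈ Icc (-c) c := ⟨by linarith, by linarith⟩
  have h1 : (∫ s in (-b)..(0:ℝ), g s) = ∫ s in (0:ℝ)..b, g (-s) := by
    rw [intervalIntegral.integral_comp_neg]; norm_num
  have h2 : (∫ s in (0:ℝ)..b, g (-s)) = ∫ s in (0:ℝ)..b, -g s := by
    apply intervalIntegral.integral_congr_ae
    filter_upwards [ae_ne_real c] with x hxc hx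
    rw [Set.uIoc_of_le hb.1] at hx
    have hxo : x ∈ Ioo (-c) c := ⟨by linarith [hx.1], lt_of_le_of_ne (le_trans hx.2 hb.2) hxc⟩
    exact g_odd hmono hrange hodd hxo
  have h3 : (∫ s in (-b)..(0:ℝ), g s) = -∫ s in (0:ℝ)..b, g s := by
    rw [h1, h2, intervalIntegral.integral_neg]
  have h4 := intervalIntegral.integral_add_adjacent_intervals
    (hII (-b) 0 hbI' h0I) (hII 0 b h0I hbI)
  rw [h3] at h4
  rw [← h4]; ring

lemma int_nonneg0 (hc : 0 < c) (hmono : StrictMono Φ) (hrange : Set.range Φ = Ioo (-c) c)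
    (hodd : ∀ y : ℝ, Φ (-y) = -Φ y)
    (hint : IntervalIntegrable (Function.invFun Φ) volume (-c) c)
    {B A : ℝ} (hB0 : 0 ≤ B) (hBA : B ≤ A) (hA : A ≤ c) :
    0 ≤ ∫ s in B..A, Function.invFun Φ s := by
  apply intervalIntegral.integral_nonneg_of_ae_restrict hBA
  rw [Filter.EventuallyLE]
  rw [ae_restrict_iff' measurableSet_Icc]
  filter_upwards [ae_ne_real c] with x hxc hx
  have hxlt : x < c := lt_of_le_of_ne (le_trans hx.2 hA) hxc
  exact g_nonneg hmono hrange hodd hc ⟨le_trans hB0 hx.1, hxlt⟩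

end intpos

lemma int_nonneg (hc : 0 < c) (hmono : StrictMono Φ) (hrange : Set.range Φ = Ioo (-c) c)
    (hodd : ∀ y : ℝ, Φ (-y) = -Φ y)
    (hint : IntervalIntegrable (Function.invFun Φ) volume (-c) c)
    {B A : ℝ} (hmB : -A ≤ B) (hBA : B ≤ A) (hA : A ≤ c) :
    0 ≤ ∫ s in B..A, Function.invFun Φ s := by
  set g := Function.invFun Φ
  rcases le_or_gt 0 B with h | h
  · exact int_nonneg0 hc hmono hrange hodd hint h hBA hA
  · have hmem : ∀ p, p ∈ Icc (-c) c → p ∈ Set.uIcc (-c) c := by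
      intro p hp; rw [Set.uIcc_of_le (by linarith)]; exact hp
    have hII : ∀ p q : ℝ, p ∈ Icc (-c) c → q ∈ Icc (-c) c → IntervalIntegrable g volume p q := by
      intro p q hp hq
      exact hint.mono_set (Set.uIcc_subset_uIcc (hmem p hp) (hmem q hq))
    have hBc : B ∈ Icc (-c) c := ⟨by linarith, by linarith⟩
    have hmBc : -B ∈ Icc (-c) c := ⟨by linarith, by linarith⟩
    have hAc : A ∈ Icc (-c) c := ⟨by linarith, hA⟩
    have h4 := intervalIntegral.integral_add_adjacent_intervals
      (hII B (-B) hBc hmBc) (hII (-B) A hmBc hAc)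
    rw [← h4]
    have h5 : (∫ s in B..(-B), g s) = 0 := by
      have := int_odd hc hmono hrange hodd hint (b := -B) ⟨by linarith, by linarith⟩
      rwa [neg_neg] at this
    rw [h5, zero_add]
    exact int_nonneg0 hc hmono hrange hodd hint (by linarith) (by linarith) hA

lemma int_pos0 (hc : 0 < c) (hmono : StrictMono Φ) (hrange : Set.range Φ = Ioo (-c) c)
    (hodd : ∀ y : ℝ, Φ (-y) = -Φ y)
    (hint : IntervalIntegrable (Function.invFun Φ) volume (-c) c)
    {B A : ℝ} (hB0 : 0 ≤ B) (hBA : B < A) (hA : A ≤ c) :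
    0 < ∫ s in B..A, Function.invFun Φ s := by
  have hmem : ∀ p, p ∈ Icc (-c) c → p ∈ Set.uIcc (-c) c := by
    intro p hp; rw [Set.uIcc_of_le (by linarith)]; exact hp
  have hII : IntervalIntegrable (Function.invFun Φ) volume B A :=
    hint.mono_set (Set.uIcc_subset_uIcc (hmem B ⟨by linarith, by linarith⟩)
      (hmem A ⟨by linarith, hA⟩))
  refine intervalIntegral.intervalIntegral_pos_of_pos_on hII ?_ hBA
  intro x hx
  exact g_pos hmono hrange hodd hc ⟨lt_of_le_of_lt hB0 hx.1, lt_of_lt_of_le hx.2 hA⟩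

lemma int_pos (hc : 0 < c) (hmono : StrictMono Φ) (hrange : Set.range Φ = Ioo (-c) c)
    (hodd : ∀ y : ℝ, Φ (-y) = -Φ y)
    (hint : IntervalIntegrable (Function.invFun Φ) volume (-c) c)
    {B A : ℝ} (hmB : -A < B) (hBA : B < A) (hA : A ≤ c) :
    0 < ∫ s in B..A, Function.invFun Φ s := by
  set g := Function.invFun Φ
  rcases le_or_gt 0 B with h | h
  · exact int_pos0 hc hmono hrange hodd hint h hBA hA
  · have hmem : ∀ p, p ∈ Icc (-c) c → p ∈ Set.uIcc (-c) c := by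
      intro p hp; rw [Set.uIcc_of_le (by linarith)]; exact hp
    have hII : ∀ p q : ℝ, p ∈ Icc (-c) c → q ∈ Icc (-c) c → IntervalIntegrable g volume p q := by
      intro p q hp hq
      exact hint.mono_set (Set.uIcc_subset_uIcc (hmem p hp) (hmem q hq))
    have h4 := intervalIntegral.integral_add_adjacent_intervals
      (hII B (-B) ⟨by linarith, by linarith⟩ ⟨by linarith, by linarith⟩)
      (hII (-B) A ⟨by linarith, by linarith⟩ ⟨by linarith, hA⟩)
    rw [← h4]
    have h5 : (∫ s in B..(-B), g s) = 0 := by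
      have := int_odd hc hmono hrange hodd hint (b := -B) ⟨by linarith, by linarith⟩
      rwa [neg_neg] at this
    rw [h5, zero_add]
    exact int_pos0 hc hmono hrange hodd hint (by linarith) (by linarith) hA

set_option maxHeartbeats 1000000 in
theorem stmt_17 (c α : ℝ) (hc : 0 < c) (hα : 2 ≤ α)
    (Φ : ℝ → ℝ) (hΦ : ContDiff ℝ 2 Φ)
    (hodd : ∀ y : ℝ, Φ (-y) = -Φ y)
    (hΦ' : ∀ y : ℝ, 0 < deriv Φ y)
    (hlim : Filter.Tendsto Φ Filter.atTop (nhds c))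
    (C₀ y₀ : ℝ) (hC₀ : 0 < C₀) (hy₀ : 0 < y₀)
    (hdecay : ∀ y : ℝ, y₀ ≤ y → deriv Φ y ≤ C₀ * y ^ (-α - 1))
    (a m : ℝ) (ha : 0 < a) (hm : 0 ≤ m)
    (M κb σ : ℝ) (hM : 0 < M) (hM2 : M ≤ 2 * c / a) (hκb : κb ∈ Set.Ioo (0:ℝ) M)
    (hσ1 : a * (κb - M / 2) ≤ σ) (hσ2 : σ ≤ c + a * (κb - M)) :
    let g : ℝ → ℝ := Function.invFun Φ
    let G : ℝ → ℝ := fun u => ∫ s in (0:ℝ)..u, g s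
    let U : ℝ → ℝ := fun κ =>
      (((m + 1) / a) * (G (a * (M - κb) + σ) - G (a * (κ - κb) + σ))) ^ (1 / (m + 1))
    (∀ κ ∈ Set.Icc (0:ℝ) M,
      0 ≤ ((m + 1) / a) * (G (a * (M - κb) + σ) - G (a * (κ - κb) + σ))) ∧
    ContinuousOn U (Set.Icc 0 M) ∧
    ContDiffOn ℝ 1 U (Set.Ioo 0 M) ∧
    U M = 0 ∧
    (∀ κ ∈ Set.Ioo (0:ℝ) M, 0 < U κ) ∧
    (∀ κ ∈ Set.Ioo (0:ℝ) M, (U κ) ^ m * deriv U κ = -g (a * (κ - κb) + σ)) ∧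
    (∀ ξm : ℝ, ∀ ξp : EReal, (ξm : EReal) < ξp →
      ∀ κf : ℝ → ℝ,
        (∀ ξ : ℝ, ξm ≤ ξ → (ξ : EReal) < ξp → HasDerivAt κf (U (κf ξ)) ξ) →
        (∀ ξ : ℝ, ξm ≤ ξ → (ξ : EReal) < ξp → κf ξ ∈ Set.Ico (0:ℝ) M) →
        κf ξm = 0 →
        Filter.Tendsto κf
          (Filter.comap (fun ξ : ℝ => (ξ : EReal))
            (nhdsWithin ξp {x : EReal | x < ξp})) (nhds M) →
        ((∀ ξ : ℝ, ξm < ξ → (ξ : EReal) < ξp → 0 < U (κf ξ) →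
            deriv κf ξ = U (κf ξ) ∧
            (U (κf ξ)) ^ (m - 1) * deriv (fun ζ : ℝ => U (κf ζ)) ξ
              = -g (a * (κf ξ - κb) + σ)) ∧
          Filter.Tendsto (fun ξ : ℝ => U (κf ξ))
            (Filter.comap (fun ξ : ℝ => (ξ : EReal))
              (nhdsWithin ξp {x : EReal | x < ξp})) (nhds 0))) := by
  intro g G U
  -- basic structure facts
  have hΦc : Continuous Φ := hΦ.continuous
  have hmono : StrictMono Φ := strictMono_of_deriv_pos hΦ'
  have hrange : Set.range Φ = Ioo (-c) c := phi_range hc hΦc hmono hodd hlim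
  have hint : IntervalIntegrable g volume (-c) c :=
    g_intInt hc hα hΦ hΦ' hodd hmono hrange hC₀ hy₀ hdecay
  obtain ⟨hκb1, hκb2⟩ := hκb
  have hm1 : (0:ℝ) < m + 1 := by linarith
  have hp0 : (0:ℝ) < 1 / (m + 1) := by positivity
  have haM : a * M ≤ 2 * c := by
    rw [le_div_iff₀ ha] at hM2; linarith
  -- notation
  set A : ℝ := a * (M - κb) + σ with hAdef
  set B : ℝ → ℝ := fun κ => a * (κ - κb) + σ with hBdef
  have hBA : B M = A := by simp [hBdef, hAdef]
  have hAc : A ≤ c := by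
    have : a * (M - κb) + a * (κb - M) = 0 := by ring
    simp only [hAdef]; linarith
  have hAlb : a * M / 2 ≤ A := by
    have : a * (M - κb) + a * (κb - M / 2) = a * M / 2 := by ring
    simp only [hAdef]; linarith
  have hApos : 0 < A := lt_of_lt_of_le (by positivity) hAlb
  have hBle : ∀ κ, κ ≤ M → B κ ≤ A := by
    intro κ hκ
    simp only [hBdef, hAdef]
    nlinarith
  have hBlt : ∀ κ, κ < M → B κ < A := by
    intro κ hκ
    simp only [hBdef, hAdef]
    nlinarith
  have hBm : ∀ κ, 0 ≤ κ → -A ≤ B κ := by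
    intro κ hκ
    simp only [hBdef, hAdef]
    nlinarith
  have hBm' : ∀ κ, 0 < κ → -A < B κ := by
    intro κ hκ
    simp only [hBdef, hAdef]
    nlinarith
  have hBIcc : ∀ κ, 0 ≤ κ → κ ≤ M → B κ ∈ Icc (-c) c := by
    intro κ h1 h2
    exact ⟨by linarith [hBm κ h1], by linarith [hBle κ h2]⟩
  have hBIoo : ∀ κ, 0 < κ → κ < M → B κ ∈ Ioo (-c) c := by
    intro κ h1 h2
    exact ⟨by linarith [hBm' κ h1], by linarith [hBlt κ h2]⟩
  -- integral facts
  have hGsub : ∀ κ, 0 ≤ κ → κ ≤ M → G A - G (B κ) = ∫ s in (B κ)..A, g s := by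
    intro κ h1 h2
    have hmem : ∀ p, p ∈ Icc (-c) c → p ∈ Set.uIcc (-c) c := by
      intro p hp; rw [Set.uIcc_of_le (by linarith)]; exact hp
    have hII : ∀ p, p ∈ Icc (-c) c → IntervalIntegrable g volume 0 p := by
      intro p hp
      exact hint.mono_set (Set.uIcc_subset_uIcc
        (hmem 0 ⟨by linarith, by linarith⟩) (hmem p hp))
    exact intervalIntegral.integral_interval_sub_left
      (hII A ⟨by linarith, hAc⟩) (hII (B κ) (hBIcc κ h1 h2))
  -- nonnegativity (conjunct 1)
  have hval_nonneg : ∀ κ ∈ Icc (0:ℝ) M,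
      0 ≤ ((m + 1) / a) * (G A - G (B κ)) := by
    rintro κ ⟨h1, h2⟩
    apply mul_nonneg (by positivity)
    rw [hGsub κ h1 h2]
    exact int_nonneg hc hmono hrange hodd hint (hBm κ h1) (hBle κ h2) hAc
  have hval_pos : ∀ κ ∈ Ioo (0:ℝ) M,
      0 < ((m + 1) / a) * (G A - G (B κ)) := by
    rintro κ ⟨h1, h2⟩
    apply mul_pos (by positivity)
    rw [hGsub κ h1.le h2.le]
    exact int_pos hc hmono hrange hodd hint (hBm' κ h1) (hBlt κ h2) hAc
  have hUdef : ∀ κ, U κ = (((m + 1) / a) * (G A - G (B κ))) ^ (1 / (m + 1)) := fun κ => rfl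
  -- derivative of U with algebraic identity
  have hUkey : ∀ κ ∈ Ioo (0:ℝ) M, ∃ d : ℝ, HasDerivAt U d κ ∧
      U κ ^ m * d = -g (B κ) := by
    rintro κ ⟨h1, h2⟩
    have hBκ : B κ ∈ Ioo (-c) c := hBIoo κ h1 h2
    have hGB : HasDerivAt G (g (B κ)) (B κ) := G_hasDeriv hc hmono hrange hint hBκ
    have hBd : HasDerivAt B a κ := by
      have : HasDerivAt (fun κ : ℝ => a * (κ - κb) + σ) (a * 1) κ :=
        (((hasDerivAt_id κ).sub_const κb).const_mul a).add_const σ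
      rwa [mul_one] at this
    have hGBd : HasDerivAt (fun κ => G (B κ)) (g (B κ) * a) κ := hGB.comp κ hBd
    have hinner : HasDerivAt (fun κ => ((m + 1) / a) * (G A - G (B κ)))
        (((m + 1) / a) * (0 - g (B κ) * a)) κ :=
      ((hasDerivAt_const κ (G A)).sub hGBd).const_mul _
    set v : ℝ := ((m + 1) / a) * (G A - G (B κ)) with hv
    have hvpos : 0 < v := hval_pos κ ⟨h1, h2⟩
    have hU : HasDerivAt U
        ((((m + 1) / a) * (0 - g (B κ) * a)) * (1 / (m + 1)) * v ^ (1 / (m + 1) - 1)) κ :=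
      hinner.rpow_const (Or.inl (ne_of_gt hvpos))
    refine ⟨_, hU, ?_⟩
    rw [hUdef κ, ← hv]
    have hexp : (1 / (m + 1)) * m + (1 / (m + 1) - 1) = 0 := by
      field_simp
      ring
    calc (v ^ (1 / (m + 1))) ^ m *
          ((((m + 1) / a) * (0 - g (B κ) * a)) * (1 / (m + 1)) * v ^ (1 / (m + 1) - 1))
        = (v ^ ((1 / (m + 1)) * m) * v ^ (1 / (m + 1) - 1)) *
            ((((m + 1) / a) * (0 - g (B κ) * a)) * (1 / (m + 1))) := by
          rw [← Real.rpow_mul hvpos.le]; ring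
      _ = v ^ ((1 / (m + 1)) * m + (1 / (m + 1) - 1)) *
            ((((m + 1) / a) * (0 - g (B κ) * a)) * (1 / (m + 1))) := by
          rw [Real.rpow_add hvpos]
      _ = (((m + 1) / a) * (0 - g (B κ) * a)) * (1 / (m + 1)) := by
          rw [hexp, Real.rpow_zero, one_mul]
      _ = -g (B κ) := by
          field_simp
          ring
  -- continuity of U on Icc 0 M
  have hGcont : ContinuousOn G (Icc (-c) c) := G_cont hc hint
  have hBcont : Continuous B := by
    simp only [hBdef]
    exact (continuous_const.mul (continuous_id.sub continuous_const)).add continuous_const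
  have hBmaps : MapsTo B (Icc (0:ℝ) M) (Icc (-c) c) := fun κ hκ => hBIcc κ hκ.1 hκ.2
  have hUcont : ContinuousOn U (Icc (0:ℝ) M) := by
    have hi : ContinuousOn (fun κ => ((m + 1) / a) * (G A - G (B κ))) (Icc (0:ℝ) M) :=
      continuousOn_const.mul (continuousOn_const.sub (hGcont.comp hBcont.continuousOn hBmaps))
    exact hi.rpow_const (fun κ hκ => Or.inr hp0.le)
  -- U M = 0
  have hUM : U M = 0 := by
    rw [hUdef M, hBA, sub_self, mul_zero, Real.zero_rpow (ne_of_gt hp0)]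
  -- U positive on Ioo
  have hUpos : ∀ κ ∈ Ioo (0:ℝ) M, 0 < U κ := by
    intro κ hκ
    rw [hUdef κ]
    exact Real.rpow_pos_of_pos (hval_pos κ hκ) _
  have hUnonneg : ∀ κ ∈ Icc (0:ℝ) M, 0 ≤ U κ := by
    intro κ hκ
    rw [hUdef κ]
    exact Real.rpow_nonneg (hval_nonneg κ hκ) _
  -- smoothness of G on Ioo (-c) c
  have hGC1 : ContDiffOn ℝ 1 G (Ioo (-c) c) := by
    rw [show ((1:WithTop ℕ∞)) = 0 + 1 by norm_num,
      contDiffOn_succ_iff_deriv_of_isOpen isOpen_Ioo]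
    refine ⟨fun x hx => ((G_hasDeriv hc hmono hrange hint hx).differentiableAt).differentiableWithinAt,
      ?_, ?_⟩
    · intro h; exact absurd h (by norm_num)
    · rw [contDiffOn_zero]
      refine ContinuousOn.congr (f := g) ?_ ?_
      · exact fun x hx => (g_continuousAt hmono hrange hx).continuousWithinAt
      · intro x hx
        exact ((G_hasDeriv hc hmono hrange hint hx).deriv).symm ▸ rfl
  -- ContDiffOn of U
  have hUcd : ContDiffOn ℝ 1 U (Ioo (0:ℝ) M) := by
    intro κ hκ
    refine ContDiffAt.contDiffWithinAt ?_
    have hBcd : ContDiffAt ℝ 1 B κ := by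
      simp only [hBdef]
      exact ((contDiffAt_const.mul (contDiffAt_id.sub contDiffAt_const)).add contDiffAt_const)
    have hGBcd : ContDiffAt ℝ 1 (fun κ => G (B κ)) κ :=
      (hGC1.contDiffAt (isOpen_Ioo.mem_nhds (hBIoo κ hκ.1 hκ.2))).comp κ hBcd
    have hicd : ContDiffAt ℝ 1 (fun κ => ((m + 1) / a) * (G A - G (B κ))) κ :=
      contDiffAt_const.mul (contDiffAt_const.sub hGBcd)
    exact ContDiffAt.comp κ
      (Real.contDiffAt_rpow_const_of_ne (ne_of_gt (hval_pos κ hκ))) hicd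
  -- deriv identity
  have hUderiv : ∀ κ ∈ Ioo (0:ℝ) M, U κ ^ m * deriv U κ = -g (B κ) := by
    intro κ hκ
    obtain ⟨d, hd, hkd⟩ := hUkey κ hκ
    rw [hd.deriv]
    exact hkd
  refine ⟨hval_nonneg, hUcont, hUcd, hUM, hUpos, hUderiv, ?_⟩
  -- the ODE part
  intro ξm ξp hξ κf hder hIco hinit htend
  set F := Filter.comap (fun ξ : ℝ => (ξ : EReal)) (nhdsWithin ξp {x : EReal | x < ξp}) with hF
  have hev1 : ∀ᶠ ξ : ℝ in F, (ξ : EReal) < ξp := by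
    have h1 : {x : EReal | x < ξp} ∈ nhdsWithin ξp {x : EReal | x < ξp} := self_mem_nhdsWithin
    exact Filter.preimage_mem_comap h1
  have hev2 : ∀ᶠ ξ : ℝ in F, ξm < ξ := by
    have h1 : Ioi (ξm : EReal) ∈ nhdsWithin ξp {x : EReal | x < ξp} :=
      mem_nhdsWithin_of_mem_nhds (isOpen_Ioi.mem_nhds hξ)
    have h3 : ∀ᶠ ξ : ℝ in F, (ξm : EReal) < (ξ : EReal) :=
      Filter.preimage_mem_comap h1
    filter_upwards [h3] with ξ hξ'
    exact_mod_cast hξ'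
  constructor
  · -- pointwise identities
    intro ξ hξm hξp hpos
    have hd := hder ξ hξm.le hξp
    refine ⟨hd.deriv, ?_⟩
    have hK : κf ξ ∈ Ioo 0 M := by
      obtain ⟨h0, hM'⟩ := hIco ξ hξm.le hξp
      rcases eq_or_lt_of_le h0 with he | he
      · exfalso
        have hcoe : ∀ ζ : ℝ, ζ ≤ ξ → (ζ : EReal) < ξp := by
          intro ζ hζ
          exact lt_of_le_of_lt (EReal.coe_le_coe_iff.mpr hζ) hξp
        have hmf : MonotoneOn κf (Icc ξm ξ) := by
          apply monotoneOn_of_deriv_nonneg (convex_Icc _ _)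
          · exact fun ζ hζ =>
              (hder ζ hζ.1 (hcoe ζ hζ.2)).continuousAt.continuousWithinAt
          · rw [interior_Icc]
            exact fun ζ hζ =>
              (hder ζ hζ.1.le (hcoe ζ hζ.2.le)).differentiableAt.differentiableWithinAt
          · rw [interior_Icc]
            intro ζ hζ
            rw [(hder ζ hζ.1.le (hcoe ζ hζ.2.le)).deriv]
            exact hUnonneg _ (Ico_subset_Icc_self (hIco ζ hζ.1.le (hcoe ζ hζ.2.le)))
        have hzero : ∀ ζ ∈ Icc ξm ξ, κf ζ = 0 := by
          intro ζ hζ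
          have hle1 : κf ζ ≤ κf ξ := hmf hζ (right_mem_Icc.mpr hξm.le) hζ.2
          have hle2 : κf ξm ≤ κf ζ := hmf (left_mem_Icc.mpr hξm.le) hζ hζ.1
          rw [hinit] at hle2
          rw [← he] at hle1
          linarith
        set ζ0 := (ξm + ξ) / 2 with hζ0
        have hζ0m : ζ0 ∈ Ioo ξm ξ := ⟨by simp only [hζ0]; linarith, by simp only [hζ0]; linarith⟩
        have h1 : HasDerivAt κf (U (κf ζ0)) ζ0 := hder ζ0 hζ0m.1.le (hcoe ζ0 hζ0m.2.le)
        have h2 : HasDerivAt κf 0 ζ0 := by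
          refine (hasDerivAt_const ζ0 (0:ℝ)).congr_of_eventuallyEq ?_
          filter_upwards [isOpen_Ioo.mem_nhds hζ0m] with ζ hζ
          exact hzero ζ (Ioo_subset_Icc_self hζ)
        have h3 := h1.unique h2
        have h4 : κf ζ0 = 0 := hzero ζ0 (Ioo_subset_Icc_self hζ0m)
        rw [h4] at h3
        rw [← he] at hpos
        rw [h3] at hpos
        exact lt_irrefl 0 hpos
      · exact ⟨he, hM'⟩
    obtain ⟨d, hUd, hkd⟩ := hUkey (κf ξ) hK
    have hcomp : HasDerivAt (fun ζ : ℝ => U (κf ζ)) (d * U (κf ξ)) ξ := hUd.comp ξ hd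
    rw [hcomp.deriv]
    have hrw : U (κf ξ) ^ (m - 1) * U (κf ξ) = U (κf ξ) ^ m := by
      rw [← Real.rpow_add_one (ne_of_gt hpos) (m - 1), sub_add_cancel]
    calc U (κf ξ) ^ (m - 1) * (d * U (κf ξ))
        = (U (κf ξ) ^ (m - 1) * U (κf ξ)) * d := by ring
      _ = U (κf ξ) ^ m * d := by rw [hrw]
      _ = -g (B (κf ξ)) := hkd
  · -- limit of U ∘ κf
    have hev3 : ∀ᶠ ξ : ℝ in F, κf ξ ∈ Icc (0:ℝ) M := by
      filter_upwards [hev1, hev2] with ξ h1 h2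
      exact Ico_subset_Icc_self (hIco ξ h2.le h1)
    have hMmem : M ∈ Icc (0:ℝ) M := right_mem_Icc.mpr hM.le
    have hUc : Tendsto U (nhdsWithin M (Icc (0:ℝ) M)) (nhds 0) := by
      have := hUcont M hMmem
      rw [ContinuousWithinAt, hUM] at this
      exact this
    have hκt : Tendsto κf F (nhdsWithin M (Icc (0:ℝ) M)) :=
      tendsto_nhdsWithin_iff.mpr ⟨htend, hev3⟩
    exact hUc.comp hκt
end

section
/- Let M = 2c/a and let υ± > 0. Define U(κ) := { (υ±)^{m+1} + ((m+1)/a)·[ G(c) − G(c − a·κ) ] }^{1/(m+1)} for κ ∈ [0, M]. Then: U is continuous on [0, M] and continuously differentiable on (0, M); U(0) = U(M) = υ±; U(κ) ≥ υ± > 0 for all κ ∈ [0, M]; and U(κ)^m·U'(κ) = g(c − a·κ) for every κ ∈ (0, M). Consequently there exist real numbers ξ₋ < ξ₊ and functions κ ∈ C¹([ξ₋, ξ₊]) and υ := κ' continuous on [ξ₋, ξ₊] such that κ(ξ₋) = 0, κ(ξ₊) = M, υ(ξ₋) = υ(ξ₊) = υ±, and, for all ξ ∈ (ξ₋, ξ₊),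 κ'(ξ) = υ(ξ) and υ(ξ)^{m−1}·υ'(ξ) = g( c − a·κ(ξ) ). -/
open Set Filter MeasureTheory intervalIntegral Real


theorem stmt_18 (c α : ℝ) (hc : 0 < c) (hα : 2 ≤ α)
    (Φ : ℝ → ℝ) (hΦ : ContDiff ℝ 2 Φ)
    (hodd : ∀ y : ℝ, Φ (-y) = -Φ y)
    (hΦ' : ∀ y : ℝ, 0 < deriv Φ y)
    (hlim : Filter.Tendsto Φ Filter.atTop (nhds c))
    (C₀ y₀ : ℝ) (hC₀ : 0 < C₀) (hy₀ : 0 < y₀)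
    (hdecay : ∀ y : ℝ, y₀ ≤ y → deriv Φ y ≤ C₀ * y ^ (-α - 1))
    (a m : ℝ) (ha : 0 < a) (hm : 0 ≤ m)
    (υpm : ℝ) (hυpm : 0 < υpm) :
    let g : ℝ → ℝ := Function.invFun Φ
    let G : ℝ → ℝ := fun u => ∫ s in (0:ℝ)..u, g s
    let M : ℝ := 2 * c / a
    let U : ℝ → ℝ := fun κ =>
      (υpm ^ (m + 1) + ((m + 1) / a) * (G c - G (c - a * κ))) ^ (1 / (m + 1))
    ContinuousOn U (Set.Icc 0 M) ∧
    ContDiffOn ℝ 1 U (Set.Ioo 0 M) ∧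
    U 0 = υpm ∧ U M = υpm ∧
    (∀ κ ∈ Set.Icc (0:ℝ) M, υpm ≤ U κ) ∧
    (∀ κ ∈ Set.Ioo (0:ℝ) M, (U κ) ^ m * deriv U κ = g (c - a * κ)) ∧
    ∃ ξm ξp : ℝ, ξm < ξp ∧ ∃ κf : ℝ → ℝ,
      ContDiffOn ℝ 1 κf (Set.Icc ξm ξp) ∧
      ContinuousOn (deriv κf) (Set.Icc ξm ξp) ∧
      κf ξm = 0 ∧ κf ξp = M ∧
      deriv κf ξm = υpm ∧ deriv κf ξp = υpm ∧
      (∀ ξ ∈ Set.Ioo ξm ξp,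
        (deriv κf ξ) ^ (m - 1) * deriv (deriv κf) ξ = g (c - a * κf ξ)) := by
  intro g G M U

  have hΦc : Continuous Φ := hΦ.continuous
  have hΦd : Differentiable ℝ Φ := hΦ.differentiable (by norm_num)
  have hmono : StrictMono Φ := strictMono_of_deriv_pos hΦ'
  have hΦ0 : Φ 0 = 0 := by have := hodd 0; simp at this; linarith
  have hlimb : Tendsto Φ atBot (nhds (-c)) := by
    have : Tendsto (fun y => -Φ (-y)) atBot (nhds (-c)) :=
      ((hlim.comp tendsto_neg_atBot_atTop).neg)
    refine this.congr fun y => by rw [hodd]; ring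
  have hlt : ∀ y, Φ y < c := fun y =>
    lt_of_lt_of_le (hmono (lt_add_one y)) (hmono.monotone.ge_of_tendsto hlim _)
  have hgt : ∀ y, -c < Φ y := fun y => by
    have := hlt (-y); rw [hodd] at this; linarith
  have hsurj : ∀ v ∈ Ioo (-c) c, ∃ y, Φ y = v := by
    intro v hv
    obtain ⟨y1, hy1⟩ := (hlim.eventually (eventually_gt_nhds hv.2)).exists
    obtain ⟨y2, hy2⟩ := (hlimb.eventually (eventually_lt_nhds hv.1)).exists
    have h12 : y2 ≤ y1 := by
      by_contra h; push_neg at h; exact absurd (hmono h) (by linarith)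
    obtain ⟨y, _, hy⟩ := intermediate_value_Icc h12 (hΦc.continuousOn)
      (mem_Icc.mpr ⟨hy2.le, hy1.le⟩)
    exact ⟨y, hy⟩

  have hgdef : g = Function.invFun Φ := rfl
  have hαpos : (0:ℝ) < α := by linarith
  have hgΦ : ∀ y, g (Φ y) = y := fun y =>
    Function.leftInverse_invFun hmono.injective y
  have hginv : ∀ v ∈ Ioo (-c) c, Φ (g v) = v := fun v hv =>
    Function.invFun_eq (hsurj v hv)
  have hg0 : g 0 = 0 := by simpa [hΦ0] using hgΦ 0
  have hgmono : ∀ v ∈ Ioo (-c) c, ∀ w ∈ Ioo (-c) c, v < w → g v < g w := by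
    intro v hv w hw hvw
    have : Φ (g v) < Φ (g w) := by rw [hginv v hv, hginv w hw]; exact hvw
    exact hmono.lt_iff_lt.mp this
  have hgodd : ∀ v ∈ Ioo (-c) c, g (-v) = - g v := by
    intro v hv
    have h1 : Φ (-(g v)) = -v := by rw [hodd, hginv v hv]
    rw [← h1, hgΦ]
  have hgc : ∀ v ∈ Ioo (-c) c, ContinuousAt g v := by
    intro v hv
    obtain ⟨y, rfl⟩ := hsurj v hv
    rw [Metric.continuousAt_iff]
    intro ε hε
    have h1 : Φ (y - ε) < Φ y := hmono (by linarith)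
    have h2 : Φ y < Φ (y + ε) := hmono (by linarith)
    refine ⟨min (Φ y - Φ (y - ε)) (Φ (y + ε) - Φ y), by simp [h1, h2, sub_pos], ?_⟩
    intro w hw
    rw [Real.dist_eq] at hw ⊢
    have hw1 : Φ (y - ε) < w := by
      have := abs_lt.mp hw; have := (min_le_left (Φ y - Φ (y - ε)) (Φ (y + ε) - Φ y)); linarith [(abs_lt.mp hw).1, min_le_left (Φ y - Φ (y - ε)) (Φ (y + ε) - Φ y)]
    have hw2 : w < Φ (y + ε) := by
      linarith [(abs_lt.mp hw).2, min_le_right (Φ y - Φ (y - ε)) (Φ (y + ε) - Φ y)]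
    have hwio : w ∈ Ioo (-c) c := ⟨lt_trans (hgt (y - ε)) hw1, lt_trans hw2 (hlt (y + ε))⟩
    obtain ⟨z, rfl⟩ := hsurj w hwio
    rw [hgΦ, hgΦ]
    have : y - ε < z := hmono.lt_iff_lt.mp hw1
    have : z < y + ε := hmono.lt_iff_lt.mp hw2
    rw [abs_lt]; constructor <;> linarith
  -- decay bound on c - Φ y
  have hΦderivcont : Continuous (deriv Φ) := hΦ.continuous_deriv (by norm_num)
  have hbound : ∀ y, y₀ ≤ y → c - Φ y ≤ C₀ / α * y ^ (-α) := by
    intro y hy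
    have hy0 : 0 < y := lt_of_lt_of_le hy₀ hy
    have htend : Tendsto (fun z => Φ z - Φ y) atTop (nhds (c - Φ y)) :=
      hlim.sub_const (Φ y)
    refine le_of_tendsto htend ?_
    filter_upwards [eventually_ge_atTop y] with z hz
    have hstep : Φ z - Φ y = ∫ t in y..z, deriv Φ t :=
      (intervalIntegral.integral_deriv_eq_sub (fun t _ => hΦd t)
        (hΦderivcont.intervalIntegrable y z)).symm
    have h0ni : (0:ℝ) ∉ Set.uIcc y z := by
      rw [Set.uIcc_of_le hz]; intro h0; exact absurd (mem_Icc.mp h0).1 (by linarith)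
    have hmaj : ∫ t in y..z, deriv Φ t ≤ ∫ t in y..z, C₀ * t ^ (-α - 1) := by
      refine intervalIntegral.integral_mono_on hz (hΦderivcont.intervalIntegrable y z)
        ((intervalIntegrable_rpow (Or.inr h0ni)).const_mul C₀) ?_
      intro t ht
      exact hdecay t (le_trans hy (mem_Icc.mp ht).1)
    have hval : ∫ t in y..z, C₀ * t ^ (-α - 1)
        = C₀ / α * y ^ (-α) - C₀ / α * z ^ (-α) := by
      rw [intervalIntegral.integral_const_mul,
        integral_rpow (Or.inr ⟨by intro h; linarith, h0ni⟩)]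
      have hαne : α ≠ 0 := by linarith
      have h1 : -α - 1 + 1 = -α := by ring
      rw [h1]
      field_simp
      ring
    have hz0 : (0:ℝ) ≤ z ^ (-α) := Real.rpow_nonneg (by linarith) _
    rw [hstep]
    calc ∫ t in y..z, deriv Φ t ≤ C₀ / α * y ^ (-α) - C₀ / α * z ^ (-α) := by
          rw [← hval]; exact hmaj
      _ ≤ C₀ / α * y ^ (-α) := by
          have : 0 ≤ C₀ / α * z ^ (-α) := by positivity
          linarith
  -- integrability of g on [-c, c]
  have hαne : α ≠ 0 := by linarith
  set s₀ : ℝ := Φ y₀ with hs₀def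
  have hs₀pos : 0 < s₀ := by rw [hs₀def, ← hΦ0]; exact hmono hy₀
  have hs₀lt : s₀ < c := hlt y₀
  have hs₀mem : s₀ ∈ Ioo (-c) c := ⟨by linarith [hgt y₀], hs₀lt⟩
  set K : ℝ := (C₀ / α) ^ (1/α) with hKdef
  have hgnonneg : ∀ s ∈ Ioo (0:ℝ) c, 0 < g s := by
    intro s hs
    have h0m : (0:ℝ) ∈ Ioo (-c) c := ⟨by linarith, hc⟩
    have := hgmono 0 h0m s ⟨by linarith [hs.1], hs.2⟩ hs.1
    rwa [hg0] at this
  have hgs_bound : ∀ s ∈ Ioo s₀ c, g s ≤ K * (c - s) ^ (-(1/α)) := by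
    intro s hs
    have hsmem : s ∈ Ioo (-c) c := ⟨by linarith [hs.1], hs.2⟩
    have hgy : y₀ ≤ g s := by
      have h1 := hgmono s₀ hs₀mem s hsmem hs.1
      rw [hs₀def] at h1
      rw [hgΦ y₀] at h1
      exact h1.le
    have hgpos : 0 < g s := lt_of_lt_of_le hy₀ hgy
    have hb := hbound (g s) hgy
    rw [hginv s hsmem] at hb
    have hcs : 0 < c - s := by linarith [hs.2]
    have h1 : (g s) ^ α ≤ (C₀/α) / (c - s) := by
      rw [le_div_iff₀ hcs]
      calc (g s)^α * (c - s) ≤ (g s)^α * (C₀/α * (g s)^(-α)) :=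
            mul_le_mul_of_nonneg_left hb (Real.rpow_nonneg hgpos.le α)
        _ = C₀/α * ((g s)^α * (g s)^(-α)) := by ring
        _ = C₀/α := by rw [← Real.rpow_add hgpos]; simp
    have h2 : g s ≤ (C₀/α / (c - s)) ^ (1/α) := by
      have h3 := Real.rpow_le_rpow (Real.rpow_nonneg hgpos.le α) h1
        (by positivity : (0:ℝ) ≤ 1/α)
      rwa [← Real.rpow_mul hgpos.le, mul_one_div, div_self hαne, Real.rpow_one] at h3
    calc g s ≤ (C₀/α / (c-s))^(1/α) := h2
      _ = K * (c - s)^(-(1/α)) := by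
          rw [Real.div_rpow (by positivity) hcs.le, div_eq_mul_inv,
            Real.rpow_neg hcs.le, hKdef]
  have hmajint : IntervalIntegrable (fun s => K * (c - s) ^ (-(1/α))) volume s₀ c := by
    have h1 : IntervalIntegrable (fun x : ℝ => x ^ (-(1/α))) volume (c - s₀) (c - c) :=
      intervalIntegrable_rpow' (by
        have : 1/α ≤ 1/2 := by
          apply div_le_div_of_nonneg_left (by norm_num) (by norm_num) hα
        linarith)
    simpa using (h1.comp_sub_left c).const_mul K
  have hgcont_Ioo : ∀ (u v : ℝ), -c < u → v ≤ c → ContinuousOn g (Ioo u v) :=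
    fun u v hu hv s hs => (hgc s ⟨lt_of_lt_of_le hu hs.1.le, lt_of_lt_of_le hs.2 hv⟩
      |>.continuousWithinAt)
  have hint_right : IntervalIntegrable g volume s₀ c := by
    rw [intervalIntegrable_iff_integrableOn_Ioc_of_le hs₀lt.le,
      integrableOn_Ioc_iff_integrableOn_Ioo]
    have hmaj' : IntegrableOn (fun s => K * (c - s)^(-(1/α))) (Ioo s₀ c) := by
      have h5 := (intervalIntegrable_iff_integrableOn_Ioc_of_le hs₀lt.le).mp hmajint
      exact h5.mono_set Ioo_subset_Ioc_self
    refine hmaj'.mono' ?_ ?_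
    · exact ((hgcont_Ioo s₀ c hs₀mem.1 le_rfl).aestronglyMeasurable measurableSet_Ioo)
    · rw [ae_restrict_iff' measurableSet_Ioo]
      refine ae_of_all _ fun s hs => ?_
      rw [Real.norm_eq_abs, abs_of_nonneg (hgnonneg s ⟨by linarith [hs.1], hs.2⟩).le]
      exact hgs_bound s hs
  have hint_left : IntervalIntegrable g volume 0 s₀ := by
    apply ContinuousOn.intervalIntegrable
    rw [Set.uIcc_of_le hs₀pos.le]
    intro s hs
    exact (hgc s ⟨by linarith [hs.1], lt_of_le_of_lt hs.2 hs₀lt⟩).continuousWithinAt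
  have hint0c : IntervalIntegrable g volume 0 c := hint_left.trans hint_right
  have hintneg : IntervalIntegrable g volume (-c) 0 := by
    have h1 : IntervalIntegrable (fun x => g (-x)) volume (-0 : ℝ) (-c) :=
      (IntervalIntegrable.iff_comp_neg (f := g)).mp hint0c
    rw [neg_zero] at h1
    have h2 : IntervalIntegrable (fun x => -g (-x)) volume (-c) 0 := h1.symm.neg
    rw [intervalIntegrable_iff_integrableOn_Ioc_of_le (by linarith : -c ≤ (0:ℝ))] at h2 ⊢
    refine h2.congr ?_
    rw [Filter.eventuallyEq_iff_exists_mem]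
    refine ⟨Ioc (-c) 0, (ae_restrict_iff' measurableSet_Ioc).mpr (ae_of_all _ fun x hx => hx), ?_⟩
    intro x hx
    have hxm : x ∈ Ioo (-c) c := ⟨hx.1, lt_of_le_of_lt hx.2 hc⟩
    simp only [hgodd x hxm, neg_neg]
  have hint_all : IntervalIntegrable g volume (-c) c := hintneg.trans hint0c
  have hmcc : -c ≤ c := by linarith
  have hint : ∀ u ∈ Icc (-c) c, ∀ v ∈ Icc (-c) c, IntervalIntegrable g volume u v := by
    intro u hu v hv
    refine hint_all.mono_set ?_
    rw [Set.uIcc_of_le hmcc]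
    exact Set.uIcc_subset_Icc hu hv
  have hGdef : G = fun u => ∫ s in (0:ℝ)..u, g s := rfl
  have h0mem : (0:ℝ) ∈ Icc (-c) c := ⟨by linarith, hc.le⟩
  have hGcont : ContinuousOn G (Icc (-c) c) := by
    have h9 := intervalIntegral.continuousOn_primitive_interval' hint_all
      (by rw [Set.uIcc_of_le hmcc]; exact h0mem)
    rwa [Set.uIcc_of_le hmcc] at h9
  have haec : ∀ᵐ x : ℝ, x ≠ c ∧ x ≠ -c := by
    have h1 : ∀ᵐ x : ℝ, x ≠ c := by
      rw [ae_iff]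
      simpa using measure_singleton c
    have h2 : ∀ᵐ x : ℝ, x ≠ -c := by
      rw [ae_iff]
      simpa using measure_singleton (-c)
    exact h1.and h2
  have hGeven : ∀ u ∈ Icc (-c) c, G (-u) = G u := by
    intro u hu
    have h1 : (∫ x in (0:ℝ)..u, g (-x)) = ∫ x in -u..(-0:ℝ), g x :=
      intervalIntegral.integral_comp_neg g
    have h2 : (∫ x in (0:ℝ)..u, g (-x)) = ∫ x in (0:ℝ)..u, -g x := by
      apply intervalIntegral.integral_congr_ae
      filter_upwards [haec] with x hx hmem
      have hsub : Set.uIoc (0:ℝ) u ⊆ Icc (-c) c := by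
        have hmin : -c ≤ min 0 u := le_min (by linarith) hu.1
        have hmax : max 0 u ≤ c := max_le hc.le hu.2
        intro t ht
        rw [Set.uIoc] at ht
        exact ⟨le_trans hmin ht.1.le, le_trans ht.2 hmax⟩
      have hxm := hsub hmem
      have hxo : x ∈ Ioo (-c) c := ⟨lt_of_le_of_ne hxm.1 (Ne.symm hx.2), lt_of_le_of_ne hxm.2 hx.1⟩
      exact hgodd x hxo
    rw [h2, neg_zero, intervalIntegral.integral_neg] at h1
    rw [intervalIntegral.integral_symm 0 (-u)] at h1
    exact (neg_injective h1).symm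
  have hGderiv : ∀ u ∈ Ioo (-c) c, HasDerivAt G (g u) u := by
    intro u hu
    refine intervalIntegral.integral_hasDerivAt_right
      (hint 0 h0mem u ⟨hu.1.le, hu.2.le⟩) ?_ (hgc u hu)
    exact ContinuousOn.stronglyMeasurableAtFilter isOpen_Ioo
      (fun s hs => (hgc s hs).continuousWithinAt) u hu
  have hGsub : ∀ u ∈ Icc (-c) c, G c - G u = ∫ s in u..c, g s := by
    intro u hu
    have h6 := intervalIntegral.integral_add_adjacent_intervals
      (hint 0 h0mem u hu) (hint u hu c ⟨hmcc, le_rfl⟩)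
    rw [hGdef]
    simp only []
    linarith [h6]
  have hGle : ∀ u ∈ Icc (-c) c, G u ≤ G c := by
    have hpos : ∀ u ∈ Icc (0:ℝ) c, G u ≤ G c := by
      intro u hu
      have h7 : (0:ℝ) ≤ ∫ s in u..c, g s := by
        refine intervalIntegral.integral_nonneg_of_ae_restrict hu.2
          ((ae_restrict_iff' measurableSet_Icc).mpr ?_)
        filter_upwards [haec] with x hx hmem
        simp only [Pi.zero_apply]
        rcases eq_or_lt_of_le (le_trans hu.1 hmem.1) with h | h
        · rw [← h, hg0]
        · exact (hgnonneg x ⟨h, lt_of_le_of_ne hmem.2 hx.1⟩).le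
      have h8 := hGsub u ⟨by linarith [hu.1], hu.2⟩
      linarith
    intro u hu
    rcases le_or_gt 0 u with h | h
    · exact hpos u ⟨h, hu.2⟩
    · rw [← hGeven u hu]
      exact hpos (-u) ⟨by linarith, by linarith [hu.1]⟩
  -- U facts
  have hMdef : M = 2 * c / a := rfl
  set F : ℝ → ℝ := fun κ => υpm ^ (m+1) + ((m+1)/a) * (G c - G (c - a*κ)) with hFdef
  have hUdef : U = fun κ => (F κ) ^ (1/(m+1)) := rfl
  have hm1 : (0:ℝ) < m + 1 := by linarith
  have hm1ne : m + 1 ≠ 0 := hm1.ne'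
  have hane : a ≠ 0 := ha.ne'
  have hMpos : 0 < M := by rw [hMdef]; positivity
  have haff : ∀ κ ∈ Icc (0:ℝ) M, c - a*κ ∈ Icc (-c) c := by
    intro κ hκ
    constructor
    · have h1 : a * κ ≤ a * M := mul_le_mul_of_nonneg_left hκ.2 ha.le
      rw [hMdef] at h1
      rw [mul_div_cancel₀ (2*c) hane] at h1
      linarith
    · nlinarith [hκ.1]
  have haffo : ∀ κ ∈ Ioo (0:ℝ) M, c - a*κ ∈ Ioo (-c) c := by
    intro κ hκ
    constructor
    · have h1 : a * κ < a * M := (mul_lt_mul_iff_right₀ ha).mpr hκ.2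
      rw [hMdef, mul_div_cancel₀ (2*c) hane] at h1
      linarith
    · nlinarith [hκ.1]
  have hFge : ∀ κ ∈ Icc (0:ℝ) M, υpm ^ (m+1) ≤ F κ := by
    intro κ hκ
    have := hGle (c - a*κ) (haff κ hκ)
    rw [hFdef]
    have h1 : 0 ≤ ((m+1)/a) * (G c - G (c - a*κ)) := by
      apply mul_nonneg (by positivity)
      linarith
    simp only []
    linarith
  have hυppos : (0:ℝ) < υpm ^ (m+1) := Real.rpow_pos_of_pos hυpm _
  have hFpos : ∀ κ ∈ Icc (0:ℝ) M, 0 < F κ := fun κ hκ => lt_of_lt_of_le hυppos (hFge κ hκ)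
  have hFcont : ContinuousOn F (Icc 0 M) := by
    apply ContinuousOn.add continuousOn_const
    apply ContinuousOn.mul continuousOn_const
    apply ContinuousOn.sub continuousOn_const
    exact hGcont.comp ((continuous_const.sub (continuous_const.mul continuous_id)).continuousOn)
      (fun κ hκ => haff κ hκ)
  have hUcont : ContinuousOn U (Icc 0 M) :=
    hFcont.rpow_const (fun κ hκ => Or.inr (by positivity))
  have hrpow_id : (υpm ^ (m+1)) ^ (1/(m+1)) = υpm := by
    rw [← Real.rpow_mul hυpm.le, mul_one_div, div_self hm1ne, Real.rpow_one]
  have hU0 : U 0 = υpm := by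
    have h0 : c - a * 0 = c := by ring
    rw [hUdef]; simp only [hFdef, mul_zero, sub_zero, sub_self, add_zero]
    exact hrpow_id
  have hUM : U M = υpm := by
    have hcM : c - a * M = -c := by rw [hMdef, mul_div_cancel₀ (2*c) hane]; ring
    rw [hUdef]; simp only [hFdef, hcM, hGeven c ⟨hmcc, le_rfl⟩, sub_self, mul_zero, add_zero]
    exact hrpow_id
  have hUge : ∀ κ ∈ Icc (0:ℝ) M, υpm ≤ U κ := by
    intro κ hκ
    rw [hUdef, ← hrpow_id]
    exact Real.rpow_le_rpow hυppos.le (hFge κ hκ) (by positivity)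
  have hUpos : ∀ κ ∈ Icc (0:ℝ) M, 0 < U κ := fun κ hκ => lt_of_lt_of_le hυpm (hUge κ hκ)
  have hFderiv : ∀ κ ∈ Ioo (0:ℝ) M, HasDerivAt F ((m+1) * g (c - a*κ)) κ := by
    intro κ hκ
    have hinner : HasDerivAt (fun κ : ℝ => c - a*κ) (-a) κ := by
      simpa using ((hasDerivAt_id κ).const_mul a).const_sub c
    have h1 : HasDerivAt (fun κ : ℝ => G (c - a*κ)) (g (c - a*κ) * -a) κ :=
      by have := (hGderiv _ (haffo κ hκ)).comp κ hinner; exact this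
    have h2 := ((h1.const_sub (G c)).const_mul ((m+1)/a)).const_add (υpm ^ (m+1))
    refine h2.congr_deriv ?_
    rw [div_mul_eq_mul_div, div_eq_iff hane]
    ring
  have hUderivAt : ∀ κ ∈ Ioo (0:ℝ) M,
      HasDerivAt U ((F κ) ^ (1/(m+1) - 1) * g (c - a*κ)) κ := by
    intro κ hκ
    have hκ' : κ ∈ Icc (0:ℝ) M := ⟨hκ.1.le, hκ.2.le⟩
    have h1 := (hFderiv κ hκ).rpow_const (p := 1/(m+1)) (Or.inl (hFpos κ hκ').ne')
    convert h1 using 1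
    field_simp
  have hODE : ∀ κ ∈ Ioo (0:ℝ) M, (U κ) ^ m * deriv U κ = g (c - a*κ) := by
    intro κ hκ
    have hκ' : κ ∈ Icc (0:ℝ) M := ⟨hκ.1.le, hκ.2.le⟩
    have hFp := hFpos κ hκ'
    rw [(hUderivAt κ hκ).deriv, hUdef]
    simp only []
    rw [← Real.rpow_mul hFp.le, ← mul_assoc, ← Real.rpow_add hFp]
    have hexp : 1/(m+1)*m + (1/(m+1)-1) = 0 := by field_simp; ring
    rw [hexp, Real.rpow_zero, one_mul]
  -- regularity of U on Ioo
  have haffcont : Continuous (fun κ : ℝ => c - a*κ) :=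
    continuous_const.sub (continuous_const.mul continuous_id)
  have hgaffcont : ContinuousOn (fun κ => g (c - a*κ)) (Ioo 0 M) := by
    intro κ hκ
    have h1 := ContinuousAt.comp (f := fun κ : ℝ => c - a*κ) (g := g)
      (hgc _ (haffo κ hκ)) haffcont.continuousAt
    exact h1.continuousWithinAt
  have hUderivcont : ContinuousOn (deriv U) (Ioo 0 M) := by
    have heq : ∀ κ ∈ Ioo (0:ℝ) M, deriv U κ = (F κ)^(1/(m+1)-1) * g (c - a*κ) :=
      fun κ hκ => (hUderivAt κ hκ).deriv
    refine ContinuousOn.congr (ContinuousOn.mul ?_ hgaffcont) heq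
    refine ContinuousOn.rpow_const (hFcont.mono Ioo_subset_Icc_self) ?_
    exact fun κ hκ => Or.inl (hFpos κ (Ioo_subset_Icc_self hκ)).ne'
  have hUcd : ContDiffOn ℝ 1 U (Ioo 0 M) := by
    rw [show (1 : WithTop ℕ∞) = 0 + 1 from rfl, contDiffOn_succ_iff_deriv_of_isOpen isOpen_Ioo]
    refine ⟨fun κ hκ => ((hUderivAt κ hκ).differentiableAt.differentiableWithinAt), ?_, ?_⟩
    · simp
    · rw [contDiffOn_zero]; exact hUderivcont
  -- the extension of U
  set Ubar : ℝ → ℝ := fun k => U (max 0 (min k M)) with hUbardef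
  have hproj : ∀ k, max 0 (min k M) ∈ Icc (0:ℝ) M :=
    fun k => ⟨le_max_left _ _, max_le hMpos.le (min_le_right k M)⟩
  have hUbarcont : Continuous Ubar := by
    apply hUcont.comp_continuous
      (continuous_const.max (continuous_id.min continuous_const)) hproj
  have hUbarge : ∀ k, υpm ≤ Ubar k := fun k => hUge _ (hproj k)
  have hUbarpos : ∀ k, 0 < Ubar k := fun k => lt_of_lt_of_le hυpm (hUbarge k)
  obtain ⟨B, hB⟩ : ∃ B, ∀ k, Ubar k ≤ B := by
    obtain ⟨B, hB⟩ := (isCompact_Icc.image_of_continuousOn hUcont).bddAbove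
    exact ⟨B, fun k => hB ⟨_, hproj k, rfl⟩⟩
  have hBpos : 0 < B := lt_of_lt_of_le (hUbarpos 0) (hB 0)
  set φ : ℝ → ℝ := fun k => ∫ τ in (0:ℝ)..k, (Ubar τ)⁻¹ with hφdef
  have hUbarinvcont : Continuous (fun τ => (Ubar τ)⁻¹) :=
    hUbarcont.inv₀ (fun τ => (hUbarpos τ).ne')
  have hφderiv : ∀ k, HasDerivAt φ (Ubar k)⁻¹ k := fun k =>
    intervalIntegral.integral_hasDerivAt_right (hUbarinvcont.intervalIntegrable 0 k)
      (hUbarinvcont.stronglyMeasurableAtFilter _ _) hUbarinvcont.continuousAt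
  have hφmono : StrictMono φ := by
    apply strictMono_of_deriv_pos
    intro k; rw [(hφderiv k).deriv]; exact inv_pos.mpr (hUbarpos k)
  have hφcont : Continuous φ := by
    have : Differentiable ℝ φ := fun k => (hφderiv k).differentiableAt
    exact this.continuous
  have hφlb : ∀ k : ℝ, 0 ≤ k → k * B⁻¹ ≤ φ k := by
    intro k hk
    have h1 : ∫ τ in (0:ℝ)..k, B⁻¹ ≤ ∫ τ in (0:ℝ)..k, (Ubar τ)⁻¹ := by
      refine intervalIntegral.integral_mono_on hk intervalIntegrable_const
        (hUbarinvcont.intervalIntegrable 0 k) ?_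
      exact fun τ _ => inv_anti₀ (hUbarpos τ) (hB τ)
    rw [intervalIntegral.integral_const, smul_eq_mul, sub_zero] at h1
    exact h1
  have hφub : ∀ k : ℝ, k ≤ 0 → φ k ≤ k * B⁻¹ := by
    intro k hk
    have h0 : φ k = -∫ τ in k..(0:ℝ), (Ubar τ)⁻¹ := by
      show (∫ τ in (0:ℝ)..k, (Ubar τ)⁻¹) = -∫ τ in k..(0:ℝ), (Ubar τ)⁻¹
      rw [intervalIntegral.integral_symm k 0]
    have h1 : ∫ τ in k..(0:ℝ), B⁻¹ ≤ ∫ τ in k..(0:ℝ), (Ubar τ)⁻¹ := by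
      refine intervalIntegral.integral_mono_on hk intervalIntegrable_const
        (hUbarinvcont.intervalIntegrable k 0) ?_
      exact fun τ _ => inv_anti₀ (hUbarpos τ) (hB τ)
    rw [intervalIntegral.integral_const, smul_eq_mul, zero_sub] at h1
    rw [h0]
    nlinarith
  have hφtop : Tendsto φ atTop atTop := by
    refine tendsto_atTop_mono' atTop ?_ (Tendsto.atTop_mul_const (inv_pos.mpr hBpos) tendsto_id)
    filter_upwards [eventually_ge_atTop (0:ℝ)] with k hk
    exact hφlb k hk
  have hφbot : Tendsto φ atBot atBot := by
    refine tendsto_atBot_mono' atBot ?_ (Tendsto.atBot_mul_const (inv_pos.mpr hBpos) tendsto_id)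
    filter_upwards [eventually_le_atBot (0:ℝ)] with k hk
    exact hφub k hk
  have hφsurj : Function.Surjective φ := hφcont.surjective hφtop hφbot
  set e := StrictMono.orderIsoOfSurjective φ hφmono hφsurj with hedef
  set κf : ℝ → ℝ := fun ξ => e.symm ξ with hκfdef
  have hκfφ : ∀ k, κf (φ k) = k := fun k =>
    StrictMono.orderIsoOfSurjective_symm_apply_self φ hφmono hφsurj k
  have hφκf : ∀ ξ, φ (κf ξ) = ξ := fun ξ =>
    StrictMono.orderIsoOfSurjective_self_symm_apply φ hφmono hφsurj ξ
  have hκfcont : Continuous κf := (e.symm.toHomeomorph).continuous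
  have hκfmono : StrictMono κf := e.symm.strictMono
  have hκfderiv : ∀ ξ, HasDerivAt κf (Ubar (κf ξ)) ξ := by
    intro ξ
    have h1 := HasDerivAt.of_local_left_inverse (hκfcont.continuousAt)
      (hφderiv (κf ξ)) (inv_ne_zero (hUbarpos _).ne') (Eventually.of_forall hφκf)
    simpa [inv_inv] using h1
  have hκfderiv' : deriv κf = fun ξ => Ubar (κf ξ) := funext fun ξ => (hκfderiv ξ).deriv
  have hφ0 : φ 0 = 0 := intervalIntegral.integral_same
  set ξp : ℝ := φ M with hξpdef
  have hξmp : (0:ℝ) < ξp := by rw [hξpdef, ← hφ0]; exact hφmono hMpos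
  have hκf0 : κf 0 = 0 := by rw [← hφ0, hκfφ]; exact hφ0.symm
  have hκfM : κf ξp = M := hκfφ M
  have hUbar0 : Ubar 0 = υpm := by
    show U (max 0 (min 0 M)) = υpm
    rw [min_eq_left hMpos.le, max_self]
    exact hU0
  have hUbarM : Ubar M = υpm := by
    show U (max 0 (min M M)) = υpm
    rw [min_self, max_eq_right hMpos.le]
    exact hUM
  have hdκf0 : deriv κf 0 = υpm := by
    rw [hκfderiv']; show Ubar (κf 0) = υpm; rw [hκf0, hUbar0]
  have hdκfξp : deriv κf ξp = υpm := by
    rw [hκfderiv']; show Ubar (κf ξp) = υpm; rw [hκfM]; exact hUbarM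
  have hκfcd : ContDiff ℝ 1 κf :=
    contDiff_one_iff_deriv.mpr ⟨fun ξ => (hκfderiv ξ).differentiableAt,
      by rw [hκfderiv']; exact hUbarcont.comp hκfcont⟩
  have hdcont : Continuous (deriv κf) := by
    rw [hκfderiv']; exact hUbarcont.comp hκfcont
  have hODE2 : ∀ ξ ∈ Ioo (0:ℝ) ξp,
      (deriv κf ξ)^(m-1) * deriv (deriv κf) ξ = g (c - a * κf ξ) := by
    intro ξ hξ
    have hk : κf ξ ∈ Ioo 0 M := by
      constructor
      · rw [← hκf0]; exact hκfmono hξ.1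
      · rw [← hκfM]; exact hκfmono hξ.2
    have hkIcc : κf ξ ∈ Icc 0 M := ⟨hk.1.le, hk.2.le⟩
    have hUbark : Ubar =ᶠ[nhds (κf ξ)] U := by
      filter_upwards [isOpen_Ioo.mem_nhds hk] with x hx
      show U (max 0 (min x M)) = U x
      rw [min_eq_left hx.2.le, max_eq_right hx.1.le]
    have hUbarkk : Ubar (κf ξ) = U (κf ξ) := hUbark.self_of_nhds
    have hUbarderiv : HasDerivAt Ubar ((F (κf ξ))^(1/(m+1)-1) * g (c - a*(κf ξ))) (κf ξ) :=
      (hUderivAt (κf ξ) hk).congr_of_eventuallyEq hUbark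
    have hdd : HasDerivAt (deriv κf)
        (((F (κf ξ))^(1/(m+1)-1) * g (c - a*(κf ξ))) * Ubar (κf ξ)) ξ := by
      rw [hκfderiv']
      exact HasDerivAt.comp ξ hUbarderiv (hκfderiv ξ)
    have hdk : deriv κf ξ = U (κf ξ) := by
      rw [hκfderiv']; exact hUbarkk
    rw [hdd.deriv, hdk, hUbarkk]
    have h6 := hODE (κf ξ) hk
    rw [(hUderivAt (κf ξ) hk).deriv] at h6
    calc (U (κf ξ))^(m-1) * ((F (κf ξ))^(1/(m+1)-1) * g (c - a*(κf ξ)) * U (κf ξ))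
        = ((U (κf ξ))^(m-1) * U (κf ξ)) * ((F (κf ξ))^(1/(m+1)-1) * g (c - a*(κf ξ))) := by
          ring
      _ = (U (κf ξ))^m * ((F (κf ξ))^(1/(m+1)-1) * g (c - a*(κf ξ))) := by
          rw [← Real.rpow_add_one (hUpos (κf ξ) hkIcc).ne' (m-1), sub_add_cancel]
      _ = g (c - a*(κf ξ)) := h6
  exact ⟨hUcont, hUcd, hU0, hUM, hUge, hODE, 0, ξp, hξmp, κf, hκfcd.contDiffOn,
    hdcont.continuousOn, hκf0, hκfM, hdκf0, hdκfξp, hODE2⟩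
end

section
/- Let M = 2c/a. If U : [0, M] → (0, ∞) is continuous on [0, M], continuously differentiable on (0, M), and satisfies U(κ)^m·U'(κ) = g(c − a·κ) for every κ ∈ (0, M), then U(M) = U(0). In particular, a traveling-wave profile with jump discontinuities at both endpoints of its support must take equal boundary values υ⁻ = υ⁺. -/
theorem stmt_19 (c α : ℝ) (hc : 0 < c) (hα : 2 ≤ α)
    (Φ : ℝ → ℝ) (hΦ : ContDiff ℝ 2 Φ)
    (hodd : ∀ y : ℝ, Φ (-y) = -Φ y)
    (hΦ' : ∀ y : ℝ, 0 < deriv Φ y)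
    (hlim : Filter.Tendsto Φ Filter.atTop (nhds c))
    (C₀ y₀ : ℝ) (hC₀ : 0 < C₀) (hy₀ : 0 < y₀)
    (hdecay : ∀ y : ℝ, y₀ ≤ y → deriv Φ y ≤ C₀ * y ^ (-α - 1))
    (a m : ℝ) (ha : 0 < a) (hm : 0 ≤ m)
    (U : ℝ → ℝ)
    (hpos : ∀ κ ∈ Set.Icc (0:ℝ) (2 * c / a), 0 < U κ)
    (hcont : ContinuousOn U (Set.Icc 0 (2 * c / a)))
    (hC1 : ContDiffOn ℝ 1 U (Set.Ioo 0 (2 * c / a)))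
    (hODE : ∀ κ ∈ Set.Ioo (0:ℝ) (2 * c / a),
      (U κ) ^ m * deriv U κ = Function.invFun Φ (c - a * κ)) :
    U (2 * c / a) = U 0 := by
  have ha0 : a ≠ 0 := ne_of_gt ha
  set M : ℝ := 2 * c / a with hMdef
  have hMpos : 0 < M := by positivity
  have hm1 : (0:ℝ) < m + 1 := by linarith
  have hm1' : m + 1 ≠ 0 := ne_of_gt hm1
  -- Φ is a strictly monotone continuous bijection onto (-c, c)
  have hmono : StrictMono Φ := strictMono_of_deriv_pos hΦ'
  have hinj : Function.Injective Φ := hmono.injective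
  have hcontΦ : Continuous Φ := hΦ.continuous
  have hlimbot : Filter.Tendsto Φ Filter.atBot (nhds (-c)) := by
    have h1 : Filter.Tendsto (fun y => Φ (-y)) Filter.atBot (nhds c) :=
      hlim.comp Filter.tendsto_neg_atBot_atTop
    have h2 := h1.neg
    have heq : (fun y => -Φ (-y)) = Φ := funext fun y => by rw [hodd y]; ring
    rwa [heq] at h2
  have hsurj : ∀ x ∈ Set.Ioo (-c) c, ∃ y, Φ y = x := by
    intro x hx
    obtain ⟨y₁, hy₁⟩ := (hlim.eventually (eventually_gt_nhds hx.2)).exists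
    obtain ⟨y₂, hy₂⟩ := (hlimbot.eventually (eventually_lt_nhds hx.1)).exists
    have hle : y₂ ≤ y₁ := le_of_lt (hmono.lt_iff_lt.mp (lt_trans hy₂ hy₁))
    obtain ⟨y, _, hy⟩ := intermediate_value_Icc hle hcontΦ.continuousOn ⟨hy₂.le, hy₁.le⟩
    exact ⟨y, hy⟩
  have hg : ∀ x ∈ Set.Ioo (-c) c, Φ (Function.invFun Φ x) = x :=
    fun x hx => Function.invFun_eq (hsurj x hx)
  have hg_odd : ∀ x ∈ Set.Ioo (-c) c,
      Function.invFun Φ (-x) = -(Function.invFun Φ x) := by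
    intro x hx
    have hx' : -x ∈ Set.Ioo (-c) c := ⟨by linarith [hx.2], by linarith [hx.1]⟩
    apply hinj
    rw [hg _ hx', hodd, hg _ hx]
  -- V and the key antisymmetric combination D
  set V : ℝ → ℝ := fun κ => U κ ^ (m + 1) / (m + 1) with hVdef
  set D : ℝ → ℝ := fun κ => V κ - V (M - κ) with hDdef
  have hrange : ∀ κ ∈ Set.Ioo (0:ℝ) M, c - a * κ ∈ Set.Ioo (-c) c := by
    intro κ hκ
    have h1 : 0 < a * κ := mul_pos ha hκ.1
    have h2 : a * κ < a * M := by nlinarith [hκ.2]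
    have h3 : a * M = 2 * c := by
      rw [hMdef]; field_simp
    constructor <;> nlinarith
  have hV : ∀ κ ∈ Set.Ioo (0:ℝ) M, HasDerivAt V (Function.invFun Φ (c - a * κ)) κ := by
    intro κ hκ
    have hκ' : κ ∈ Set.Icc (0:ℝ) M := Set.Ioo_subset_Icc_self hκ
    have hU : HasDerivAt U (deriv U κ) κ :=
      (((hC1.differentiableOn one_ne_zero) κ hκ).differentiableAt
        (isOpen_Ioo.mem_nhds hκ)).hasDerivAt
    have hrpow : HasDerivAt (fun x : ℝ => x ^ (m + 1))
        ((m + 1) * U κ ^ (m + 1 - 1)) (U κ) :=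
      Real.hasDerivAt_rpow_const (Or.inl (hpos κ hκ').ne')
    have hcomp := (hrpow.comp κ hU).div_const (m + 1)
    have : (m + 1) * U κ ^ (m + 1 - 1) * deriv U κ / (m + 1)
        = Function.invFun Φ (c - a * κ) := by
      rw [add_sub_cancel_right, ← hODE κ hκ]
      field_simp
    rwa [this] at hcomp
  have hD : ∀ κ ∈ Set.Ioo (0:ℝ) M, HasDerivAt D 0 κ := by
    intro κ hκ
    have hMκ : M - κ ∈ Set.Ioo (0:ℝ) M := ⟨by linarith [hκ.2], by linarith [hκ.1]⟩
    have hinner : HasDerivAt (fun x : ℝ => M - x) (-1) κ := by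
      simpa using (hasDerivAt_id κ).const_sub M
    have h2 := (hV (M - κ) hMκ).comp κ hinner
    have h3 := (hV κ hκ).sub h2
    have harg : c - a * (M - κ) = -(c - a * κ) := by
      have : a * M = 2 * c := by rw [hMdef]; field_simp
      nlinarith [this]
    have hval : Function.invFun Φ (c - a * κ)
        - Function.invFun Φ (c - a * (M - κ)) * -1 = 0 := by
      rw [harg, hg_odd _ (hrange κ hκ)]; ring
    rwa [hval] at h3
  -- D is constant on [0, M]
  have hVcont : ContinuousOn V (Set.Icc 0 M) :=
    (hcont.rpow_const (fun κ hκ => Or.inl (hpos κ hκ).ne')).div_const (m + 1)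
  have hmaps : ∀ κ ∈ Set.Icc (0:ℝ) M, M - κ ∈ Set.Icc (0:ℝ) M := by
    intro κ hκ
    exact ⟨by linarith [hκ.2], by linarith [hκ.1]⟩
  have hVcont2 : ContinuousOn (fun κ => V (M - κ)) (Set.Icc 0 M) :=
    hVcont.comp ((continuous_const.sub continuous_id).continuousOn) hmaps
  have hDcont : ContinuousOn D (Set.Icc 0 M) := hVcont.sub hVcont2
  have hDdiff : DifferentiableOn ℝ D (interior (Set.Icc 0 M)) := by
    rw [interior_Icc]
    exact fun x hx => (hD x hx).differentiableAt.differentiableWithinAt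
  have hDderiv0 : ∀ x ∈ interior (Set.Icc (0:ℝ) M), deriv D x = 0 := by
    rw [interior_Icc]
    exact fun x hx => (hD x hx).deriv
  have h0mem : (0:ℝ) ∈ Set.Icc (0:ℝ) M := ⟨le_refl _, hMpos.le⟩
  have hMmem : M ∈ Set.Icc (0:ℝ) M := ⟨hMpos.le, le_refl _⟩
  have hle1 : D 0 ≤ D M :=
    monotoneOn_of_deriv_nonneg (convex_Icc _ _) hDcont hDdiff
      (fun x hx => (hDderiv0 x hx).ge) h0mem hMmem hMpos.le
  have hle2 : D M ≤ D 0 :=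
    antitoneOn_of_deriv_nonpos (convex_Icc _ _) hDcont hDdiff
      (fun x hx => (hDderiv0 x hx).le) h0mem hMmem hMpos.le
  have hDeq : D 0 = D M := le_antisymm hle1 hle2
  have hVeq : V 0 = V M := by
    have h0 : D 0 = V 0 - V M := by simp [hDdef]
    have h1 : D M = V M - V 0 := by simp [hDdef]
    rw [h0, h1] at hDeq
    linarith
  have hpow : U 0 ^ (m + 1) = U M ^ (m + 1) := by
    have := hVeq
    rw [hVdef] at this
    field_simp at this
    linarith [this]
  have hU0 : 0 < U 0 := hpos 0 h0mem
  have hUM : 0 < U M := hpos M hMmem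
  rcases lt_trichotomy (U M) (U 0) with h | h | h
  · exact absurd hpow (Real.rpow_lt_rpow hUM.le h hm1).ne'
  · exact h
  · exact absurd hpow (Real.rpow_lt_rpow hU0.le h hm1).ne
end
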